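/- arXiv:1510.05070 — 5 statements merged into one kernel-verified Lean document; each statement's English description precedes it below -/
import Mathlib

section
/- Let G be a graph on n vertices with m edges, let v be a vertex of G of degree at least 3, and let u_1, u_2, u_3 be three distinct neighbors of v. If the graph G' = G − {vu_1, vu_2, vu_3} obtained by deleting the three edges vu_1, vu_2, vu_3 is ⌊4n/3⌋-list-weighted-quasi-antimagic, then G is ⌊4n/3⌋-list-weighted-quasi-antimagic. (Consequently, a vertex of degree at least 3 is reducible for the property of being ⌊4n/3⌋-list-weighted-quasi-antimagic: no edge-minimal graph failing this property contains a vertex of degree at least 3.) -/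
set_option maxHeartbeats 2000000

open Finset


/-- The weighted vertex sum at `v`: the weight `ω v` plus the sum of the labels `f e`
over the edges `e` of `G` incident to `v`. -/
noncomputable def weightedSum {V : Type*} [Fintype V] (G : SimpleGraph V)
    (ω : V → ℝ) (f : Sym2 V → ℝ) (v : V) : ℝ :=
  ω v + ∑ e ∈ (G.incidenceSet v).toFinite.toFinset, f e

/-- `G` is `k`-list-weighted-quasi-antimagic: for every vertex weighting `ω` and every
list assignment `L` giving each edge a list of at least `|E(G)| + k` real numbers, there
is an edge labeling `f` with `f e ∈ L e` on edges, with pairwise distinct labels on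
edges, such that any two distinct vertices that both have degree at least `1` and are
not the two vertices of a `K₂` component receive distinct weighted vertex sums. -/
def ListWeightedQuasiAntimagic {V : Type*} [Fintype V] (G : SimpleGraph V) (k : ℕ) : Prop :=
  ∀ (ω : V → ℝ) (L : Sym2 V → Finset ℝ),
    (∀ e ∈ G.edgeSet, Nat.card G.edgeSet + k ≤ (L e).card) →
    ∃ f : Sym2 V → ℝ,
      (∀ e ∈ G.edgeSet, f e ∈ L e) ∧
      (∀ e₁ ∈ G.edgeSet, ∀ e₂ ∈ G.edgeSet, e₁ ≠ e₂ → f e₁ ≠ f e₂) ∧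
      (∀ u w : V, u ≠ w →
        1 ≤ Nat.card (G.neighborSet u) → 1 ≤ Nat.card (G.neighborSet w) →
        ¬(G.Adj u w ∧ Nat.card (G.neighborSet u) = 1 ∧ Nat.card (G.neighborSet w) = 1) →
        weightedSum G ω f u ≠ weightedSum G ω f w)

lemma selection (A₁ A₂ A₃ B₀ : Finset ℝ) (c₁₂ c₁₃ c₂₃ d₁₂ d₁₃ d₂₃ : ℝ)
    (h1 : 7 ≤ A₁.card) (h2 : 7 ≤ A₂.card) (h3 : 7 ≤ A₃.card)
    (hsum : B₀.card + 21 ≤ A₁.card + A₂.card + A₃.card) :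
    ∃ x₁ ∈ A₁, ∃ x₂ ∈ A₂, ∃ x₃ ∈ A₃,
      x₁ ≠ x₂ ∧ x₁ ≠ x₃ ∧ x₂ ≠ x₃ ∧
      x₁ - x₂ ≠ c₁₂ ∧ x₁ - x₃ ≠ c₁₃ ∧ x₂ - x₃ ≠ c₂₃ ∧
      x₁ + x₂ ≠ d₁₂ ∧ x₁ + x₃ ≠ d₁₃ ∧ x₂ + x₃ ≠ d₂₃ ∧
      x₁ + x₂ + x₃ ∉ B₀ := by
  classical
  have hA₁ne : A₁.Nonempty := card_pos.mp (by omega)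
  set a := A₁.min' hA₁ne with ha
  have haA : a ∈ A₁ := A₁.min'_mem hA₁ne
  set A₂' := A₂ \ {a, a - c₁₂, d₁₂ - a} with hA₂'def
  have hA₂'card : A₂.card - 3 ≤ A₂'.card := by
    rw [hA₂'def]
    have := le_card_sdiff ({a, a - c₁₂, d₁₂ - a} : Finset ℝ) A₂
    have h3' : ({a, a - c₁₂, d₁₂ - a} : Finset ℝ).card ≤ 3 :=
      (card_insert_le _ _).trans (Nat.succ_le_succ
        ((card_insert_le _ _).trans (Nat.succ_le_succ (card_singleton _).le)))
    omega
  have hA₂'ne : A₂'.Nonempty := card_pos.mp (by omega)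
  set b := A₂'.min' hA₂'ne with hb
  have hbA : b ∈ A₂' := A₂'.min'_mem hA₂'ne
  set A₃' := A₃ \ {a, a - c₁₃, d₁₃ - a, b, b - c₂₃, d₂₃ - b} with hA₃'def
  have hA₃'card : A₃.card - 6 ≤ A₃'.card := by
    rw [hA₃'def]
    have := le_card_sdiff ({a, a - c₁₃, d₁₃ - a, b, b - c₂₃, d₂₃ - b} : Finset ℝ) A₃
    have h6 : ({a, a - c₁₃, d₁₃ - a, b, b - c₂₃, d₂₃ - b} : Finset ℝ).card ≤ 6 := by
      refine (card_insert_le _ _).trans (Nat.succ_le_succ ?_)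
      refine (card_insert_le _ _).trans (Nat.succ_le_succ ?_)
      refine (card_insert_le _ _).trans (Nat.succ_le_succ ?_)
      refine (card_insert_le _ _).trans (Nat.succ_le_succ ?_)
      exact (card_insert_le _ _).trans (Nat.succ_le_succ (card_singleton _).le)
    omega
  have hA₃'ne : A₃'.Nonempty := card_pos.mp (by omega)
  set cM := A₃'.max' hA₃'ne with hcM
  have hcA : cM ∈ A₃' := A₃'.max'_mem hA₃'ne
  set A₂'' := A₂' \ {cM, cM + c₂₃, d₂₃ - cM} with hA₂''def
  have hA₂''card : A₂.card - 6 ≤ A₂''.card := by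
    rw [hA₂''def]
    have := le_card_sdiff ({cM, cM + c₂₃, d₂₃ - cM} : Finset ℝ) A₂'
    have h3' : ({cM, cM + c₂₃, d₂₃ - cM} : Finset ℝ).card ≤ 3 :=
      (card_insert_le _ _).trans (Nat.succ_le_succ
        ((card_insert_le _ _).trans (Nat.succ_le_succ (card_singleton _).le)))
    omega
  have hA₂''ne : A₂''.Nonempty := card_pos.mp (by omega)
  set b' := A₂''.max' hA₂''ne with hb'
  have hb'A : b' ∈ A₂'' := A₂''.max'_mem hA₂''ne
  set A₁'' := A₁ \ {b', b' + c₁₂, d₁₂ - b', cM, cM + c₁₃, d₁₃ - cM} with hA₁''def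
  have hA₁''card : A₁.card - 6 ≤ A₁''.card := by
    rw [hA₁''def]
    have := le_card_sdiff ({b', b' + c₁₂, d₁₂ - b', cM, cM + c₁₃, d₁₃ - cM} : Finset ℝ) A₁
    have h6 : ({b', b' + c₁₂, d₁₂ - b', cM, cM + c₁₃, d₁₃ - cM} : Finset ℝ).card ≤ 6 := by
      refine (card_insert_le _ _).trans (Nat.succ_le_succ ?_)
      refine (card_insert_le _ _).trans (Nat.succ_le_succ ?_)
      refine (card_insert_le _ _).trans (Nat.succ_le_succ ?_)
      refine (card_insert_le _ _).trans (Nat.succ_le_succ ?_)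
      exact (card_insert_le _ _).trans (Nat.succ_le_succ (card_singleton _).le)
    omega
  clear_value a A₂' b A₃' cM A₂'' b' A₁''
  -- the three staircase sum sets
  set S₁ := A₃'.image (fun t => a + b + t) with hS₁
  set S₂ := A₂''.image (fun t => a + t + cM) with hS₂
  set S₃ := A₁''.image (fun t => t + b' + cM) with hS₃
  have hS₁card : S₁.card = A₃'.card := card_image_of_injective _ (fun x y h => by linarith)
  have hS₂card : S₂.card = A₂''.card := card_image_of_injective _ (fun x y h => by linarith)
  have hS₃card : S₃.card = A₁''.card := card_image_of_injective _ (fun x y h => by linarith)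
  have hb'A2'mem : b' ∈ A₂' := by rw [hA₂''def] at hb'A; exact sdiff_subset hb'A
  have hble : b ≤ b' := by rw [hb]; exact A₂'.min'_le b' hb'A2'mem
  -- bounds
  have hS₁le : ∀ x ∈ S₁, x ≤ a + b + cM := by
    intro x hx; obtain ⟨t, ht, rfl⟩ := mem_image.mp hx
    have htc : t ≤ cM := by rw [hcM]; exact A₃'.le_max' t ht
    linarith
  have hS₂ge : ∀ x ∈ S₂, a + b + cM ≤ x := by
    intro x hx; obtain ⟨t, ht, rfl⟩ := mem_image.mp hx
    have ht' : t ∈ A₂' := by rw [hA₂''def] at ht; exact sdiff_subset ht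
    have hbt : b ≤ t := by rw [hb]; exact A₂'.min'_le t ht'
    linarith
  have hS₂le : ∀ x ∈ S₂, x ≤ a + b' + cM := by
    intro x hx; obtain ⟨t, ht, rfl⟩ := mem_image.mp hx
    have htb : t ≤ b' := by rw [hb']; exact A₂''.le_max' t ht
    linarith
  have hS₃ge : ∀ x ∈ S₃, a + b' + cM ≤ x := by
    intro x hx; obtain ⟨t, ht, rfl⟩ := mem_image.mp hx
    have ht' : t ∈ A₁ := by rw [hA₁''def] at ht; exact sdiff_subset ht
    have hat : a ≤ t := by rw [ha]; exact A₁.min'_le t ht'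
    linarith
  have hunion : B₀.card < (S₁ ∪ (S₂ ∪ S₃)).card := by
    have hint1 : S₁ ∩ (S₂ ∪ S₃) ⊆ {a + b + cM} := by
      intro x hx
      rw [mem_inter] at hx
      obtain ⟨hx1, hx2⟩ := hx
      rcases mem_union.mp hx2 with hx2 | hx2
      · exact mem_singleton.mpr (le_antisymm (hS₁le x hx1) (hS₂ge x hx2))
      · have := hS₃ge x hx2
        exact mem_singleton.mpr (le_antisymm (hS₁le x hx1) (by linarith))
    have hint2 : S₂ ∩ S₃ ⊆ {a + b' + cM} := by
      intro x hx
      rw [mem_inter] at hx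
      exact mem_singleton.mpr (le_antisymm (hS₂le x hx.1) (hS₃ge x hx.2))
    have e1 : (S₂ ∪ S₃).card + (S₂ ∩ S₃).card = S₂.card + S₃.card :=
      card_union_add_card_inter _ _
    have e2 : (S₁ ∪ (S₂ ∪ S₃)).card + (S₁ ∩ (S₂ ∪ S₃)).card = S₁.card + (S₂ ∪ S₃).card :=
      card_union_add_card_inter _ _
    have c1 : (S₁ ∩ (S₂ ∪ S₃)).card ≤ 1 := (card_le_card hint1).trans (by simp)
    have c2 : (S₂ ∩ S₃).card ≤ 1 := (card_le_card hint2).trans (by simp)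
    omega
  obtain ⟨σ, hσmem, hσB⟩ : ∃ σ ∈ S₁ ∪ (S₂ ∪ S₃), σ ∉ B₀ := by
    by_contra hc
    push_neg at hc
    exact absurd (card_le_card hc) (by omega)
  have memA₂' : ∀ x ∈ A₂', x ∈ A₂ ∧ x ≠ a ∧ x ≠ a - c₁₂ ∧ x ≠ d₁₂ - a := by
    intro x hx
    rw [hA₂'def, mem_sdiff] at hx
    simp only [mem_insert, mem_singleton] at hx
    tauto
  have memA₃' : ∀ x ∈ A₃', x ∈ A₃ ∧ x ≠ a ∧ x ≠ a - c₁₃ ∧ x ≠ d₁₃ - a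
      ∧ x ≠ b ∧ x ≠ b - c₂₃ ∧ x ≠ d₂₃ - b := by
    intro x hx
    rw [hA₃'def, mem_sdiff] at hx
    simp only [mem_insert, mem_singleton] at hx
    tauto
  have memA₂'' : ∀ x ∈ A₂'', x ∈ A₂' ∧ x ≠ cM ∧ x ≠ cM + c₂₃ ∧ x ≠ d₂₃ - cM := by
    intro x hx
    rw [hA₂''def, mem_sdiff] at hx
    simp only [mem_insert, mem_singleton] at hx
    tauto
  have memA₁'' : ∀ x ∈ A₁'', x ∈ A₁ ∧ x ≠ b' ∧ x ≠ b' + c₁₂ ∧ x ≠ d₁₂ - b'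
      ∧ x ≠ cM ∧ x ≠ cM + c₁₃ ∧ x ≠ d₁₃ - cM := by
    intro x hx
    rw [hA₁''def, mem_sdiff] at hx
    simp only [mem_insert, mem_singleton] at hx
    tauto
  rcases mem_union.mp hσmem with hσ | hσ
  · obtain ⟨t, ht, rfl⟩ := mem_image.mp hσ
    obtain ⟨htA, ht1, ht2, ht3, ht4, ht5, ht6⟩ := memA₃' t ht
    obtain ⟨hbA2, hb1, hb2, hb3⟩ := memA₂' b hbA
    exact ⟨a, haA, b, hbA2, t, htA,
      fun h => hb1 h.symm, fun h => ht1 h.symm, fun h => ht4 h.symm,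
      fun h => hb2 (by linarith), fun h => ht2 (by linarith), fun h => ht5 (by linarith),
      fun h => hb3 (by linarith), fun h => ht3 (by linarith), fun h => ht6 (by linarith),
      hσB⟩
  rcases mem_union.mp hσ with hσ' | hσ'
  · obtain ⟨t, ht, hteq⟩ := mem_image.mp hσ'
    obtain ⟨htA2', ht1, ht2, ht3⟩ := memA₂'' t ht
    obtain ⟨htA2, ht4, ht5, ht6⟩ := memA₂' t htA2'
    obtain ⟨hcA3, hc1, hc2, hc3, hc4, hc5, hc6⟩ := memA₃' cM hcA
    refine ⟨a, haA, t, htA2, cM, hcA3,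
      fun h => ht4 h.symm, fun h => hc1 h.symm, ht1,
      fun h => ht5 (by linarith), fun h => hc2 (by linarith), fun h => ht2 (by linarith),
      fun h => ht6 (by linarith), fun h => hc3 (by linarith), fun h => ht3 (by linarith),
      ?_⟩
    exact hteq ▸ hσB
  · obtain ⟨t, ht, hteq⟩ := mem_image.mp hσ'
    obtain ⟨htA1, ht1, ht2, ht3, ht4, ht5, ht6⟩ := memA₁'' t ht
    obtain ⟨hb'A2', hb'1, hb'2, hb'3⟩ := memA₂'' b' hb'A
    obtain ⟨hb'A2, _, _, _⟩ := memA₂' b' hb'A2'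
    obtain ⟨hcA3, _, _, _, _, _, _⟩ := memA₃' cM hcA
    refine ⟨t, htA1, b', hb'A2, cM, hcA3,
      ht1, ht4, hb'1,
      fun h => ht2 (by linarith), fun h => ht5 (by linarith), fun h => hb'2 (by linarith),
      fun h => ht3 (by linarith), fun h => ht6 (by linarith), fun h => hb'3 (by linarith),
      ?_⟩
    exact hteq ▸ hσB


lemma mem_incSet_iff {V : Type*} (G : SimpleGraph V) (w : V) (e : Sym2 V) :
    e ∈ G.incidenceSet w ↔ e ∈ G.edgeSet ∧ w ∈ e := Iff.rfl

/-- Reducibility of a vertex of degree at least `3`: if `v` has degree at least `3`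
with distinct neighbors `u₁, u₂, u₃`, and the graph `G'` obtained from `G` by deleting
the three edges `vu₁, vu₂, vu₃` is `⌊4n/3⌋`-list-weighted-quasi-antimagic, then so
is `G`. -/
theorem statement_4 {V : Type*} [Fintype V] (G : SimpleGraph V) (v u₁ u₂ u₃ : V)
    (hdeg : 3 ≤ Nat.card (G.neighborSet v))
    (h1 : G.Adj v u₁) (h2 : G.Adj v u₂) (h3 : G.Adj v u₃)
    (h12 : u₁ ≠ u₂) (h13 : u₁ ≠ u₃) (h23 : u₂ ≠ u₃)
    (hG' : ListWeightedQuasiAntimagic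
      (G.deleteEdges {s(v, u₁), s(v, u₂), s(v, u₃)}) ((4 * Fintype.card V) / 3)) :
    ListWeightedQuasiAntimagic G ((4 * Fintype.card V) / 3) := by
  classical
  intro ω L hL
  set n := Fintype.card V with hn
  set k := (4 * n) / 3 with hkdef
  have hvu1 : v ≠ u₁ := G.ne_of_adj h1
  have hvu2 : v ≠ u₂ := G.ne_of_adj h2
  have hvu3 : v ≠ u₃ := G.ne_of_adj h3
  set E₀ : Set (Sym2 V) := {s(v, u₁), s(v, u₂), s(v, u₃)} with hE₀def
  set G' := G.deleteEdges E₀ with hG'def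
  -- distinctness of the three edges
  have he12 : s(v, u₁) ≠ s(v, u₂) := by
    intro h
    rcases Sym2.eq_iff.mp h with ⟨-, h'⟩ | ⟨h', -⟩
    · exact h12 h'
    · exact hvu2 h'
  have he13 : s(v, u₁) ≠ s(v, u₃) := by
    intro h
    rcases Sym2.eq_iff.mp h with ⟨-, h'⟩ | ⟨h', -⟩
    · exact h13 h'
    · exact hvu3 h'
  have he23 : s(v, u₂) ≠ s(v, u₃) := by
    intro h
    rcases Sym2.eq_iff.mp h with ⟨-, h'⟩ | ⟨h', -⟩
    · exact h23 h'
    · exact hvu3 h'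
  have he1 : s(v, u₁) ∈ G.edgeSet := G.mem_edgeSet.mpr h1
  have he2 : s(v, u₂) ∈ G.edgeSet := G.mem_edgeSet.mpr h2
  have he3 : s(v, u₃) ∈ G.edgeSet := G.mem_edgeSet.mpr h3
  have hmemE₀ : ∀ e, e ∈ E₀ ↔ e = s(v, u₁) ∨ e = s(v, u₂) ∨ e = s(v, u₃) := by
    intro e; rw [hE₀def]; simp [Set.mem_insert_iff]
  have hE₀sub : E₀ ⊆ G.edgeSet := by
    intro e he
    rcases (hmemE₀ e).mp he with rfl | rfl | rfl <;> assumption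
  have hedge' : G'.edgeSet = G.edgeSet \ E₀ := SimpleGraph.edgeSet_deleteEdges E₀
  -- cardinalities
  set m := Nat.card G.edgeSet with hm
  have hE₀card : E₀.ncard = 3 := by
    rw [hE₀def]
    rw [Set.ncard_insert_of_notMem (by simp [he12, he13]) (Set.toFinite _),
      Set.ncard_pair he23]
  have hm'eq : Nat.card G'.edgeSet = m - 3 := by
    rw [hedge', Nat.card_coe_set_eq, hm, Nat.card_coe_set_eq,
      Set.ncard_diff hE₀sub (Set.toFinite _), hE₀card]
  have hm3 : 3 ≤ m := by
    rw [hm, Nat.card_coe_set_eq]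
    calc 3 = E₀.ncard := hE₀card.symm
    _ ≤ G.edgeSet.ncard := Set.ncard_le_ncard hE₀sub (Set.toFinite _)
  -- n ≥ 4 and arithmetic about k
  have hn4 : 4 ≤ n := by
    have hsub : ({v, u₁, u₂, u₃} : Finset V) ⊆ univ := subset_univ _
    have hcard : ({v, u₁, u₂, u₃} : Finset V).card = 4 := by
      rw [card_insert_of_notMem (by simp [hvu1, hvu2, hvu3]),
        card_insert_of_notMem (by simp [h12, h13]),
        card_insert_of_notMem (by simp [h23]), card_singleton]
    calc 4 = ({v, u₁, u₂, u₃} : Finset V).card := hcard.symm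
    _ ≤ univ.card := card_le_card hsub
    _ = n := Finset.card_univ
  have hk3 : 4 * n ≤ 3 * k + 2 := by
    have := Nat.div_add_mod (4 * n) 3
    have := Nat.mod_lt (4 * n) (show 0 < 3 by norm_num)
    omega
  -- apply the hypothesis on G'
  obtain ⟨f, hfL, hfinj, hfsum⟩ := hG' ω L (by
    intro e he
    have heG : e ∈ G.edgeSet := (hedge' ▸ he).1
    have := hL e heG
    omega)
  -- the used labels
  set F : Finset ℝ := (G'.edgeSet.toFinite.toFinset).image f with hFdef
  have hFcard : F.card ≤ m - 3 := by
    calc F.card ≤ (G'.edgeSet.toFinite.toFinset).card := card_image_le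
    _ = G'.edgeSet.ncard := (Set.ncard_eq_toFinset_card _ (Set.toFinite _)).symm
    _ = m - 3 := by rw [← Nat.card_coe_set_eq, hm'eq]
  have hfF : ∀ e ∈ G'.edgeSet, f e ∈ F := by
    intro e he
    exact mem_image_of_mem f ((Set.Finite.mem_toFinset _).mpr he)
  -- vertices other than v, u₁, u₂, u₃
  set W : Finset V := univ.filter (fun w => w ≠ v ∧ w ≠ u₁ ∧ w ≠ u₂ ∧ w ≠ u₃) with hWdef
  have hWmem : ∀ w, w ∈ W ↔ w ≠ v ∧ w ≠ u₁ ∧ w ≠ u₂ ∧ w ≠ u₃ := by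
    intro w; rw [hWdef]; simp
  have hWcard : W.card + 4 ≤ n := by
    have hsub : W ⊆ univ \ {v, u₁, u₂, u₃} := by
      intro w hw
      rw [hWmem] at hw
      rw [mem_sdiff]
      refine ⟨mem_univ _, ?_⟩
      simp only [mem_insert, mem_singleton]
      tauto
    have hcard : ({v, u₁, u₂, u₃} : Finset V).card = 4 := by
      rw [card_insert_of_notMem (by simp [hvu1, hvu2, hvu3]),
        card_insert_of_notMem (by simp [h12, h13]),
        card_insert_of_notMem (by simp [h23]), card_singleton]
    have := card_le_card hsub
    rw [card_sdiff_of_subset (subset_univ _), hcard] at this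
    have : (univ : Finset V).card = n := Finset.card_univ
    omega
  -- abbreviation for G'-weighted sums
  set S' : V → ℝ := weightedSum G' ω f with hS'def
  -- the bad sets
  set T₁ : Finset ℝ := W.image (fun w => S' w - S' u₁) with hT₁def
  set T₂ : Finset ℝ := W.image (fun w => S' w - S' u₂) with hT₂def
  set T₃ : Finset ℝ := W.image (fun w => S' w - S' u₃) with hT₃def
  set B₀ : Finset ℝ := W.image (fun w => S' w - S' v) with hB₀def
  set A₁ : Finset ℝ := L s(v, u₁) \ (F ∪ T₁) with hA₁def
  set A₂ : Finset ℝ := L s(v, u₂) \ (F ∪ T₂) with hA₂def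
  set A₃ : Finset ℝ := L s(v, u₃) \ (F ∪ T₃) with hA₃def
  have hAcard : ∀ (LL TT : Finset ℝ), m + k ≤ LL.card → TT.card ≤ W.card →
      k + 7 ≤ (LL \ (F ∪ TT)).card + n := by
    intro LL TT hLL hTT
    have h1 := card_le_card_sdiff_add_card (s := LL) (t := F ∪ TT)
    have h2 := card_union_le F TT
    omega
  have hA₁card : k + 7 ≤ A₁.card + n := by
    rw [hA₁def]
    exact hAcard _ _ (hL _ he1) (card_image_le.trans le_rfl)
  have hA₂card : k + 7 ≤ A₂.card + n := by
    rw [hA₂def]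
    exact hAcard _ _ (hL _ he2) (card_image_le.trans le_rfl)
  have hA₃card : k + 7 ≤ A₃.card + n := by
    rw [hA₃def]
    exact hAcard _ _ (hL _ he3) (card_image_le.trans le_rfl)
  have hB₀card : B₀.card + 4 ≤ n := by
    have : B₀.card ≤ W.card := card_image_le
    omega
  have hkn : n ≤ k := by omega
  -- select the three labels
  obtain ⟨x₁, hx₁, x₂, hx₂, x₃, hx₃, hne12, hne13, hne23, hc12, hc13, hc23,
      hd12, hd13, hd23, hσ⟩ :=
    selection A₁ A₂ A₃ B₀ (S' u₂ - S' u₁) (S' u₃ - S' u₁) (S' u₃ - S' u₂)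
      (S' u₃ - S' v) (S' u₂ - S' v) (S' u₁ - S' v)
      (by omega) (by omega) (by omega) (by omega)
  -- unpack the memberships
  have hx₁' := mem_sdiff.mp (hA₁def ▸ hx₁)
  have hx₂' := mem_sdiff.mp (hA₂def ▸ hx₂)
  have hx₃' := mem_sdiff.mp (hA₃def ▸ hx₃)
  obtain ⟨hx₁L, hx₁FT⟩ := hx₁'
  obtain ⟨hx₂L, hx₂FT⟩ := hx₂'
  obtain ⟨hx₃L, hx₃FT⟩ := hx₃'
  have hx₁F : x₁ ∉ F := fun h => hx₁FT (mem_union_left _ h)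
  have hx₂F : x₂ ∉ F := fun h => hx₂FT (mem_union_left _ h)
  have hx₃F : x₃ ∉ F := fun h => hx₃FT (mem_union_left _ h)
  have hx₁T : ∀ w ∈ W, x₁ ≠ S' w - S' u₁ := by
    intro w hw h
    exact hx₁FT (mem_union_right _ (h ▸ mem_image_of_mem (fun w => S' w - S' u₁) hw))
  have hx₂T : ∀ w ∈ W, x₂ ≠ S' w - S' u₂ := by
    intro w hw h
    exact hx₂FT (mem_union_right _ (h ▸ mem_image_of_mem (fun w => S' w - S' u₂) hw))
  have hx₃T : ∀ w ∈ W, x₃ ≠ S' w - S' u₃ := by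
    intro w hw h
    exact hx₃FT (mem_union_right _ (h ▸ mem_image_of_mem (fun w => S' w - S' u₃) hw))
  have hσB : ∀ w ∈ W, x₁ + x₂ + x₃ ≠ S' w - S' v := by
    intro w hw h
    exact hσ (h ▸ mem_image_of_mem (fun w => S' w - S' v) hw)
  -- the labeling g
  set g : Sym2 V → ℝ := fun e =>
    if e = s(v, u₁) then x₁ else if e = s(v, u₂) then x₂ else
    if e = s(v, u₃) then x₃ else f e with hgdef
  have hg1 : g s(v, u₁) = x₁ := by simp [hgdef]
  have hg2 : g s(v, u₂) = x₂ := by simp [hgdef, Ne.symm he12]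
  have hg3 : g s(v, u₃) = x₃ := by simp [hgdef, Ne.symm he13, Ne.symm he23]
  have hgf : ∀ e, e ≠ s(v, u₁) → e ≠ s(v, u₂) → e ≠ s(v, u₃) → g e = f e := by
    intro e hea heb hec
    simp [hgdef, hea, heb, hec]
  have hgf' : ∀ e ∈ G'.edgeSet, g e = f e := by
    intro e he
    rw [hedge'] at he
    have hne : e ∉ E₀ := he.2
    rw [hmemE₀] at hne
    push_neg at hne
    exact hgf e hne.1 hne.2.1 hne.2.2
  -- incidence sets
  have hinc : ∀ w : V, G'.incidenceSet w = G.incidenceSet w \ E₀ := by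
    intro w
    ext e
    simp only [mem_incSet_iff, hedge', Set.mem_diff]
    tauto
  have hsplit : ∀ w : V, weightedSum G ω g w = S' w +
      ∑ e ∈ ((G.incidenceSet w).toFinite.toFinset \ (G'.incidenceSet w).toFinite.toFinset),
        g e := by
    intro w
    have hsub : (G'.incidenceSet w).toFinite.toFinset ⊆ (G.incidenceSet w).toFinite.toFinset := by
      intro e he
      rw [Set.Finite.mem_toFinset] at he ⊢
      rw [hinc w] at he
      exact he.1
    have hsum := Finset.sum_sdiff (f := g) hsub
    have hfg : ∑ e ∈ (G'.incidenceSet w).toFinite.toFinset, g e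
        = ∑ e ∈ (G'.incidenceSet w).toFinite.toFinset, f e := by
      refine Finset.sum_congr rfl ?_
      intro e he
      rw [Set.Finite.mem_toFinset] at he
      exact hgf' e (G'.incidenceSet_subset w he)
    rw [hS'def]
    simp only [weightedSum]
    rw [← hsum, hfg]
    ring
  have hDv : (G.incidenceSet v).toFinite.toFinset \ (G'.incidenceSet v).toFinite.toFinset
      = ({s(v, u₁), s(v, u₂), s(v, u₃)} : Finset (Sym2 V)) := by
    ext e
    simp only [Finset.mem_sdiff, Set.Finite.mem_toFinset, hinc v, Set.mem_diff,
      Finset.mem_insert, Finset.mem_singleton, mem_incSet_iff]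
    constructor
    · rintro ⟨⟨heG, hve⟩, hnot⟩
      have heE : e ∈ E₀ := by
        by_contra hcon
        exact hnot ⟨⟨heG, hve⟩, hcon⟩
      exact (hmemE₀ e).mp heE
    · rintro (rfl | rfl | rfl)
      · exact ⟨⟨he1, Sym2.mem_iff.mpr (Or.inl rfl)⟩,
          fun hcon => hcon.2 ((hmemE₀ _).mpr (Or.inl rfl))⟩
      · exact ⟨⟨he2, Sym2.mem_iff.mpr (Or.inl rfl)⟩,
          fun hcon => hcon.2 ((hmemE₀ _).mpr (Or.inr (Or.inl rfl)))⟩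
      · exact ⟨⟨he3, Sym2.mem_iff.mpr (Or.inl rfl)⟩,
          fun hcon => hcon.2 ((hmemE₀ _).mpr (Or.inr (Or.inr rfl)))⟩
  have hDu1 : (G.incidenceSet u₁).toFinite.toFinset \ (G'.incidenceSet u₁).toFinite.toFinset
      = ({s(v, u₁)} : Finset (Sym2 V)) := by
    ext e
    simp only [Finset.mem_sdiff, Set.Finite.mem_toFinset, hinc u₁, Set.mem_diff,
      Finset.mem_singleton, mem_incSet_iff]
    constructor
    · rintro ⟨⟨heG, hve⟩, hnot⟩
      have heE : e ∈ E₀ := by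
        by_contra hcon
        exact hnot ⟨⟨heG, hve⟩, hcon⟩
      rcases (hmemE₀ e).mp heE with rfl | rfl | rfl
      · rfl
      · rcases Sym2.mem_iff.mp hve with h' | h'
        · exact absurd h'.symm hvu1
        · exact absurd h' h12
      · rcases Sym2.mem_iff.mp hve with h' | h'
        · exact absurd h'.symm hvu1
        · exact absurd h' h13
    · rintro rfl
      exact ⟨⟨he1, Sym2.mem_iff.mpr (Or.inr rfl)⟩,
        fun hcon => hcon.2 ((hmemE₀ _).mpr (Or.inl rfl))⟩
  have hDu2 : (G.incidenceSet u₂).toFinite.toFinset \ (G'.incidenceSet u₂).toFinite.toFinset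
      = ({s(v, u₂)} : Finset (Sym2 V)) := by
    ext e
    simp only [Finset.mem_sdiff, Set.Finite.mem_toFinset, hinc u₂, Set.mem_diff,
      Finset.mem_singleton, mem_incSet_iff]
    constructor
    · rintro ⟨⟨heG, hve⟩, hnot⟩
      have heE : e ∈ E₀ := by
        by_contra hcon
        exact hnot ⟨⟨heG, hve⟩, hcon⟩
      rcases (hmemE₀ e).mp heE with rfl | rfl | rfl
      · rcases Sym2.mem_iff.mp hve with h' | h'
        · exact absurd h'.symm hvu2
        · exact absurd h'.symm h12
      · rfl
      · rcases Sym2.mem_iff.mp hve with h' | h'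
        · exact absurd h'.symm hvu2
        · exact absurd h' h23
    · rintro rfl
      exact ⟨⟨he2, Sym2.mem_iff.mpr (Or.inr rfl)⟩,
        fun hcon => hcon.2 ((hmemE₀ _).mpr (Or.inr (Or.inl rfl)))⟩
  have hDu3 : (G.incidenceSet u₃).toFinite.toFinset \ (G'.incidenceSet u₃).toFinite.toFinset
      = ({s(v, u₃)} : Finset (Sym2 V)) := by
    ext e
    simp only [Finset.mem_sdiff, Set.Finite.mem_toFinset, hinc u₃, Set.mem_diff,
      Finset.mem_singleton, mem_incSet_iff]
    constructor
    · rintro ⟨⟨heG, hve⟩, hnot⟩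
      have heE : e ∈ E₀ := by
        by_contra hcon
        exact hnot ⟨⟨heG, hve⟩, hcon⟩
      rcases (hmemE₀ e).mp heE with rfl | rfl | rfl
      · rcases Sym2.mem_iff.mp hve with h' | h'
        · exact absurd h'.symm hvu3
        · exact absurd h'.symm h13
      · rcases Sym2.mem_iff.mp hve with h' | h'
        · exact absurd h'.symm hvu3
        · exact absurd h'.symm h23
      · rfl
    · rintro rfl
      exact ⟨⟨he3, Sym2.mem_iff.mpr (Or.inr rfl)⟩,
        fun hcon => hcon.2 ((hmemE₀ _).mpr (Or.inr (Or.inr rfl)))⟩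
  have hDother : ∀ w : V, w ≠ v → w ≠ u₁ → w ≠ u₂ → w ≠ u₃ →
      (G.incidenceSet w).toFinite.toFinset \ (G'.incidenceSet w).toFinite.toFinset = ∅ := by
    intro w ha hb hc hd
    ext e
    simp only [Finset.mem_sdiff, Set.Finite.mem_toFinset, hinc w, Set.mem_diff,
      Finset.notMem_empty, iff_false, mem_incSet_iff]
    rintro ⟨⟨heG, hwe⟩, hnot⟩
    have heE : e ∈ E₀ := by
      by_contra hcon
      exact hnot ⟨⟨heG, hwe⟩, hcon⟩
    rcases (hmemE₀ e).mp heE with rfl | rfl | rfl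
    · rcases Sym2.mem_iff.mp hwe with h' | h'
      · exact ha h'
      · exact hb h'
    · rcases Sym2.mem_iff.mp hwe with h' | h'
      · exact ha h'
      · exact hc h'
    · rcases Sym2.mem_iff.mp hwe with h' | h'
      · exact ha h'
      · exact hd h'
  -- the new weighted sums
  have hSv : weightedSum G ω g v = S' v + (x₁ + x₂ + x₃) := by
    rw [hsplit v, hDv, Finset.sum_insert (by simp [he12, he13]),
      Finset.sum_insert (by simp [he23]), Finset.sum_singleton, hg1, hg2, hg3]
    ring
  have hSu1 : weightedSum G ω g u₁ = S' u₁ + x₁ := by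
    rw [hsplit u₁, hDu1, Finset.sum_singleton, hg1]
  have hSu2 : weightedSum G ω g u₂ = S' u₂ + x₂ := by
    rw [hsplit u₂, hDu2, Finset.sum_singleton, hg2]
  have hSu3 : weightedSum G ω g u₃ = S' u₃ + x₃ := by
    rw [hsplit u₃, hDu3, Finset.sum_singleton, hg3]
  have hSother : ∀ w : V, w ≠ v → w ≠ u₁ → w ≠ u₂ → w ≠ u₃ →
      weightedSum G ω g w = S' w := by
    intro w ha hb hc hd
    rw [hsplit w, hDother w ha hb hc hd, Finset.sum_empty, add_zero]
  -- neighbor sets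
  have hnbr : ∀ w : V, w ≠ v → w ≠ u₁ → w ≠ u₂ → w ≠ u₃ →
      G'.neighborSet w = G.neighborSet w := by
    intro w ha hb hc hd
    ext y
    simp only [SimpleGraph.mem_neighborSet, hG'def, SimpleGraph.deleteEdges_adj]
    constructor
    · exact fun h => h.1
    · intro h
      refine ⟨h, fun hE => ?_⟩
      rcases (hmemE₀ _).mp hE with h' | h' | h'
      · rcases Sym2.eq_iff.mp h' with ⟨h'', -⟩ | ⟨h'', -⟩
        · exact ha h''
        · exact hb h''
      · rcases Sym2.eq_iff.mp h' with ⟨h'', -⟩ | ⟨h'', -⟩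
        · exact ha h''
        · exact hc h''
      · rcases Sym2.eq_iff.mp h' with ⟨h'', -⟩ | ⟨h'', -⟩
        · exact ha h''
        · exact hd h''
  have hadjT : ∀ u w : V, u ≠ v → w ≠ v → (G'.Adj u w ↔ G.Adj u w) := by
    intro u w hu hw
    rw [hG'def]
    simp only [SimpleGraph.deleteEdges_adj]
    constructor
    · exact fun h => h.1
    · intro h
      refine ⟨h, fun hE => ?_⟩
      rcases (hmemE₀ _).mp hE with h' | h' | h' <;>
        rcases Sym2.eq_iff.mp h' with ⟨h'', -⟩ | ⟨-, h''⟩ <;>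
        first
          | exact hu h''
          | exact hw h''
  -- conclusion
  refine ⟨g, ?_, ?_, ?_⟩
  · -- labels in lists
    intro e he
    by_cases hA : e = s(v, u₁)
    · subst hA; rw [hg1]; exact hx₁L
    by_cases hB : e = s(v, u₂)
    · subst hB; rw [hg2]; exact hx₂L
    by_cases hC : e = s(v, u₃)
    · subst hC; rw [hg3]; exact hx₃L
    rw [hgf e hA hB hC]
    refine hfL e ?_
    rw [hedge']
    refine ⟨he, fun hE => ?_⟩
    rcases (hmemE₀ e).mp hE with h' | h' | h'
    · exact hA h'
    · exact hB h'
    · exact hC h'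
  · -- distinct labels
    intro ea hea eb heb hne
    have hmem' : ∀ e ∈ G.edgeSet, e ≠ s(v, u₁) → e ≠ s(v, u₂) → e ≠ s(v, u₃) →
        e ∈ G'.edgeSet := by
      intro e he hA hB hC
      rw [hedge']
      refine ⟨he, fun hE => ?_⟩
      rcases (hmemE₀ e).mp hE with h' | h' | h'
      · exact hA h'
      · exact hB h'
      · exact hC h'
    have hxf : ∀ (x : ℝ), x ∉ F → ∀ e ∈ G'.edgeSet, x ≠ f e := by
      intro x hx e he hcon
      exact hx (hcon ▸ hfF e he)
    by_cases hA : ea = s(v, u₁)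
    · subst hA
      rw [hg1]
      by_cases hB : eb = s(v, u₂)
      · subst hB; rw [hg2]; exact hne12
      by_cases hC : eb = s(v, u₃)
      · subst hC; rw [hg3]; exact hne13
      have hB1 : eb ≠ s(v, u₁) := Ne.symm hne
      rw [hgf eb hB1 hB hC]
      exact hxf x₁ hx₁F eb (hmem' eb heb hB1 hB hC)
    by_cases hA2 : ea = s(v, u₂)
    · subst hA2
      rw [hg2]
      by_cases hB : eb = s(v, u₁)
      · subst hB; rw [hg1]; exact Ne.symm hne12
      by_cases hC : eb = s(v, u₃)
      · subst hC; rw [hg3]; exact hne23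
      have hB2 : eb ≠ s(v, u₂) := Ne.symm hne
      rw [hgf eb hB hB2 hC]
      exact hxf x₂ hx₂F eb (hmem' eb heb hB hB2 hC)
    by_cases hA3 : ea = s(v, u₃)
    · subst hA3
      rw [hg3]
      by_cases hB : eb = s(v, u₁)
      · subst hB; rw [hg1]; exact Ne.symm hne13
      by_cases hC : eb = s(v, u₂)
      · subst hC; rw [hg2]; exact Ne.symm hne23
      have hB3 : eb ≠ s(v, u₃) := Ne.symm hne
      rw [hgf eb hB hC hB3]
      exact hxf x₃ hx₃F eb (hmem' eb heb hB hC hB3)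
    · rw [hgf ea hA hA2 hA3]
      have heaG' : ea ∈ G'.edgeSet := hmem' ea hea hA hA2 hA3
      by_cases hB : eb = s(v, u₁)
      · subst hB; rw [hg1]; exact Ne.symm (hxf x₁ hx₁F ea heaG')
      by_cases hC : eb = s(v, u₂)
      · subst hC; rw [hg2]; exact Ne.symm (hxf x₂ hx₂F ea heaG')
      by_cases hD : eb = s(v, u₃)
      · subst hD; rw [hg3]; exact Ne.symm (hxf x₃ hx₃F ea heaG')
      rw [hgf eb hB hC hD]
      exact hfinj ea heaG' eb (hmem' eb heb hB hC hD) hne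
  · -- distinct weighted sums
    intro u w huw hdu hdw hex
    have key_v1 : weightedSum G ω g v ≠ weightedSum G ω g u₁ := by
      rw [hSv, hSu1]; intro h; exact hd23 (by linarith)
    have key_v2 : weightedSum G ω g v ≠ weightedSum G ω g u₂ := by
      rw [hSv, hSu2]; intro h; exact hd13 (by linarith)
    have key_v3 : weightedSum G ω g v ≠ weightedSum G ω g u₃ := by
      rw [hSv, hSu3]; intro h; exact hd12 (by linarith)
    have key_12 : weightedSum G ω g u₁ ≠ weightedSum G ω g u₂ := by
      rw [hSu1, hSu2]; intro h; exact hc12 (by linarith)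
    have key_13 : weightedSum G ω g u₁ ≠ weightedSum G ω g u₃ := by
      rw [hSu1, hSu3]; intro h; exact hc13 (by linarith)
    have key_23 : weightedSum G ω g u₂ ≠ weightedSum G ω g u₃ := by
      rw [hSu2, hSu3]; intro h; exact hc23 (by linarith)
    have key_vW : ∀ w' : V, w' ≠ v → w' ≠ u₁ → w' ≠ u₂ → w' ≠ u₃ →
        weightedSum G ω g v ≠ weightedSum G ω g w' := by
      intro w' ha hb hc hd
      rw [hSv, hSother w' ha hb hc hd]
      intro h
      exact hσB w' ((hWmem w').mpr ⟨ha, hb, hc, hd⟩) (by linarith)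
    have key_1W : ∀ w' : V, w' ≠ v → w' ≠ u₁ → w' ≠ u₂ → w' ≠ u₃ →
        weightedSum G ω g u₁ ≠ weightedSum G ω g w' := by
      intro w' ha hb hc hd
      rw [hSu1, hSother w' ha hb hc hd]
      intro h
      exact hx₁T w' ((hWmem w').mpr ⟨ha, hb, hc, hd⟩) (by linarith)
    have key_2W : ∀ w' : V, w' ≠ v → w' ≠ u₁ → w' ≠ u₂ → w' ≠ u₃ →
        weightedSum G ω g u₂ ≠ weightedSum G ω g w' := by
      intro w' ha hb hc hd
      rw [hSu2, hSother w' ha hb hc hd]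
      intro h
      exact hx₂T w' ((hWmem w').mpr ⟨ha, hb, hc, hd⟩) (by linarith)
    have key_3W : ∀ w' : V, w' ≠ v → w' ≠ u₁ → w' ≠ u₂ → w' ≠ u₃ →
        weightedSum G ω g u₃ ≠ weightedSum G ω g w' := by
      intro w' ha hb hc hd
      rw [hSu3, hSother w' ha hb hc hd]
      intro h
      exact hx₃T w' ((hWmem w').mpr ⟨ha, hb, hc, hd⟩) (by linarith)
    by_cases huv : u = v
    · rw [huv]
      by_cases hw1 : w = u₁
      · rw [hw1]; exact key_v1
      by_cases hw2 : w = u₂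
      · rw [hw2]; exact key_v2
      by_cases hw3 : w = u₃
      · rw [hw3]; exact key_v3
      have hwv : w ≠ v := fun h => huw (huv.trans h.symm)
      exact key_vW w hwv hw1 hw2 hw3
    by_cases hu1 : u = u₁
    · rw [hu1]
      by_cases hwv : w = v
      · rw [hwv]; exact (key_v1).symm
      by_cases hw2 : w = u₂
      · rw [hw2]; exact key_12
      by_cases hw3 : w = u₃
      · rw [hw3]; exact key_13
      by_cases hw1 : w = u₁
      · exact absurd (hu1.trans hw1.symm) huw
      exact key_1W w hwv hw1 hw2 hw3
    by_cases hu2 : u = u₂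
    · rw [hu2]
      by_cases hwv : w = v
      · rw [hwv]; exact (key_v2).symm
      by_cases hw1 : w = u₁
      · rw [hw1]; exact (key_12).symm
      by_cases hw3 : w = u₃
      · rw [hw3]; exact key_23
      by_cases hw2 : w = u₂
      · exact absurd (hu2.trans hw2.symm) huw
      exact key_2W w hwv hw1 hw2 hw3
    by_cases hu3 : u = u₃
    · rw [hu3]
      by_cases hwv : w = v
      · rw [hwv]; exact (key_v3).symm
      by_cases hw1 : w = u₁
      · rw [hw1]; exact (key_13).symm
      by_cases hw2 : w = u₂
      · rw [hw2]; exact (key_23).symm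
      by_cases hw3 : w = u₃
      · exact absurd (hu3.trans hw3.symm) huw
      exact key_3W w hwv hw1 hw2 hw3
    -- u is not one of the special vertices
    by_cases hwv : w = v
    · rw [hwv]; exact (key_vW u huv hu1 hu2 hu3).symm
    by_cases hw1 : w = u₁
    · rw [hw1]; exact (key_1W u huv hu1 hu2 hu3).symm
    by_cases hw2 : w = u₂
    · rw [hw2]; exact (key_2W u huv hu1 hu2 hu3).symm
    by_cases hw3 : w = u₃
    · rw [hw3]; exact (key_3W u huv hu1 hu2 hu3).symm
    -- both vertices untouched
    rw [hSother u huv hu1 hu2 hu3, hSother w hwv hw1 hw2 hw3]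
    have hnu : G'.neighborSet u = G.neighborSet u := hnbr u huv hu1 hu2 hu3
    have hnw : G'.neighborSet w = G.neighborSet w := hnbr w hwv hw1 hw2 hw3
    refine hfsum u w huw ?_ ?_ ?_
    · rw [hnu]; exact hdu
    · rw [hnw]; exact hdw
    · rintro ⟨hadj', hc1, hc2⟩
      rw [hnu] at hc1
      rw [hnw] at hc2
      exact hex ⟨(hadjT u w huv hwv).mp hadj', hc1, hc2⟩
end

section
/- Let G be a graph on n vertices, let v be a vertex of G of degree at least 3, and let u_1, u_2, u_3 be three distinct neighbors of v. If the graph G' = G − {vu_1, vu_2, vu_3} obtained by deleting the three edges vu_1, vu_2, vu_3 admits an orientation that is ⌊2n/3⌋-quasi-oriented-antimagic, then G admits an orientation that is ⌊2n/3⌋-quasi-oriented-antimagic. (Consequently, a vertex of degree at least 3 is reducible for the property that a graph on n vertices admits an orientation that is ⌊2n/3⌋-quasi-oriented-antimagic.) -/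
/-- `D` is an orientation of the simple graph `G`: a directed graph
whose underlying undirected graph is `G`. -/
def IsOrientation {V : Type*} (G : SimpleGraph V) (D : V → V → Prop) : Prop :=
  (∀ u w : V, G.Adj u w ↔ (D u w ∨ D w u)) ∧ (∀ u w : V, ¬(D u w ∧ D w u))

open Classical in
/-- The oriented vertex sum at `v`: the sum of the labels of edges oriented toward `v`
minus the sum of the labels of edges oriented away from `v`. -/
noncomputable def orientedSum {V : Type*} [Fintype V] (G : SimpleGraph V)
    (D : V → V → Prop) (f : Sym2 V → ℕ) (v : V) : ℤ :=
  ∑ w ∈ (G.neighborSet v).toFinite.toFinset,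
    if D w v then (f s(v, w) : ℤ) else -(f s(v, w) : ℤ)

/-- `G` admits an orientation that is `k`-quasi-oriented-antimagic: there is an
orientation `D` of `G` and an injective edge labeling into `{1, …, |E(G)| + k}`
such that the oriented vertex sums are pairwise distinct over all vertices of
degree at least `1`. -/
def HasQuasiOrientedAntimagicOrientation {V : Type*} [Fintype V]
    (G : SimpleGraph V) (k : ℕ) : Prop :=
  ∃ D : V → V → Prop, IsOrientation G D ∧
    ∃ f : Sym2 V → ℕ,
      (∀ e ∈ G.edgeSet, f e ∈ Finset.Icc 1 (Nat.card G.edgeSet + k)) ∧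
      (∀ e₁ ∈ G.edgeSet, ∀ e₂ ∈ G.edgeSet, e₁ ≠ e₂ → f e₁ ≠ f e₂) ∧
      (∀ u w : V, u ≠ w →
        1 ≤ Nat.card (G.neighborSet u) → 1 ≤ Nat.card (G.neighborSet w) →
        orientedSum G D f u ≠ orientedSum G D f w)

open Finset

namespace QOA

lemma selection (X Y Z B : Finset ℤ) (c12 c13 c23 b1 b2 b3 : ℤ)
    (hX : 4 ≤ X.card) (hY : 7 ≤ Y.card) (hZ : 1 ≤ Z.card)
    (hsum : B.card + 30 ≤ X.card + Y.card + Z.card) :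
    ∃ x ∈ X, ∃ y ∈ Y, ∃ z ∈ Z,
      x ≠ y ∧ x ≠ -y ∧ x - y ≠ c12 ∧
      x ≠ z ∧ x ≠ -z ∧ x - z ≠ c13 ∧
      y ≠ z ∧ y ≠ -z ∧ y - z ≠ c23 ∧
      (x + y + z) ∉ B ∧
      2*x + y + z ≠ b1 ∧ x + 2*y + z ≠ b2 ∧ x + y + 2*z ≠ b3 := by
  classical
  have hZne : Z.Nonempty := card_pos.mp (by omega)
  set z₀ := Z.min' hZne with hz₀def
  have hz₀Z : z₀ ∈ Z := Z.min'_mem hZne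
  have hz₀le : ∀ z ∈ Z, z₀ ≤ z := fun z hz => Z.min'_le z hz
  set X' : Finset ℤ := X \ {z₀, -z₀, z₀ + c13} with hX'def
  have hX'sub : X' ⊆ X := sdiff_subset
  have hX'card : X.card - 3 ≤ X'.card := by
    have h1 : ({z₀, -z₀, z₀ + c13} : Finset ℤ).card ≤ 3 := by
      apply le_trans (card_insert_le _ _)
      have := card_insert_le (-z₀) ({z₀ + c13} : Finset ℤ)
      simp only [card_singleton] at this ⊢
      omega
    have h2 : X.card - ({z₀, -z₀, z₀ + c13} : Finset ℤ).card ≤ X'.card := by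
      rw [hX'def]; exact le_card_sdiff _ _
    omega
  have hX'ne : X'.Nonempty := card_pos.mp (by omega)
  set xh := X'.max' hX'ne with hxhdef
  have hxhX' : xh ∈ X' := X'.max'_mem hX'ne
  have hxhge : ∀ x ∈ X', x ≤ xh := fun x hx => X'.le_max' x hx
  have hX'facts : ∀ x ∈ X', x ≠ z₀ ∧ x ≠ -z₀ ∧ x ≠ z₀ + c13 := by
    intro x hx
    rw [hX'def, mem_sdiff] at hx
    simp only [mem_insert, mem_singleton, not_or] at hx
    exact hx.2
  have hxhfacts : xh ≠ z₀ ∧ xh ≠ -z₀ ∧ xh ≠ z₀ + c13 := hX'facts _ hxhX'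
  set Y' : Finset ℤ := Y \ {z₀, -z₀, z₀ + c23, xh, -xh, xh - c12} with hY'def
  have hY'sub : Y' ⊆ Y := sdiff_subset
  have hY'card : Y.card - 6 ≤ Y'.card := by
    have h1 : ({z₀, -z₀, z₀ + c23, xh, -xh, xh - c12} : Finset ℤ).card ≤ 6 := by
      apply le_trans (card_insert_le _ _)
      have h2 := card_insert_le (-z₀) ({z₀ + c23, xh, -xh, xh - c12} : Finset ℤ)
      have h3 := card_insert_le (z₀ + c23) ({xh, -xh, xh - c12} : Finset ℤ)
      have h4 := card_insert_le xh ({-xh, xh - c12} : Finset ℤ)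
      have h5 := card_insert_le (-xh) ({xh - c12} : Finset ℤ)
      simp only [card_singleton] at h2 h3 h4 h5 ⊢
      omega
    have h2 : Y.card - ({z₀, -z₀, z₀ + c23, xh, -xh, xh - c12} : Finset ℤ).card ≤ Y'.card := by
      rw [hY'def]; exact le_card_sdiff _ _
    omega
  have hY'ne : Y'.Nonempty := card_pos.mp (by omega)
  set y₀ := Y'.min' hY'ne with hy₀def
  set yh := Y'.max' hY'ne with hyhdef
  have hy₀Y' : y₀ ∈ Y' := Y'.min'_mem hY'ne
  have hyhY' : yh ∈ Y' := Y'.max'_mem hY'ne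
  have hy₀le : ∀ y ∈ Y', y₀ ≤ y := fun y hy => Y'.min'_le y hy
  have hyhge : ∀ y ∈ Y', y ≤ yh := fun y hy => Y'.le_max' y hy
  have hY'facts : ∀ y ∈ Y',
      y ≠ z₀ ∧ y ≠ -z₀ ∧ y ≠ z₀ + c23 ∧ y ≠ xh ∧ y ≠ -xh ∧ y ≠ xh - c12 := by
    intro y hy
    rw [hY'def, mem_sdiff] at hy
    simp only [mem_insert, mem_singleton, not_or] at hy
    exact hy.2
  -- the three families
  set T₁ : Finset (ℤ × ℤ × ℤ) := X'.image (fun x => (x, y₀, z₀)) with hT₁def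
  set T₂ : Finset (ℤ × ℤ × ℤ) := Y'.image (fun y => (xh, y, z₀)) with hT₂def
  set T₃ : Finset (ℤ × ℤ × ℤ) := Z.image (fun z => (xh, yh, z)) with hT₃def
  set T : Finset (ℤ × ℤ × ℤ) := T₁ ∪ T₂ ∪ T₃ with hTdef
  have hrep : ∀ t ∈ T, (t.2.1 = y₀ ∧ t.2.2 = z₀ ∧ t.1 ∈ X') ∨
      (t.1 = xh ∧ t.2.2 = z₀ ∧ t.2.1 ∈ Y') ∨ (t.1 = xh ∧ t.2.1 = yh ∧ t.2.2 ∈ Z) := by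
    intro t ht
    rw [hTdef, mem_union, mem_union] at ht
    rcases ht with (ht | ht) | ht
    · rw [hT₁def, mem_image] at ht
      obtain ⟨x, hx, hxt⟩ := ht
      subst hxt; exact Or.inl ⟨rfl, rfl, hx⟩
    · rw [hT₂def, mem_image] at ht
      obtain ⟨y, hy, hyt⟩ := ht
      subst hyt; exact Or.inr (Or.inl ⟨rfl, rfl, hy⟩)
    · rw [hT₃def, mem_image] at ht
      obtain ⟨z, hz, hzt⟩ := ht
      subst hzt; exact Or.inr (Or.inr ⟨rfl, rfl, hz⟩)
  have hbounds : ∀ t ∈ T, t.1 ≤ xh ∧ y₀ ≤ t.2.1 ∧ t.2.1 ≤ yh ∧ z₀ ≤ t.2.2 := by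
    intro t ht
    rcases hrep t ht with ⟨h1, h2, h3⟩ | ⟨h1, h2, h3⟩ | ⟨h1, h2, h3⟩
    · refine ⟨hxhge _ h3, by omega, ?_, by omega⟩
      rw [h1]; exact hy₀le _ hyhY'
    · exact ⟨by omega, hy₀le _ h3, hyhge _ h3, by omega⟩
    · refine ⟨by omega, ?_, by omega, hz₀le _ h3⟩
      rw [h2]; exact hy₀le _ hyhY'
  have hmemXYZ : ∀ t ∈ T, t.1 ∈ X ∧ t.2.1 ∈ Y ∧ t.2.2 ∈ Z := by
    intro t ht
    rcases hrep t ht with ⟨h1, h2, h3⟩ | ⟨h1, h2, h3⟩ | ⟨h1, h2, h3⟩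
    · exact ⟨hX'sub h3, by rw [h1]; exact hY'sub hy₀Y', by rw [h2]; exact hz₀Z⟩
    · exact ⟨by rw [h1]; exact hX'sub hxhX', hY'sub h3, by rw [h2]; exact hz₀Z⟩
    · exact ⟨by rw [h1]; exact hX'sub hxhX', by rw [h2]; exact hY'sub hyhY', h3⟩
  have hinj : ∀ t₁ ∈ T, ∀ t₂ ∈ T,
      t₁.1 + t₁.2.1 + t₁.2.2 = t₂.1 + t₂.2.1 + t₂.2.2 → t₁ = t₂ := by
    intro t₁ h₁ t₂ h₂ hσ
    have b₁ := hbounds t₁ h₁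
    have b₂ := hbounds t₂ h₂
    have e₁ : t₁.1 = t₂.1 ∧ t₁.2.1 = t₂.2.1 ∧ t₁.2.2 = t₂.2.2 := by
      rcases hrep t₁ h₁ with ⟨p1, p2, _⟩ | ⟨p1, p2, _⟩ | ⟨p1, p2, _⟩ <;>
        rcases hrep t₂ h₂ with ⟨q1, q2, _⟩ | ⟨q1, q2, _⟩ | ⟨q1, q2, _⟩ <;> omega
    exact Prod.ext e₁.1 (Prod.ext e₁.2.1 e₁.2.2)
  have hT₁card : T₁.card = X'.card := by
    rw [hT₁def]
    exact card_image_of_injective _ (fun a b h => by simpa using (Prod.ext_iff.mp h).1)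
  have hT₂card : T₂.card = Y'.card := by
    rw [hT₂def]
    apply card_image_of_injective
    intro a b h
    have := (Prod.ext_iff.mp h).2
    simpa using (Prod.ext_iff.mp this).1
  have hT₃card : T₃.card = Z.card := by
    rw [hT₃def]
    apply card_image_of_injective
    intro a b h
    have := (Prod.ext_iff.mp h).2
    simpa using (Prod.ext_iff.mp this).2
  have hinter₁ : (T₁ ∩ T₂).card ≤ 1 := by
    apply card_le_one.mpr
    intro a ha b hb
    rw [mem_inter] at ha hb
    have ha1 : a.2.1 = y₀ ∧ a.2.2 = z₀ := by
      have := ha.1; rw [hT₁def, mem_image] at this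
      obtain ⟨x, _, hx⟩ := this; subst hx; exact ⟨rfl, rfl⟩
    have ha2 : a.1 = xh := by
      have := ha.2; rw [hT₂def, mem_image] at this
      obtain ⟨y, _, hy⟩ := this; subst hy; rfl
    have hb1 : b.2.1 = y₀ ∧ b.2.2 = z₀ := by
      have := hb.1; rw [hT₁def, mem_image] at this
      obtain ⟨x, _, hx⟩ := this; subst hx; exact ⟨rfl, rfl⟩
    have hb2 : b.1 = xh := by
      have := hb.2; rw [hT₂def, mem_image] at this
      obtain ⟨y, _, hy⟩ := this; subst hy; rfl
    exact Prod.ext (by omega) (Prod.ext (by omega) (by omega))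
  have hinter₂ : ((T₁ ∪ T₂) ∩ T₃).card ≤ 1 := by
    apply card_le_one.mpr
    intro a ha b hb
    rw [mem_inter] at ha hb
    have ha3 : a.1 = xh ∧ a.2.1 = yh := by
      have := ha.2; rw [hT₃def, mem_image] at this
      obtain ⟨z, _, hz⟩ := this; subst hz; exact ⟨rfl, rfl⟩
    have hb3 : b.1 = xh ∧ b.2.1 = yh := by
      have := hb.2; rw [hT₃def, mem_image] at this
      obtain ⟨z, _, hz⟩ := this; subst hz; exact ⟨rfl, rfl⟩
    have ha12 : a.2.2 = z₀ := by
      rcases mem_union.mp ha.1 with h | h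
      · rw [hT₁def, mem_image] at h; obtain ⟨x, _, hx⟩ := h; subst hx; rfl
      · rw [hT₂def, mem_image] at h; obtain ⟨y, _, hy⟩ := h; subst hy; rfl
    have hb12 : b.2.2 = z₀ := by
      rcases mem_union.mp hb.1 with h | h
      · rw [hT₁def, mem_image] at h; obtain ⟨x, _, hx⟩ := h; subst hx; rfl
      · rw [hT₂def, mem_image] at h; obtain ⟨y, _, hy⟩ := h; subst hy; rfl
    exact Prod.ext (by omega) (Prod.ext (by omega) (by omega))
  have hTcard : X'.card + Y'.card + Z.card ≤ T.card + 2 := by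
    have h1 := card_union_add_card_inter T₁ T₂
    have h2 := card_union_add_card_inter (T₁ ∪ T₂) T₃
    rw [hTdef]
    omega
  -- helpers for bounding filters over the three families
  have hsplit : ∀ (Q : ℤ × ℤ × ℤ → Prop) [DecidablePred Q],
      (T.filter Q).card ≤ (T₁.filter Q).card + (T₂.filter Q).card + (T₃.filter Q).card := by
    intro Q _
    have hsub : T.filter Q ⊆ (T₁.filter Q ∪ T₂.filter Q) ∪ T₃.filter Q := by
      rw [hTdef, filter_union, filter_union]
    refine le_trans (card_le_card hsub) ?_
    refine le_trans (card_union_le _ _) ?_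
    exact add_le_add (card_union_le _ _) le_rfl
  have honeX : ∀ (Q : ℤ × ℤ × ℤ → Prop) [DecidablePred Q],
      (∀ a ∈ X', ∀ b ∈ X', Q (a, y₀, z₀) → Q (b, y₀, z₀) → a = b) →
      (T₁.filter Q).card ≤ 1 := by
    intro Q _ h
    apply card_le_one.mpr
    intro a ha b hb
    rw [mem_filter] at ha hb
    obtain ⟨a', ha', rfl⟩ := mem_image.mp (by rw [hT₁def] at ha; exact ha.1)
    obtain ⟨b', hb', rfl⟩ := mem_image.mp (by rw [hT₁def] at hb; exact hb.1)
    rw [h a' ha' b' hb' ha.2 hb.2]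
  have hzeroX : ∀ (Q : ℤ × ℤ × ℤ → Prop) [DecidablePred Q],
      (∀ a ∈ X', ¬ Q (a, y₀, z₀)) → (T₁.filter Q).card = 0 := by
    intro Q _ h
    rw [card_eq_zero, filter_eq_empty_iff]
    intro t ht
    obtain ⟨a', ha', rfl⟩ := mem_image.mp (by rw [hT₁def] at ht; exact ht)
    exact h a' ha'
  have honeY : ∀ (Q : ℤ × ℤ × ℤ → Prop) [DecidablePred Q],
      (∀ a ∈ Y', ∀ b ∈ Y', Q (xh, a, z₀) → Q (xh, b, z₀) → a = b) →
      (T₂.filter Q).card ≤ 1 := by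
    intro Q _ h
    apply card_le_one.mpr
    intro a ha b hb
    rw [mem_filter] at ha hb
    obtain ⟨a', ha', rfl⟩ := mem_image.mp (by rw [hT₂def] at ha; exact ha.1)
    obtain ⟨b', hb', rfl⟩ := mem_image.mp (by rw [hT₂def] at hb; exact hb.1)
    rw [h a' ha' b' hb' ha.2 hb.2]
  have hzeroY : ∀ (Q : ℤ × ℤ × ℤ → Prop) [DecidablePred Q],
      (∀ a ∈ Y', ¬ Q (xh, a, z₀)) → (T₂.filter Q).card = 0 := by
    intro Q _ h
    rw [card_eq_zero, filter_eq_empty_iff]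
    intro t ht
    obtain ⟨a', ha', rfl⟩ := mem_image.mp (by rw [hT₂def] at ht; exact ht)
    exact h a' ha'
  have honeZ : ∀ (Q : ℤ × ℤ × ℤ → Prop) [DecidablePred Q],
      (∀ a ∈ Z, ∀ b ∈ Z, Q (xh, yh, a) → Q (xh, yh, b) → a = b) →
      (T₃.filter Q).card ≤ 1 := by
    intro Q _ h
    apply card_le_one.mpr
    intro a ha b hb
    rw [mem_filter] at ha hb
    obtain ⟨a', ha', rfl⟩ := mem_image.mp (by rw [hT₃def] at ha; exact ha.1)
    obtain ⟨b', hb', rfl⟩ := mem_image.mp (by rw [hT₃def] at hb; exact hb.1)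
    rw [h a' ha' b' hb' ha.2 hb.2]
  have hzeroZ : ∀ (Q : ℤ × ℤ × ℤ → Prop) [DecidablePred Q],
      (∀ a ∈ Z, ¬ Q (xh, yh, a)) → (T₃.filter Q).card = 0 := by
    intro Q _ h
    rw [card_eq_zero, filter_eq_empty_iff]
    intro t ht
    obtain ⟨a', ha', rfl⟩ := mem_image.mp (by rw [hT₃def] at ht; exact ht)
    exact h a' ha'
  -- the thirteen bounds
  have c0 : (T.filter (fun t => t.1 + t.2.1 + t.2.2 ∈ B)).card ≤ B.card := by
    apply card_le_card_of_injOn (fun t => t.1 + t.2.1 + t.2.2)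
    · intro t ht; exact (mem_filter.mp ht).2
    · intro a ha b hb hab
      exact hinj a (mem_of_mem_filter a ha) b (mem_of_mem_filter b hb) hab
  have c1 : (T.filter (fun t => t.1 = t.2.1)).card ≤ 1 := by
    refine le_trans (hsplit _) ?_
    have e1 := honeX (fun t => t.1 = t.2.1)
      (by intro a _ b _ qa qb; dsimp only at qa qb; omega)
    have e2 := hzeroY (fun t => t.1 = t.2.1)
      (by intro a ha; have := hY'facts a ha; dsimp only; omega)
    have e3 := hzeroZ (fun t => t.1 = t.2.1)
      (by intro a _; have := hY'facts yh hyhY'; dsimp only; omega)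
    omega
  have c2 : (T.filter (fun t => t.1 = -t.2.1)).card ≤ 1 := by
    refine le_trans (hsplit _) ?_
    have e1 := honeX (fun t => t.1 = -t.2.1)
      (by intro a _ b _ qa qb; dsimp only at qa qb; omega)
    have e2 := hzeroY (fun t => t.1 = -t.2.1)
      (by intro a ha; have := hY'facts a ha; dsimp only; omega)
    have e3 := hzeroZ (fun t => t.1 = -t.2.1)
      (by intro a _; have := hY'facts yh hyhY'; dsimp only; omega)
    omega
  have c3 : (T.filter (fun t => t.1 - t.2.1 = c12)).card ≤ 1 := by
    refine le_trans (hsplit _) ?_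
    have e1 := honeX (fun t => t.1 - t.2.1 = c12)
      (by intro a _ b _ qa qb; dsimp only at qa qb; omega)
    have e2 := hzeroY (fun t => t.1 - t.2.1 = c12)
      (by intro a ha; have := hY'facts a ha; dsimp only; omega)
    have e3 := hzeroZ (fun t => t.1 - t.2.1 = c12)
      (by intro a _; have := hY'facts yh hyhY'; dsimp only; omega)
    omega
  have c4 : (T.filter (fun t => t.1 = t.2.2)).card ≤ 1 := by
    refine le_trans (hsplit _) ?_
    have e1 := hzeroX (fun t => t.1 = t.2.2)
      (by intro a ha; have := hX'facts a ha; dsimp only; omega)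
    have e2 := hzeroY (fun t => t.1 = t.2.2)
      (by intro a _; have := hxhfacts; dsimp only; omega)
    have e3 := honeZ (fun t => t.1 = t.2.2)
      (by intro a _ b _ qa qb; dsimp only at qa qb; omega)
    omega
  have c5 : (T.filter (fun t => t.1 = -t.2.2)).card ≤ 1 := by
    refine le_trans (hsplit _) ?_
    have e1 := hzeroX (fun t => t.1 = -t.2.2)
      (by intro a ha; have := hX'facts a ha; dsimp only; omega)
    have e2 := hzeroY (fun t => t.1 = -t.2.2)
      (by intro a _; have := hxhfacts; dsimp only; omega)
    have e3 := honeZ (fun t => t.1 = -t.2.2)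
      (by intro a _ b _ qa qb; dsimp only at qa qb; omega)
    omega
  have c6 : (T.filter (fun t => t.1 - t.2.2 = c13)).card ≤ 1 := by
    refine le_trans (hsplit _) ?_
    have e1 := hzeroX (fun t => t.1 - t.2.2 = c13)
      (by intro a ha; have := hX'facts a ha; dsimp only; omega)
    have e2 := hzeroY (fun t => t.1 - t.2.2 = c13)
      (by intro a _; have := hxhfacts; dsimp only; omega)
    have e3 := honeZ (fun t => t.1 - t.2.2 = c13)
      (by intro a _ b _ qa qb; dsimp only at qa qb; omega)
    omega
  have c7 : (T.filter (fun t => t.2.1 = t.2.2)).card ≤ 1 := by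
    refine le_trans (hsplit _) ?_
    have e1 := hzeroX (fun t => t.2.1 = t.2.2)
      (by intro a _; have := hY'facts y₀ hy₀Y'; dsimp only; omega)
    have e2 := hzeroY (fun t => t.2.1 = t.2.2)
      (by intro a ha; have := hY'facts a ha; dsimp only; omega)
    have e3 := honeZ (fun t => t.2.1 = t.2.2)
      (by intro a _ b _ qa qb; dsimp only at qa qb; omega)
    omega
  have c8 : (T.filter (fun t => t.2.1 = -t.2.2)).card ≤ 1 := by
    refine le_trans (hsplit _) ?_
    have e1 := hzeroX (fun t => t.2.1 = -t.2.2)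
      (by intro a _; have := hY'facts y₀ hy₀Y'; dsimp only; omega)
    have e2 := hzeroY (fun t => t.2.1 = -t.2.2)
      (by intro a ha; have := hY'facts a ha; dsimp only; omega)
    have e3 := honeZ (fun t => t.2.1 = -t.2.2)
      (by intro a _ b _ qa qb; dsimp only at qa qb; omega)
    omega
  have c9 : (T.filter (fun t => t.2.1 - t.2.2 = c23)).card ≤ 1 := by
    refine le_trans (hsplit _) ?_
    have e1 := hzeroX (fun t => t.2.1 - t.2.2 = c23)
      (by intro a _; have := hY'facts y₀ hy₀Y'; dsimp only; omega)
    have e2 := hzeroY (fun t => t.2.1 - t.2.2 = c23)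
      (by intro a ha; have := hY'facts a ha; dsimp only; omega)
    have e3 := honeZ (fun t => t.2.1 - t.2.2 = c23)
      (by intro a _ b _ qa qb; dsimp only at qa qb; omega)
    omega
  have c10 : (T.filter (fun t => 2*t.1 + t.2.1 + t.2.2 = b1)).card ≤ 3 := by
    refine le_trans (hsplit _) ?_
    have e1 := honeX (fun t => 2*t.1 + t.2.1 + t.2.2 = b1)
      (by intro a _ b _ qa qb; dsimp only at qa qb; omega)
    have e2 := honeY (fun t => 2*t.1 + t.2.1 + t.2.2 = b1)
      (by intro a _ b _ qa qb; dsimp only at qa qb; omega)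
    have e3 := honeZ (fun t => 2*t.1 + t.2.1 + t.2.2 = b1)
      (by intro a _ b _ qa qb; dsimp only at qa qb; omega)
    omega
  have c11 : (T.filter (fun t => t.1 + 2*t.2.1 + t.2.2 = b2)).card ≤ 3 := by
    refine le_trans (hsplit _) ?_
    have e1 := honeX (fun t => t.1 + 2*t.2.1 + t.2.2 = b2)
      (by intro a _ b _ qa qb; dsimp only at qa qb; omega)
    have e2 := honeY (fun t => t.1 + 2*t.2.1 + t.2.2 = b2)
      (by intro a _ b _ qa qb; dsimp only at qa qb; omega)
    have e3 := honeZ (fun t => t.1 + 2*t.2.1 + t.2.2 = b2)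
      (by intro a _ b _ qa qb; dsimp only at qa qb; omega)
    omega
  have c12' : (T.filter (fun t => t.1 + t.2.1 + 2*t.2.2 = b3)).card ≤ 3 := by
    refine le_trans (hsplit _) ?_
    have e1 := honeX (fun t => t.1 + t.2.1 + 2*t.2.2 = b3)
      (by intro a _ b _ qa qb; dsimp only at qa qb; omega)
    have e2 := honeY (fun t => t.1 + t.2.1 + 2*t.2.2 = b3)
      (by intro a _ b _ qa qb; dsimp only at qa qb; omega)
    have e3 := honeZ (fun t => t.1 + t.2.1 + 2*t.2.2 = b3)
      (by intro a _ b _ qa qb; dsimp only at qa qb; omega)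
    omega
  -- conclusion
  by_contra hcon
  have key : ∀ t ∈ T, (t.1 + t.2.1 + t.2.2 ∈ B) ∨ t.1 = t.2.1 ∨ t.1 = -t.2.1 ∨
      t.1 - t.2.1 = c12 ∨ t.1 = t.2.2 ∨ t.1 = -t.2.2 ∨ t.1 - t.2.2 = c13 ∨
      t.2.1 = t.2.2 ∨ t.2.1 = -t.2.2 ∨ t.2.1 - t.2.2 = c23 ∨
      2*t.1 + t.2.1 + t.2.2 = b1 ∨ t.1 + 2*t.2.1 + t.2.2 = b2 ∨
      t.1 + t.2.1 + 2*t.2.2 = b3 := by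
    intro t ht
    by_contra hnot
    push_neg at hnot
    obtain ⟨m1, m2, m3⟩ := hmemXYZ t ht
    obtain ⟨n0, n1, n2, n3, n4, n5, n6, n7, n8, n9, n10, n11, n12⟩ := hnot
    exact hcon ⟨t.1, m1, t.2.1, m2, t.2.2, m3, n1, n2, n3, n4, n5, n6, n7, n8, n9,
      n0, n10, n11, n12⟩
  have hsub : T ⊆ (T.filter (fun t => t.1 + t.2.1 + t.2.2 ∈ B)) ∪
      ((T.filter (fun t => t.1 = t.2.1)) ∪
      ((T.filter (fun t => t.1 = -t.2.1)) ∪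
      ((T.filter (fun t => t.1 - t.2.1 = c12)) ∪
      ((T.filter (fun t => t.1 = t.2.2)) ∪
      ((T.filter (fun t => t.1 = -t.2.2)) ∪
      ((T.filter (fun t => t.1 - t.2.2 = c13)) ∪
      ((T.filter (fun t => t.2.1 = t.2.2)) ∪
      ((T.filter (fun t => t.2.1 = -t.2.2)) ∪
      ((T.filter (fun t => t.2.1 - t.2.2 = c23)) ∪
      ((T.filter (fun t => 2*t.1 + t.2.1 + t.2.2 = b1)) ∪
      ((T.filter (fun t => t.1 + 2*t.2.1 + t.2.2 = b2)) ∪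
      (T.filter (fun t => t.1 + t.2.1 + 2*t.2.2 = b3))))))))))))) := by
    intro t ht
    have hk := key t ht
    simp only [mem_union, mem_filter]
    rcases hk with h|h|h|h|h|h|h|h|h|h|h|h|h
    · exact Or.inl ⟨ht, h⟩
    · exact Or.inr (Or.inl ⟨ht, h⟩)
    · exact Or.inr (Or.inr (Or.inl ⟨ht, h⟩))
    · exact Or.inr (Or.inr (Or.inr (Or.inl ⟨ht, h⟩)))
    · exact Or.inr (Or.inr (Or.inr (Or.inr (Or.inl ⟨ht, h⟩))))
    · exact Or.inr (Or.inr (Or.inr (Or.inr (Or.inr (Or.inl ⟨ht, h⟩)))))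
    · exact Or.inr (Or.inr (Or.inr (Or.inr (Or.inr (Or.inr (Or.inl ⟨ht, h⟩))))))
    · exact Or.inr (Or.inr (Or.inr (Or.inr (Or.inr (Or.inr (Or.inr (Or.inl ⟨ht, h⟩)))))))
    · exact Or.inr (Or.inr (Or.inr (Or.inr (Or.inr (Or.inr (Or.inr (Or.inr (Or.inl ⟨ht, h⟩))))))))
    · exact Or.inr (Or.inr (Or.inr (Or.inr (Or.inr (Or.inr (Or.inr (Or.inr (Or.inr (Or.inl ⟨ht, h⟩)))))))))
    · exact Or.inr (Or.inr (Or.inr (Or.inr (Or.inr (Or.inr (Or.inr (Or.inr (Or.inr (Or.inr (Or.inl ⟨ht, h⟩))))))))))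
    · exact Or.inr (Or.inr (Or.inr (Or.inr (Or.inr (Or.inr (Or.inr (Or.inr (Or.inr (Or.inr (Or.inr (Or.inl ⟨ht, h⟩)))))))))))
    · exact Or.inr (Or.inr (Or.inr (Or.inr (Or.inr (Or.inr (Or.inr (Or.inr (Or.inr (Or.inr (Or.inr (Or.inr ⟨ht, h⟩)))))))))))
  have step : ∀ {s t : Finset (ℤ × ℤ × ℤ)} {a b : ℕ}, s.card ≤ a → t.card ≤ b →
      (s ∪ t).card ≤ a + b := fun hs ht => le_trans (card_union_le _ _) (add_le_add hs ht)
  have hfinal : T.card ≤ B.card + 18 := by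
    refine le_trans (card_le_card hsub) ?_
    have := step c0 (step c1 (step c2 (step c3 (step c4 (step c5 (step c6 (step c7
      (step c8 (step c9 (step c10 (step c11 c12')))))))))))
    omega
  omega

end QOA

/-- Reducibility of a vertex of degree at least `3`: if `v` has degree at least `3`
with distinct neighbors `u₁, u₂, u₃`, and the graph `G'` obtained from `G` by deleting
the three edges `vu₁, vu₂, vu₃` admits an orientation that is
`⌊2n/3⌋`-quasi-oriented-antimagic, then `G` admits such an orientation as well. -/
theorem statement_7 {V : Type*} [Fintype V] (G : SimpleGraph V) (v u₁ u₂ u₃ : V)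
    (hdeg : 3 ≤ Nat.card (G.neighborSet v))
    (h1 : G.Adj v u₁) (h2 : G.Adj v u₂) (h3 : G.Adj v u₃)
    (h12 : u₁ ≠ u₂) (h13 : u₁ ≠ u₃) (h23 : u₂ ≠ u₃)
    (hG' : HasQuasiOrientedAntimagicOrientation
      (G.deleteEdges {s(v, u₁), s(v, u₂), s(v, u₃)}) ((2 * Fintype.card V) / 3)) :
    HasQuasiOrientedAntimagicOrientation G ((2 * Fintype.card V) / 3) := by
  classical
  obtain ⟨D', hD', f', hf'range, hf'inj, hf'sums⟩ := hG'
  set n := Fintype.card V with hn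
  set k := 2 * n / 3 with hk
  set G₂ := G.deleteEdges {s(v, u₁), s(v, u₂), s(v, u₃)} with hG₂def
  have hv1 : v ≠ u₁ := h1.ne
  have hv2 : v ≠ u₂ := h2.ne
  have hv3 : v ≠ u₃ := h3.ne
  -- membership in the deleted edge set
  have hdel : ∀ a b : V, s(a, b) ∈ ({s(v, u₁), s(v, u₂), s(v, u₃)} : Set (Sym2 V)) ↔
      ((a = v ∧ b = u₁) ∨ (a = u₁ ∧ b = v)) ∨ ((a = v ∧ b = u₂) ∨ (a = u₂ ∧ b = v)) ∨
      ((a = v ∧ b = u₃) ∨ (a = u₃ ∧ b = v)) := by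
    intro a b
    simp only [Set.mem_insert_iff, Set.mem_singleton_iff, Sym2.eq_iff]
  have hG₂adj : ∀ a b : V, G₂.Adj a b ↔ G.Adj a b ∧
      ¬ s(a, b) ∈ ({s(v, u₁), s(v, u₂), s(v, u₃)} : Set (Sym2 V)) := by
    intro a b
    rw [hG₂def, SimpleGraph.deleteEdges_adj]
  have hadj_out : ∀ w x : V, w ≠ v → w ≠ u₁ → w ≠ u₂ → w ≠ u₃ → (G₂.Adj w x ↔ G.Adj w x) := by
    intro w x hwv hw1 hw2 hw3
    rw [hG₂adj]
    constructor
    · exact fun h => h.1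
    · intro h
      refine ⟨h, fun hmem => ?_⟩
      rcases (hdel w x).mp hmem with (⟨hc, _⟩ | ⟨hc, _⟩) | (⟨hc, _⟩ | ⟨hc, _⟩) | (⟨hc, _⟩ | ⟨hc, _⟩)
      exacts [hwv hc, hw1 hc, hwv hc, hw2 hc, hwv hc, hw3 hc]
  have hadj_u : ∀ (u : V), (u = u₁ ∨ u = u₂ ∨ u = u₃) → ∀ x : V, x ≠ v →
      (G₂.Adj u x ↔ G.Adj u x) := by
    intro u hu x hxv
    rw [hG₂adj]
    constructor
    · exact fun h => h.1
    · intro h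
      refine ⟨h, fun hmem => ?_⟩
      have huv : u ≠ v := by rcases hu with rfl | rfl | rfl
                             exacts [hv1.symm, hv2.symm, hv3.symm]
      rcases (hdel u x).mp hmem with (⟨hc, hc'⟩ | ⟨hc, hc'⟩) | (⟨hc, hc'⟩ | ⟨hc, hc'⟩) |
        (⟨hc, hc'⟩ | ⟨hc, hc'⟩)
      exacts [huv hc, hxv hc', huv hc, hxv hc', huv hc, hxv hc']
  have hadj_v : ∀ x : V, x ≠ u₁ → x ≠ u₂ → x ≠ u₃ → (G₂.Adj v x ↔ G.Adj v x) := by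
    intro x hx1 hx2 hx3
    rw [hG₂adj]
    constructor
    · exact fun h => h.1
    · intro h
      refine ⟨h, fun hmem => ?_⟩
      rcases (hdel v x).mp hmem with (⟨_, hc'⟩ | ⟨hc, _⟩) | (⟨_, hc'⟩ | ⟨hc, _⟩) | (⟨_, hc'⟩ | ⟨hc, _⟩)
      exacts [hx1 hc', hv1 hc, hx2 hc', hv2 hc, hx3 hc', hv3 hc]
  have hnadj1 : ¬ G₂.Adj v u₁ := by
    rw [hG₂adj]; rintro ⟨-, hmem⟩
    exact hmem (Or.inl rfl)
  have hnadj2 : ¬ G₂.Adj v u₂ := by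
    rw [hG₂adj]; rintro ⟨-, hmem⟩
    exact hmem (Or.inr (Or.inl rfl))
  have hnadj3 : ¬ G₂.Adj v u₃ := by
    rw [hG₂adj]; rintro ⟨-, hmem⟩
    exact hmem (Or.inr (Or.inr rfl))
  -- neighbor sets
  have hNS_out : ∀ w : V, w ≠ v → w ≠ u₁ → w ≠ u₂ → w ≠ u₃ →
      G₂.neighborSet w = G.neighborSet w := by
    intro w hwv hw1 hw2 hw3
    ext x
    exact hadj_out w x hwv hw1 hw2 hw3
  have hNS_u : ∀ (u : V), (u = u₁ ∨ u = u₂ ∨ u = u₃) → G.Adj v u →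
      G.neighborSet u = insert v (G₂.neighborSet u) := by
    intro u hu hadj
    ext x
    simp only [Set.mem_insert_iff, SimpleGraph.mem_neighborSet]
    constructor
    · intro h
      by_cases hx : x = v
      · exact Or.inl hx
      · exact Or.inr ((hadj_u u hu x hx).mpr h)
    · rintro (rfl | h)
      · exact hadj.symm
      · exact ((hG₂adj u x).mp h).1
  have hNS_v : G.neighborSet v = insert u₁ (insert u₂ (insert u₃ (G₂.neighborSet v))) := by
    ext x
    simp only [Set.mem_insert_iff, SimpleGraph.mem_neighborSet]
    constructor
    · intro h
      by_cases hx1 : x = u₁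
      · exact Or.inl hx1
      by_cases hx2 : x = u₂
      · exact Or.inr (Or.inl hx2)
      by_cases hx3 : x = u₃
      · exact Or.inr (Or.inr (Or.inl hx3))
      · exact Or.inr (Or.inr (Or.inr ((hadj_v x hx1 hx2 hx3).mpr h)))
    · rintro (rfl | rfl | rfl | h)
      exacts [h1, h2, h3, ((hG₂adj v x).mp h).1]
  -- edge sets
  have hES : G₂.edgeSet = G.edgeSet \ ({s(v, u₁), s(v, u₂), s(v, u₃)} : Set (Sym2 V)) := by
    rw [hG₂def]; exact SimpleGraph.edgeSet_deleteEdges _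
  have he12 : s(v, u₁) ≠ s(v, u₂) := by
    intro h; rw [Sym2.eq_iff] at h
    rcases h with ⟨-, hc⟩ | ⟨hc, -⟩; exacts [h12 hc, hv2 hc]
  have he13 : s(v, u₁) ≠ s(v, u₃) := by
    intro h; rw [Sym2.eq_iff] at h
    rcases h with ⟨-, hc⟩ | ⟨hc, -⟩; exacts [h13 hc, hv3 hc]
  have he23 : s(v, u₂) ≠ s(v, u₃) := by
    intro h; rw [Sym2.eq_iff] at h
    rcases h with ⟨-, hc⟩ | ⟨hc, -⟩; exacts [h23 hc, hv3 hc]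
  have hdelsub : ({s(v, u₁), s(v, u₂), s(v, u₃)} : Set (Sym2 V)) ⊆ G.edgeSet := by
    intro e he
    rcases he with rfl | rfl | rfl
    exacts [h1, h2, h3]
  -- cardinalities of edge sets
  have hm3 : Nat.card G.edgeSet = Nat.card G₂.edgeSet + 3 := by
    rw [Nat.card_coe_set_eq, Nat.card_coe_set_eq, hES]
    have hdel3 : ({s(v, u₁), s(v, u₂), s(v, u₃)} : Set (Sym2 V)).ncard = 3 := by
      rw [Set.ncard_eq_three]
      exact ⟨_, _, _, he12, he13, he23, rfl⟩
    have hsub3 : 3 ≤ G.edgeSet.ncard := by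
      rw [← hdel3]
      exact Set.ncard_le_ncard hdelsub (Set.toFinite _)
    rw [Set.ncard_diff hdelsub (Set.toFinite _), hdel3]
    omega
  have hn4 : 4 ≤ n := by
    have hc4 : ({v, u₁, u₂, u₃} : Finset V).card = 4 := by
      rw [Finset.card_insert_of_notMem (by simp [hv1, hv2, hv3]),
        Finset.card_insert_of_notMem (by simp [h12, h13]),
        Finset.card_insert_of_notMem (by simp [h23]), Finset.card_singleton]
    calc 4 = ({v, u₁, u₂, u₃} : Finset V).card := hc4.symm
    _ ≤ Finset.univ.card := Finset.card_le_card (Finset.subset_univ _)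
    _ = n := by rw [Finset.card_univ]
  -- finset of edges of G₂ and the label pool A
  set EG₂ : Finset (Sym2 V) := (G₂.edgeSet).toFinite.toFinset with hEG₂def
  have hEG₂card : EG₂.card = Nat.card G₂.edgeSet := by
    rw [Nat.card_coe_set_eq, Set.ncard_eq_toFinset_card _ (Set.toFinite _)]
  set m := Nat.card G.edgeSet with hmdef
  set A : Finset ℕ := Finset.Icc 1 (m + k) \ (EG₂.image f') with hAdef
  have hAcard : k + 3 ≤ A.card := by
    have hs := Finset.le_card_sdiff (EG₂.image f') (Finset.Icc 1 (m + k))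
    have hIcc : (Finset.Icc 1 (m + k)).card = m + k := by rw [Nat.card_Icc]; omega
    have himg : (EG₂.image f').card ≤ Nat.card G₂.edgeSet := by
      rw [← hEG₂card]; exact Finset.card_image_le
    have hA' : A.card = (Finset.Icc 1 (m + k) \ (EG₂.image f')).card := by rw [hAdef]
    omega
  have hAmem : ∀ a ∈ A, 1 ≤ a ∧ a ≤ m + k ∧ a ∉ EG₂.image f' := by
    intro a ha
    rw [hAdef, Finset.mem_sdiff, Finset.mem_Icc] at ha
    exact ⟨ha.1.1, ha.1.2, ha.2⟩
  set P : V → ℤ := orientedSum G₂ D' f' with hPdef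
  set others : Finset V := Finset.univ.filter
      (fun w => ¬(w = v ∨ w = u₁ ∨ w = u₂ ∨ w = u₃) ∧ 1 ≤ Nat.card (G.neighborSet w))
    with hothersdef
  set F₀ : Finset ℤ := others.image P with hF₀def
  have hF₀card : F₀.card + 4 ≤ n := by
    have hi1 : F₀.card ≤ others.card := Finset.card_image_le
    have hi2 : others ⊆ Finset.univ \ {v, u₁, u₂, u₃} := by
      intro w hw
      rw [hothersdef, Finset.mem_filter] at hw
      rw [Finset.mem_sdiff]
      refine ⟨Finset.mem_univ _, ?_⟩
      simp only [Finset.mem_insert, Finset.mem_singleton]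
      exact hw.2.1
    have hc4 : ({v, u₁, u₂, u₃} : Finset V).card = 4 := by
      rw [Finset.card_insert_of_notMem (by simp [hv1, hv2, hv3]),
        Finset.card_insert_of_notMem (by simp [h12, h13]),
        Finset.card_insert_of_notMem (by simp [h23]), Finset.card_singleton]
    have hi3 := Finset.card_le_card hi2
    rw [Finset.card_sdiff_of_subset (Finset.subset_univ _), hc4, Finset.card_univ] at hi3
    omega
  -- the signed label sets
  have hsigned : ∀ u : V, 2 * A.card ≤
      (((A.image (fun a : ℕ => (a : ℤ))) ∪ (A.image (fun a : ℕ => -(a : ℤ)))).filter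
        (fun s => P u - s ∉ F₀)).card + F₀.card := by
    intro u
    set U := (A.image (fun a : ℕ => (a : ℤ))) ∪ (A.image (fun a : ℕ => -(a : ℤ))) with hUdef
    have hUcard : U.card = 2 * A.card := by
      rw [hUdef, Finset.card_union_of_disjoint, Finset.card_image_of_injective _
        (fun a b hab => by exact_mod_cast hab), Finset.card_image_of_injective _
        (fun a b hab => by omega)]
      · ring
      · rw [Finset.disjoint_left]
        intro s hs hs'
        obtain ⟨a, ha, rfl⟩ := Finset.mem_image.mp hs
        obtain ⟨b, hb, hba⟩ := Finset.mem_image.mp hs'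
        have ha1 := (hAmem a ha).1
        have hb1 := (hAmem b hb).1
        omega
    have hsplit := Finset.card_filter_add_card_filter_not
      (s := U) (p := fun s => P u - s ∉ F₀)
    have hneg : (U.filter (fun s => ¬ (P u - s ∉ F₀))).card ≤ F₀.card := by
      apply Finset.card_le_card_of_injOn (fun s => P u - s)
      · intro s hs
        rw [Finset.mem_coe, Finset.mem_filter, not_not] at hs
        exact Finset.mem_coe.mpr hs.2
      · intro a _ b _ hab
        dsimp only at hab
        omega
    omega
  set X := ((A.image (fun a : ℕ => (a : ℤ))) ∪ (A.image (fun a : ℕ => -(a : ℤ)))).filter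
      (fun s => P u₁ - s ∉ F₀) with hXdef
  set Y := ((A.image (fun a : ℕ => (a : ℤ))) ∪ (A.image (fun a : ℕ => -(a : ℤ)))).filter
      (fun s => P u₂ - s ∉ F₀) with hYdef
  set Z := ((A.image (fun a : ℕ => (a : ℤ))) ∪ (A.image (fun a : ℕ => -(a : ℤ)))).filter
      (fun s => P u₃ - s ∉ F₀) with hZdef
  set B : Finset ℤ := F₀.image (fun t => t - P v) with hBdef
  have hXcard : 2 * A.card ≤ X.card + F₀.card := hsigned u₁
  have hYcard : 2 * A.card ≤ Y.card + F₀.card := hsigned u₂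
  have hZcard : 2 * A.card ≤ Z.card + F₀.card := hsigned u₃
  have hBcard : B.card ≤ F₀.card := Finset.card_image_le
  have hXb : 4 ≤ X.card := by omega
  have hYb : 7 ≤ Y.card := by omega
  have hZb : 1 ≤ Z.card := by omega
  have hsumb : B.card + 30 ≤ X.card + Y.card + Z.card := by omega
  obtain ⟨x, hxX, y, hyY, z, hzZ, hxy, hxny, hd12, hxz, hxnz, hd13, hyz, hynz, hd23,
    hsB, hb1, hb2, hb3⟩ :=
    QOA.selection X Y Z B (P u₁ - P u₂) (P u₁ - P u₃) (P u₂ - P u₃)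
      (P u₁ - P v) (P u₂ - P v) (P u₃ - P v) hXb hYb hZb hsumb
  have hfrom : ∀ {u : V} {s : ℤ},
      s ∈ ((A.image (fun a : ℕ => (a : ℤ))) ∪ (A.image (fun a : ℕ => -(a : ℤ)))).filter
        (fun s => P u - s ∉ F₀) → s.natAbs ∈ A ∧ s ≠ 0 ∧ P u - s ∉ F₀ := by
    intro u s hs
    rw [Finset.mem_filter, Finset.mem_union] at hs
    obtain ⟨hu, hPu⟩ := hs
    rcases hu with hu | hu
    · obtain ⟨a, ha, rfl⟩ := Finset.mem_image.mp hu
      have ha1 := (hAmem a ha).1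
      exact ⟨by simpa using ha, by omega, hPu⟩
    · obtain ⟨a, ha, rfl⟩ := Finset.mem_image.mp hu
      have ha1 := (hAmem a ha).1
      refine ⟨by simpa [Int.natAbs_neg] using ha, by omega, hPu⟩
  have hxfacts := hfrom (by rw [hXdef] at hxX; exact hxX)
  have hyfacts := hfrom (by rw [hYdef] at hyY; exact hyY)
  have hzfacts := hfrom (by rw [hZdef] at hzZ; exact hzZ)
  obtain ⟨hxA, hx0, hxF⟩ := hxfacts
  obtain ⟨hyA, hy0, hyF⟩ := hyfacts
  obtain ⟨hzA, hz0, hzF⟩ := hzfacts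
  -- helper: not in deleted set gives three inequalities
  have hnot3 : ∀ c d : V, s(c, d) ∉ ({s(v, u₁), s(v, u₂), s(v, u₃)} : Set (Sym2 V)) →
      s(c, d) ≠ s(v, u₁) ∧ s(c, d) ≠ s(v, u₂) ∧ s(c, d) ≠ s(v, u₃) := by
    intro c d h
    refine ⟨fun he => h ?_, fun he => h ?_, fun he => h ?_⟩
    · rw [he]; exact Or.inl rfl
    · rw [he]; exact Or.inr (Or.inl rfl)
    · rw [he]; exact Or.inr (Or.inr rfl)
  -- the new orientation and labeling
  set a1 := x.natAbs with ha1def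
  set a2 := y.natAbs with ha2def
  set a3 := z.natAbs with ha3def
  set D : V → V → Prop := fun a b => D' a b ∨
      (a = u₁ ∧ b = v ∧ 0 < x) ∨ (a = v ∧ b = u₁ ∧ x < 0) ∨
      (a = u₂ ∧ b = v ∧ 0 < y) ∨ (a = v ∧ b = u₂ ∧ y < 0) ∨
      (a = u₃ ∧ b = v ∧ 0 < z) ∨ (a = v ∧ b = u₃ ∧ z < 0) with hDdef
  set f : Sym2 V → ℕ := fun e => if e = s(v, u₁) then a1 else if e = s(v, u₂) then a2
      else if e = s(v, u₃) then a3 else f' e with hfdef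
  clear_value D f
  have hnD'1 : ¬ D' u₁ v ∧ ¬ D' v u₁ :=
    ⟨fun h => hnadj1 ((hD'.1 v u₁).mpr (Or.inr h)),
     fun h => hnadj1 ((hD'.1 v u₁).mpr (Or.inl h))⟩
  have hnD'2 : ¬ D' u₂ v ∧ ¬ D' v u₂ :=
    ⟨fun h => hnadj2 ((hD'.1 v u₂).mpr (Or.inr h)),
     fun h => hnadj2 ((hD'.1 v u₂).mpr (Or.inl h))⟩
  have hnD'3 : ¬ D' u₃ v ∧ ¬ D' v u₃ :=
    ⟨fun h => hnadj3 ((hD'.1 v u₃).mpr (Or.inr h)),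
     fun h => hnadj3 ((hD'.1 v u₃).mpr (Or.inl h))⟩
  have hDu1v : D u₁ v ↔ 0 < x := by
    rw [hDdef]
    constructor
    · rintro (h | ⟨-, -, hs⟩ | ⟨hc, -, -⟩ | ⟨hc, -, -⟩ | ⟨hc, -, -⟩ | ⟨hc, -, -⟩ | ⟨hc, -, -⟩)
      exacts [absurd h hnD'1.1, hs, absurd hc (Ne.symm hv1), absurd hc h12,
        absurd hc (Ne.symm hv1), absurd hc h13, absurd hc (Ne.symm hv1)]
    · intro hs; exact Or.inr (Or.inl ⟨rfl, rfl, hs⟩)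
  have hDvu1 : D v u₁ ↔ x < 0 := by
    rw [hDdef]
    constructor
    · rintro (h | ⟨hc, -, -⟩ | ⟨-, -, hs⟩ | ⟨hc, -, -⟩ | ⟨-, hc, -⟩ | ⟨hc, -, -⟩ | ⟨-, hc, -⟩)
      exacts [absurd h hnD'1.2, absurd hc hv1, hs, absurd hc hv2, absurd hc h12,
        absurd hc hv3, absurd hc h13]
    · intro hs; exact Or.inr (Or.inr (Or.inl ⟨rfl, rfl, hs⟩))
  have hDu2v : D u₂ v ↔ 0 < y := by
    rw [hDdef]
    constructor
    · rintro (h | ⟨hc, -, -⟩ | ⟨hc, -, -⟩ | ⟨-, -, hs⟩ | ⟨hc, -, -⟩ | ⟨hc, -, -⟩ | ⟨hc, -, -⟩)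
      exacts [absurd h hnD'2.1, absurd hc (Ne.symm h12), absurd hc (Ne.symm hv2), hs,
        absurd hc (Ne.symm hv2), absurd hc h23, absurd hc (Ne.symm hv2)]
    · intro hs; exact Or.inr (Or.inr (Or.inr (Or.inl ⟨rfl, rfl, hs⟩)))
  have hDvu2 : D v u₂ ↔ y < 0 := by
    rw [hDdef]
    constructor
    · rintro (h | ⟨hc, -, -⟩ | ⟨-, hc, -⟩ | ⟨hc, -, -⟩ | ⟨-, -, hs⟩ | ⟨hc, -, -⟩ | ⟨-, hc, -⟩)
      exacts [absurd h hnD'2.2, absurd hc hv1, absurd hc (Ne.symm h12), absurd hc hv2, hs,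
        absurd hc hv3, absurd hc h23]
    · intro hs; exact Or.inr (Or.inr (Or.inr (Or.inr (Or.inl ⟨rfl, rfl, hs⟩))))
  have hDu3v : D u₃ v ↔ 0 < z := by
    rw [hDdef]
    constructor
    · rintro (h | ⟨hc, -, -⟩ | ⟨hc, -, -⟩ | ⟨hc, -, -⟩ | ⟨hc, -, -⟩ | ⟨-, -, hs⟩ | ⟨hc, -, -⟩)
      exacts [absurd h hnD'3.1, absurd hc (Ne.symm h13), absurd hc (Ne.symm hv3),
        absurd hc (Ne.symm h23), absurd hc (Ne.symm hv3), hs, absurd hc (Ne.symm hv3)]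
    · intro hs; exact Or.inr (Or.inr (Or.inr (Or.inr (Or.inr (Or.inl ⟨rfl, rfl, hs⟩)))))
  have hDvu3 : D v u₃ ↔ z < 0 := by
    rw [hDdef]
    constructor
    · rintro (h | ⟨hc, -, -⟩ | ⟨-, hc, -⟩ | ⟨hc, -, -⟩ | ⟨-, hc, -⟩ | ⟨hc, -, -⟩ | ⟨-, -, hs⟩)
      exacts [absurd h hnD'3.2, absurd hc hv1, absurd hc (Ne.symm h13), absurd hc hv2,
        absurd hc (Ne.symm h23), absurd hc hv3, hs]
    · intro hs; exact Or.inr (Or.inr (Or.inr (Or.inr (Or.inr (Or.inr ⟨rfl, rfl, hs⟩)))))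
  have hDout2 : ∀ a b : V, s(a, b) ∉ ({s(v, u₁), s(v, u₂), s(v, u₃)} : Set (Sym2 V)) →
      (D a b ↔ D' a b) := by
    intro a b hmem
    rw [hDdef]
    constructor
    · rintro (h | ⟨e1, e2, -⟩ | ⟨e1, e2, -⟩ | ⟨e1, e2, -⟩ | ⟨e1, e2, -⟩ |
        ⟨e1, e2, -⟩ | ⟨e1, e2, -⟩)
      · exact h
      · exact absurd ((hdel a b).mpr (Or.inl (Or.inr ⟨e1, e2⟩))) hmem
      · exact absurd ((hdel a b).mpr (Or.inl (Or.inl ⟨e1, e2⟩))) hmem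
      · exact absurd ((hdel a b).mpr (Or.inr (Or.inl (Or.inr ⟨e1, e2⟩)))) hmem
      · exact absurd ((hdel a b).mpr (Or.inr (Or.inl (Or.inl ⟨e1, e2⟩)))) hmem
      · exact absurd ((hdel a b).mpr (Or.inr (Or.inr (Or.inr ⟨e1, e2⟩)))) hmem
      · exact absurd ((hdel a b).mpr (Or.inr (Or.inr (Or.inl ⟨e1, e2⟩)))) hmem
    · exact Or.inl
  have hxtri : x < 0 ∨ 0 < x := by omega
  have hytri : y < 0 ∨ 0 < y := by omega
  have hztri : z < 0 ∨ 0 < z := by omega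
  have hOrient : IsOrientation G D := by
    constructor
    · intro a b
      by_cases hmem : s(a, b) ∈ ({s(v, u₁), s(v, u₂), s(v, u₃)} : Set (Sym2 V))
      · rcases (hdel a b).mp hmem with (⟨rfl, rfl⟩ | ⟨rfl, rfl⟩) | (⟨rfl, rfl⟩ | ⟨rfl, rfl⟩) |
          (⟨rfl, rfl⟩ | ⟨rfl, rfl⟩)
        · refine iff_of_true h1 ?_
          rcases hxtri with h | h
          exacts [Or.inl (hDvu1.mpr h), Or.inr (hDu1v.mpr h)]
        · refine iff_of_true h1.symm ?_
          rcases hxtri with h | h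
          exacts [Or.inr (hDvu1.mpr h), Or.inl (hDu1v.mpr h)]
        · refine iff_of_true h2 ?_
          rcases hytri with h | h
          exacts [Or.inl (hDvu2.mpr h), Or.inr (hDu2v.mpr h)]
        · refine iff_of_true h2.symm ?_
          rcases hytri with h | h
          exacts [Or.inr (hDvu2.mpr h), Or.inl (hDu2v.mpr h)]
        · refine iff_of_true h3 ?_
          rcases hztri with h | h
          exacts [Or.inl (hDvu3.mpr h), Or.inr (hDu3v.mpr h)]
        · refine iff_of_true h3.symm ?_
          rcases hztri with h | h
          exacts [Or.inr (hDvu3.mpr h), Or.inl (hDu3v.mpr h)]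
      · have hmem' : s(b, a) ∉ ({s(v, u₁), s(v, u₂), s(v, u₃)} : Set (Sym2 V)) := by
          rw [show s(b, a) = s(a, b) from Sym2.eq_swap]; exact hmem
        rw [hDout2 a b hmem, hDout2 b a hmem']
        constructor
        · intro h
          exact (hD'.1 a b).mp ((hG₂adj a b).mpr ⟨h, hmem⟩)
        · intro h
          exact ((hG₂adj a b).mp ((hD'.1 a b).mpr h)).1
    · rintro a b ⟨hab, hba⟩
      by_cases hmem : s(a, b) ∈ ({s(v, u₁), s(v, u₂), s(v, u₃)} : Set (Sym2 V))
      · rcases (hdel a b).mp hmem with (⟨rfl, rfl⟩ | ⟨rfl, rfl⟩) | (⟨rfl, rfl⟩ | ⟨rfl, rfl⟩) |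
          (⟨rfl, rfl⟩ | ⟨rfl, rfl⟩)
        · have q1 := hDvu1.mp hab; have q2 := hDu1v.mp hba; omega
        · have q1 := hDu1v.mp hab; have q2 := hDvu1.mp hba; omega
        · have q1 := hDvu2.mp hab; have q2 := hDu2v.mp hba; omega
        · have q1 := hDu2v.mp hab; have q2 := hDvu2.mp hba; omega
        · have q1 := hDvu3.mp hab; have q2 := hDu3v.mp hba; omega
        · have q1 := hDu3v.mp hab; have q2 := hDvu3.mp hba; omega
      · have hmem' : s(b, a) ∉ ({s(v, u₁), s(v, u₂), s(v, u₃)} : Set (Sym2 V)) := by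
          rw [show s(b, a) = s(a, b) from Sym2.eq_swap]; exact hmem
        exact hD'.2 a b ⟨(hDout2 a b hmem).mp hab, (hDout2 b a hmem').mp hba⟩
  -- values of f
  have hf1 : f s(v, u₁) = a1 := by rw [hfdef]; dsimp only; rw [if_pos rfl]
  have hf2 : f s(v, u₂) = a2 := by
    rw [hfdef]; dsimp only; rw [if_neg (Ne.symm he12), if_pos rfl]
  have hf3 : f s(v, u₃) = a3 := by
    rw [hfdef]; dsimp only; rw [if_neg (Ne.symm he13), if_neg (Ne.symm he23), if_pos rfl]
  have hfold : ∀ e : Sym2 V, e ≠ s(v, u₁) → e ≠ s(v, u₂) → e ≠ s(v, u₃) → f e = f' e := by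
    intro e q1 q2 q3
    rw [hfdef]; dsimp only; rw [if_neg q1, if_neg q2, if_neg q3]
  -- oriented sums of untouched vertices
  have hsum_out : ∀ w : V, w ≠ v → w ≠ u₁ → w ≠ u₂ → w ≠ u₃ →
      orientedSum G D f w = P w := by
    intro w hwv hw1 hw2 hw3
    rw [hPdef]
    unfold orientedSum
    have hNeq : (G.neighborSet w).toFinite.toFinset = (G₂.neighborSet w).toFinite.toFinset := by
      ext xx
      simp only [Set.Finite.mem_toFinset]
      rw [hNS_out w hwv hw1 hw2 hw3]
    rw [hNeq]
    apply Finset.sum_congr rfl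
    intro xx hxx
    rw [Set.Finite.mem_toFinset] at hxx
    have hxxmem : s(xx, w) ∉ ({s(v, u₁), s(v, u₂), s(v, u₃)} : Set (Sym2 V)) := by
      intro hc
      rcases (hdel xx w).mp hc with (⟨-, e⟩ | ⟨-, e⟩) | (⟨-, e⟩ | ⟨-, e⟩) | (⟨-, e⟩ | ⟨-, e⟩)
      exacts [hw1 e, hwv e, hw2 e, hwv e, hw3 e, hwv e]
    have hswmem : s(w, xx) ∉ ({s(v, u₁), s(v, u₂), s(v, u₃)} : Set (Sym2 V)) := by
      rw [show s(w, xx) = s(xx, w) from Sym2.eq_swap]; exact hxxmem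
    obtain ⟨q1, q2, q3⟩ := hnot3 w xx hswmem
    rw [hfold _ q1 q2 q3]
    exact if_congr (hDout2 xx w hxxmem) rfl rfl
  -- oriented sums at u₁, u₂, u₃
  have hsum_u : ∀ (u : V), (u = u₁ ∨ u = u₂ ∨ u = u₃) → G.Adj v u → ¬ G₂.Adj v u →
      ∀ s : ℤ, s ≠ 0 → ((f s(u, v) : ℤ) = |s|) → (D v u ↔ s < 0) →
      orientedSum G D f u = P u - s := by
    intro u hu hadjvu hnadjvu s hs0 hfval hDvu
    unfold orientedSum
    have hNeq : (G.neighborSet u).toFinite.toFinset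
        = insert v ((G₂.neighborSet u).toFinite.toFinset) := by
      ext xx
      simp only [Set.Finite.mem_toFinset, Finset.mem_insert]
      rw [hNS_u u hu hadjvu]
      exact Set.mem_insert_iff
    have hvnot : v ∉ (G₂.neighborSet u).toFinite.toFinset := by
      simp only [Set.Finite.mem_toFinset, SimpleGraph.mem_neighborSet]
      exact fun hc => hnadjvu hc.symm
    rw [hNeq, Finset.sum_insert hvnot]
    have hterm : (if D v u then (f s(u, v) : ℤ) else -(f s(u, v) : ℤ)) = -s := by
      rcases (by omega : s < 0 ∨ 0 < s) with h | h
      · rw [if_pos (hDvu.mpr h), hfval, abs_of_neg h]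
      · rw [if_neg (by rw [hDvu]; omega), hfval, abs_of_pos h]
    have hrest : (∑ xx ∈ (G₂.neighborSet u).toFinite.toFinset,
        if D xx u then (f s(u, xx) : ℤ) else -(f s(u, xx) : ℤ)) = P u := by
      rw [hPdef]; unfold orientedSum
      apply Finset.sum_congr rfl
      intro xx hxx
      rw [Set.Finite.mem_toFinset] at hxx
      have hxxv : xx ≠ v := by
        intro hc
        exact hnadjvu (SimpleGraph.Adj.symm (hc ▸ hxx))
      have hnuv : u ≠ v := hadjvu.ne'
      have hmem1 : s(xx, u) ∉ ({s(v, u₁), s(v, u₂), s(v, u₃)} : Set (Sym2 V)) := by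
        intro hc
        rcases (hdel xx u).mp hc with (⟨e1, -⟩ | ⟨-, e2⟩) | (⟨e1, -⟩ | ⟨-, e2⟩) | (⟨e1, -⟩ | ⟨-, e2⟩)
        exacts [hxxv e1, hnuv e2, hxxv e1, hnuv e2, hxxv e1, hnuv e2]
      have hmem2 : s(u, xx) ∉ ({s(v, u₁), s(v, u₂), s(v, u₃)} : Set (Sym2 V)) := by
        rw [show s(u, xx) = s(xx, u) from Sym2.eq_swap]; exact hmem1
      obtain ⟨q1, q2, q3⟩ := hnot3 u xx hmem2
      rw [hfold _ q1 q2 q3]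
      exact if_congr (hDout2 xx u hmem1) rfl rfl
    rw [hterm, hrest]
    ring
  have hau1 : (a1 : ℤ) = |x| := by rw [ha1def]; exact (Int.abs_eq_natAbs x).symm
  have hau2 : (a2 : ℤ) = |y| := by rw [ha2def]; exact (Int.abs_eq_natAbs y).symm
  have hau3 : (a3 : ℤ) = |z| := by rw [ha3def]; exact (Int.abs_eq_natAbs z).symm
  have hsum_u1 : orientedSum G D f u₁ = P u₁ - x := by
    apply hsum_u u₁ (Or.inl rfl) h1 hnadj1 x hx0 _ hDvu1
    rw [show s(u₁, v) = s(v, u₁) from Sym2.eq_swap, hf1]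
    exact hau1
  have hsum_u2 : orientedSum G D f u₂ = P u₂ - y := by
    apply hsum_u u₂ (Or.inr (Or.inl rfl)) h2 hnadj2 y hy0 _ hDvu2
    rw [show s(u₂, v) = s(v, u₂) from Sym2.eq_swap, hf2]
    exact hau2
  have hsum_u3 : orientedSum G D f u₃ = P u₃ - z := by
    apply hsum_u u₃ (Or.inr (Or.inr rfl)) h3 hnadj3 z hz0 _ hDvu3
    rw [show s(u₃, v) = s(v, u₃) from Sym2.eq_swap, hf3]
    exact hau3
  -- oriented sum at v
  have hsum_v : orientedSum G D f v = P v + (x + y + z) := by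
    unfold orientedSum
    have hNeq : (G.neighborSet v).toFinite.toFinset
        = insert u₁ (insert u₂ (insert u₃ ((G₂.neighborSet v).toFinite.toFinset))) := by
      ext xx
      simp only [Set.Finite.mem_toFinset, Finset.mem_insert]
      rw [hNS_v]
      simp only [Set.mem_insert_iff, Set.Finite.mem_toFinset]
    have hnm3 : u₃ ∉ (G₂.neighborSet v).toFinite.toFinset := by
      simp only [Set.Finite.mem_toFinset, SimpleGraph.mem_neighborSet]
      exact hnadj3
    have hnm2 : u₂ ∉ insert u₃ ((G₂.neighborSet v).toFinite.toFinset) := by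
      simp only [Finset.mem_insert, Set.Finite.mem_toFinset, SimpleGraph.mem_neighborSet]
      rintro (hc | hc)
      exacts [h23 hc, hnadj2 hc]
    have hnm1 : u₁ ∉ insert u₂ (insert u₃ ((G₂.neighborSet v).toFinite.toFinset)) := by
      simp only [Finset.mem_insert, Set.Finite.mem_toFinset, SimpleGraph.mem_neighborSet]
      rintro (hc | hc | hc)
      exacts [h12 hc, h13 hc, hnadj1 hc]
    rw [hNeq, Finset.sum_insert hnm1, Finset.sum_insert hnm2, Finset.sum_insert hnm3]
    have ht1 : (if D u₁ v then (f s(v, u₁) : ℤ) else -(f s(v, u₁) : ℤ)) = x := by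
      rw [hf1]
      rcases hxtri with h | h
      · rw [if_neg (by rw [hDu1v]; omega), hau1, abs_of_neg h]; ring
      · rw [if_pos (hDu1v.mpr h), hau1, abs_of_pos h]
    have ht2 : (if D u₂ v then (f s(v, u₂) : ℤ) else -(f s(v, u₂) : ℤ)) = y := by
      rw [hf2]
      rcases hytri with h | h
      · rw [if_neg (by rw [hDu2v]; omega), hau2, abs_of_neg h]; ring
      · rw [if_pos (hDu2v.mpr h), hau2, abs_of_pos h]
    have ht3 : (if D u₃ v then (f s(v, u₃) : ℤ) else -(f s(v, u₃) : ℤ)) = z := by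
      rw [hf3]
      rcases hztri with h | h
      · rw [if_neg (by rw [hDu3v]; omega), hau3, abs_of_neg h]; ring
      · rw [if_pos (hDu3v.mpr h), hau3, abs_of_pos h]
    have hrest : (∑ xx ∈ (G₂.neighborSet v).toFinite.toFinset,
        if D xx v then (f s(v, xx) : ℤ) else -(f s(v, xx) : ℤ)) = P v := by
      rw [hPdef]; unfold orientedSum
      apply Finset.sum_congr rfl
      intro xx hxx
      rw [Set.Finite.mem_toFinset] at hxx
      have hxx1 : xx ≠ u₁ := fun hc => hnadj1 (hc ▸ hxx)
      have hxx2 : xx ≠ u₂ := fun hc => hnadj2 (hc ▸ hxx)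
      have hxx3 : xx ≠ u₃ := fun hc => hnadj3 (hc ▸ hxx)
      have hmem1 : s(xx, v) ∉ ({s(v, u₁), s(v, u₂), s(v, u₃)} : Set (Sym2 V)) := by
        intro hc
        rcases (hdel xx v).mp hc with (⟨-, e2⟩ | ⟨e1, -⟩) | (⟨-, e2⟩ | ⟨e1, -⟩) | (⟨-, e2⟩ | ⟨e1, -⟩)
        exacts [hv1 e2, hxx1 e1, hv2 e2, hxx2 e1, hv3 e2, hxx3 e1]
      have hmem2 : s(v, xx) ∉ ({s(v, u₁), s(v, u₂), s(v, u₃)} : Set (Sym2 V)) := by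
        rw [show s(v, xx) = s(xx, v) from Sym2.eq_swap]; exact hmem1
      obtain ⟨q1, q2, q3⟩ := hnot3 v xx hmem2
      rw [hfold _ q1 q2 q3]
      exact if_congr (hDout2 xx v hmem1) rfl rfl
    rw [ht1, ht2, ht3, hrest]
    ring
  -- inequality facts among the new sums
  have iv1 : P v + (x + y + z) ≠ P u₁ - x := fun h => hb1 (by omega)
  have iv2 : P v + (x + y + z) ≠ P u₂ - y := fun h => hb2 (by omega)
  have iv3 : P v + (x + y + z) ≠ P u₃ - z := fun h => hb3 (by omega)
  have i12 : P u₁ - x ≠ P u₂ - y := fun h => hd12 (by omega)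
  have i13 : P u₁ - x ≠ P u₃ - z := fun h => hd13 (by omega)
  have i23 : P u₂ - y ≠ P u₃ - z := fun h => hd23 (by omega)
  have hPmem : ∀ w : V, w ≠ v → w ≠ u₁ → w ≠ u₂ → w ≠ u₃ →
      1 ≤ Nat.card (G.neighborSet w) → P w ∈ F₀ := by
    intro w q0 q1 q2 q3 hdw
    rw [hF₀def]
    refine Finset.mem_image_of_mem P ?_
    rw [hothersdef, Finset.mem_filter]
    refine ⟨Finset.mem_univ _, ⟨fun hc => ?_, hdw⟩⟩
    rcases hc with hc | hc | hc | hc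
    exacts [q0 hc, q1 hc, q2 hc, q3 hc]
  have ivF : ∀ t ∈ F₀, P v + (x + y + z) ≠ t := by
    intro t ht h
    refine hsB ?_
    rw [hBdef]
    exact Finset.mem_image.mpr ⟨t, ht, by omega⟩
  have i1F : ∀ t ∈ F₀, P u₁ - x ≠ t := fun t ht h => hxF (by rwa [h])
  have i2F : ∀ t ∈ F₀, P u₂ - y ≠ t := fun t ht h => hyF (by rwa [h])
  have i3F : ∀ t ∈ F₀, P u₃ - z ≠ t := fun t ht h => hzF (by rwa [h])
  have hdeg_eq : ∀ w : V, w ≠ v → w ≠ u₁ → w ≠ u₂ → w ≠ u₃ →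
      Nat.card (G₂.neighborSet w) = Nat.card (G.neighborSet w) := by
    intro w q0 q1 q2 q3
    rw [hNS_out w q0 q1 q2 q3]
  -- assemble
  refine ⟨D, hOrient, f, ?_, ?_, ?_⟩
  · -- labels in range
    intro e he
    by_cases q1 : e = s(v, u₁)
    · subst q1
      rw [hf1, Finset.mem_Icc]
      have hq := hAmem a1 hxA
      exact ⟨hq.1, hq.2.1⟩
    by_cases q2 : e = s(v, u₂)
    · subst q2
      rw [hf2, Finset.mem_Icc]
      have hq := hAmem a2 hyA
      exact ⟨hq.1, hq.2.1⟩
    by_cases q3 : e = s(v, u₃)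
    · subst q3
      rw [hf3, Finset.mem_Icc]
      have hq := hAmem a3 hzA
      exact ⟨hq.1, hq.2.1⟩
    · have he2 : e ∈ G₂.edgeSet := by
        rw [hES]
        refine ⟨he, fun hc => ?_⟩
        rcases hc with hc | hc | hc
        exacts [q1 hc, q2 hc, q3 hc]
      rw [hfold e q1 q2 q3]
      have hq := hf'range e he2
      rw [Finset.mem_Icc] at hq ⊢
      omega
  · -- injectivity
    intro ea hea eb heb hne
    have ha12' : a1 ≠ a2 := by
      intro h
      rw [ha1def, ha2def] at h
      rcases Int.natAbs_eq_natAbs_iff.mp h with h' | h'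
      exacts [hxy h', hxny h']
    have ha13' : a1 ≠ a3 := by
      intro h
      rw [ha1def, ha3def] at h
      rcases Int.natAbs_eq_natAbs_iff.mp h with h' | h'
      exacts [hxz h', hxnz h']
    have ha23' : a2 ≠ a3 := by
      intro h
      rw [ha2def, ha3def] at h
      rcases Int.natAbs_eq_natAbs_iff.mp h with h' | h'
      exacts [hyz h', hynz h']
    have hnotim : ∀ a : ℕ, a ∈ A → ∀ e ∈ G₂.edgeSet, f' e ≠ a := by
      intro a ha e he hcontra
      refine (hAmem a ha).2.2 (Finset.mem_image.mpr ⟨e, ?_, hcontra⟩)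
      rw [hEG₂def, Set.Finite.mem_toFinset]
      exact he
    have hvalf : ∀ e : Sym2 V, e ∈ G.edgeSet →
        e = s(v, u₁) ∨ e = s(v, u₂) ∨ e = s(v, u₃) ∨ (f e = f' e ∧ e ∈ G₂.edgeSet) := by
      intro e he
      by_cases q1 : e = s(v, u₁)
      · exact Or.inl q1
      by_cases q2 : e = s(v, u₂)
      · exact Or.inr (Or.inl q2)
      by_cases q3 : e = s(v, u₃)
      · exact Or.inr (Or.inr (Or.inl q3))
      · refine Or.inr (Or.inr (Or.inr ⟨hfold e q1 q2 q3, ?_⟩))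
        rw [hES]
        refine ⟨he, fun hc => ?_⟩
        rcases hc with hc | hc | hc
        exacts [q1 hc, q2 hc, q3 hc]
    rcases hvalf ea hea with rfl | rfl | rfl | ⟨hfa, hea2⟩ <;>
      rcases hvalf eb heb with rfl | rfl | rfl | ⟨hfb, heb2⟩
    · exact absurd rfl hne
    · rw [hf1, hf2]; exact ha12'
    · rw [hf1, hf3]; exact ha13'
    · rw [hf1, hfb]; exact fun h => hnotim a1 hxA eb heb2 h.symm
    · rw [hf2, hf1]; exact ha12'.symm
    · exact absurd rfl hne
    · rw [hf2, hf3]; exact ha23'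
    · rw [hf2, hfb]; exact fun h => hnotim a2 hyA eb heb2 h.symm
    · rw [hf3, hf1]; exact ha13'.symm
    · rw [hf3, hf2]; exact ha23'.symm
    · exact absurd rfl hne
    · rw [hf3, hfb]; exact fun h => hnotim a3 hzA eb heb2 h.symm
    · rw [hfa, hf1]; exact fun h => hnotim a1 hxA ea hea2 h
    · rw [hfa, hf2]; exact fun h => hnotim a2 hyA ea hea2 h
    · rw [hfa, hf3]; exact fun h => hnotim a3 hzA ea hea2 h
    · rw [hfa, hfb]; exact hf'inj ea hea2 eb heb2 hne
  · -- pairwise distinct oriented sums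
    intro p q hpq hdp hdq
    by_cases hpv : p = v
    · rw [hpv, hsum_v]
      by_cases hq1 : q = u₁
      · rw [hq1, hsum_u1]; exact iv1
      by_cases hq2 : q = u₂
      · rw [hq2, hsum_u2]; exact iv2
      by_cases hq3 : q = u₃
      · rw [hq3, hsum_u3]; exact iv3
      · have hqv : q ≠ v := fun hc => hpq (hpv.trans hc.symm)
        rw [hsum_out q hqv hq1 hq2 hq3]
        exact ivF (P q) (hPmem q hqv hq1 hq2 hq3 hdq)
    by_cases hp1 : p = u₁
    · rw [hp1, hsum_u1]
      by_cases hqv : q = v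
      · rw [hqv, hsum_v]; exact iv1.symm
      by_cases hq1 : q = u₁
      · exact absurd (hp1.trans hq1.symm) hpq
      by_cases hq2 : q = u₂
      · rw [hq2, hsum_u2]; exact i12
      by_cases hq3 : q = u₃
      · rw [hq3, hsum_u3]; exact i13
      · rw [hsum_out q hqv hq1 hq2 hq3]
        exact i1F (P q) (hPmem q hqv hq1 hq2 hq3 hdq)
    by_cases hp2 : p = u₂
    · rw [hp2, hsum_u2]
      by_cases hqv : q = v
      · rw [hqv, hsum_v]; exact iv2.symm
      by_cases hq1 : q = u₁
      · rw [hq1, hsum_u1]; exact i12.symm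
      by_cases hq2 : q = u₂
      · exact absurd (hp2.trans hq2.symm) hpq
      by_cases hq3 : q = u₃
      · rw [hq3, hsum_u3]; exact i23
      · rw [hsum_out q hqv hq1 hq2 hq3]
        exact i2F (P q) (hPmem q hqv hq1 hq2 hq3 hdq)
    by_cases hp3 : p = u₃
    · rw [hp3, hsum_u3]
      by_cases hqv : q = v
      · rw [hqv, hsum_v]; exact iv3.symm
      by_cases hq1 : q = u₁
      · rw [hq1, hsum_u1]; exact i13.symm
      by_cases hq2 : q = u₂
      · rw [hq2, hsum_u2]; exact i23.symm
      by_cases hq3 : q = u₃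
      · exact absurd (hp3.trans hq3.symm) hpq
      · rw [hsum_out q hqv hq1 hq2 hq3]
        exact i3F (P q) (hPmem q hqv hq1 hq2 hq3 hdq)
    · rw [hsum_out p hpv hp1 hp2 hp3]
      by_cases hqv : q = v
      · rw [hqv, hsum_v]
        exact fun h => (ivF (P p) (hPmem p hpv hp1 hp2 hp3 hdp)) h.symm
      by_cases hq1 : q = u₁
      · rw [hq1, hsum_u1]
        exact fun h => (i1F (P p) (hPmem p hpv hp1 hp2 hp3 hdp)) h.symm
      by_cases hq2 : q = u₂
      · rw [hq2, hsum_u2]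
        exact fun h => (i2F (P p) (hPmem p hpv hp1 hp2 hp3 hdp)) h.symm
      by_cases hq3 : q = u₃
      · rw [hq3, hsum_u3]
        exact fun h => (i3F (P p) (hPmem p hpv hp1 hp2 hp3 hdp)) h.symm
      · rw [hsum_out q hqv hq1 hq2 hq3]
        have d1 : 1 ≤ Nat.card (G₂.neighborSet p) := by
          rw [hdeg_eq p hpv hp1 hp2 hp3]; exact hdp
        have d2 : 1 ≤ Nat.card (G₂.neighborSet q) := by
          rw [hdeg_eq q hqv hq1 hq2 hq3]; exact hdq
        exact hf'sums p q hpq d1 d2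
end

section
/- Let n ≥ 4 be an integer and consider the polynomial h(x_1, x_2, x_3) = x_1^{n−4} x_2^{n−4} x_3^{n−4} (x_1 + x_2 + x_3)^{n−4} · ∏_{1 ≤ i < j ≤ 3} (x_i − x_j)^2 (x_i + x_j) in three variables over ℝ. Set b = ⌊(4n−7)/3⌋, c = b − 1, and a = 4n − 7 − b − c. Then the coefficient of the monomial x_1^a x_2^b x_3^c in h is nonzero. -/
open MvPolynomial Finset

noncomputable def e3 (a b c : ℕ) : Fin 3 →₀ ℕ := Finsupp.equivFunOnFinite.symm ![a, b, c]

lemma e3_coe (a b c : ℕ) : ⇑(e3 a b c) = ![a, b, c] := rfl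

lemma e3_apply (a b c : ℕ) (i : Fin 3) : e3 a b c i = ![a, b, c] i := rfl

lemma e3_add (a b c d e f : ℕ) : e3 a b c + e3 d e f = e3 (a+d) (b+e) (c+f) := by
  ext i; fin_cases i <;> simp [e3_apply, Finsupp.add_apply]

lemma e3_sub (a b c d e f : ℕ) : e3 a b c - e3 d e f = e3 (a-d) (b-e) (c-f) := by
  ext i; fin_cases i <;> simp [e3_apply, Finsupp.tsub_apply]

lemma e3_le {a b c d e f : ℕ} : e3 a b c ≤ e3 d e f ↔ (a ≤ d ∧ b ≤ e ∧ c ≤ f) := by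
  rw [Finsupp.le_def]
  constructor
  · intro h; exact ⟨h 0, h 1, h 2⟩
  · rintro ⟨h1, h2, h3⟩ i; fin_cases i <;> assumption

lemma single_eq_e3 (a b c : ℕ) :
    Finsupp.single (0 : Fin 3) a + Finsupp.single 1 b + Finsupp.single 2 c = e3 a b c := by
  ext i; fin_cases i <;> simp [e3_apply]

lemma mono_eq (a b c : ℕ) : (X 0 : MvPolynomial (Fin 3) ℝ)^a * X 1^b * X 2^c = monomial (e3 a b c) 1 := by
  rw [X_pow_eq_monomial, X_pow_eq_monomial, X_pow_eq_monomial, monomial_mul, monomial_mul,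
    one_mul, one_mul, single_eq_e3]

lemma coeff_trinom (m : ℕ) (ν : Fin 3 →₀ ℕ) :
    coeff ν ((X 0 + X 1 + X 2 : MvPolynomial (Fin 3) ℝ) ^ m)
      = if ν 0 + ν 1 + ν 2 = m then (Nat.multinomial Finset.univ ⇑ν : ℝ) else 0 := by
  have hX : (X 0 + X 1 + X 2 : MvPolynomial (Fin 3) ℝ) = ∑ i : Fin 3, X i := by
    rw [Fin.sum_univ_three]
  have hmono : ∀ k : Fin 3 → ℕ,
      (∏ i : Fin 3, (X i : MvPolynomial (Fin 3) ℝ) ^ k i)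
        = monomial (Finsupp.equivFunOnFinite.symm k) 1 := by
    intro k
    rw [← prod_X_pow_eq_monomial]
    refine (Finset.prod_subset (Finset.subset_univ _) ?_).symm
    intro i _ hi
    have h0 : Finsupp.equivFunOnFinite.symm k i = 0 := by
      simpa using Finsupp.notMem_support_iff.mp hi
    have hk : k i = 0 := h0
    rw [hk, pow_zero]
  rw [hX, Finset.sum_pow_eq_sum_piAntidiag, coeff_sum]
  simp only [hmono, ← C_eq_coe_nat, coeff_C_mul, coeff_monomial]
  have hcond : ∀ k : Fin 3 → ℕ,
      (Finsupp.equivFunOnFinite.symm k = ν) ↔ k = ⇑ν := by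
    intro k
    rw [Equiv.symm_apply_eq]
    exact Iff.rfl
  simp only [hcond]
  rw [show (∑ x ∈ univ.piAntidiag m, (Nat.multinomial univ x : ℝ) * if x = ⇑ν then 1 else 0)
      = ∑ x ∈ univ.piAntidiag m, if x = ⇑ν then (Nat.multinomial univ x : ℝ) else 0 from
    Finset.sum_congr rfl (fun x _ => by split_ifs <;> simp)]
  rw [Finset.sum_ite_eq' (piAntidiag univ m) (⇑ν) (fun k => ((Nat.multinomial univ k : ℝ)))]
  simp only [mem_piAntidiag]
  rw [Fin.sum_univ_three]
  simp

lemma natkey (m p q r a0 a1 a2 : ℕ) (hs : p + q + r = m + 9) (h9 : a0 + a1 + a2 = 9)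
    (h1 : a0 ≤ p) (h2 : a1 ≤ q) (h3 : a2 ≤ r) :
    (Nat.multinomial Finset.univ ![p - a0, q - a1, r - a2]) * (p.factorial * q.factorial * r.factorial)
      = m.factorial * (p.descFactorial a0 * q.descFactorial a1 * r.descFactorial a2) := by
  have e1 := Nat.factorial_mul_descFactorial h1
  have e2 := Nat.factorial_mul_descFactorial h2
  have e3 := Nat.factorial_mul_descFactorial h3
  have spec := Nat.multinomial_spec Finset.univ ![p - a0, q - a1, r - a2]
  rw [Fin.prod_univ_three, Fin.sum_univ_three] at spec
  simp only [Matrix.cons_val_zero, Matrix.cons_val_one, Matrix.head_cons,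
    Matrix.cons_val_two, Matrix.tail_cons] at spec
  have hm : p - a0 + (q - a1) + (r - a2) = m := by omega
  rw [hm] at spec
  calc Nat.multinomial Finset.univ ![p - a0, q - a1, r - a2] * (p.factorial * q.factorial * r.factorial)
      = Nat.multinomial Finset.univ ![p - a0, q - a1, r - a2] *
        (((p-a0).factorial * p.descFactorial a0) * ((q-a1).factorial * q.descFactorial a1) *
         ((r-a2).factorial * r.descFactorial a2)) := by rw [e1, e2, e3]
    _ = ((p-a0).factorial * (q-a1).factorial * (r-a2).factorial *
          Nat.multinomial Finset.univ ![p - a0, q - a1, r - a2]) *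
        (p.descFactorial a0 * q.descFactorial a1 * r.descFactorial a2) := by ring
    _ = _ := by rw [spec]

lemma key (m p q r a0 a1 a2 : ℕ) (hs : p + q + r = m + 9) (h9 : a0 + a1 + a2 = 9) (c : ℝ) :
    coeff (e3 (m+p) (m+q) (m+r))
        ((X 0 + X 1 + X 2 : MvPolynomial (Fin 3) ℝ) ^ m * monomial (e3 (m+a0) (m+a1) (m+a2)) c)
      = (m.factorial : ℝ) / (p.factorial * q.factorial * r.factorial) *
          (c * p.descFactorial a0 * q.descFactorial a1 * r.descFactorial a2) := by
  rw [coeff_mul_monomial']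
  split_ifs with h
  · obtain ⟨h1, h2, h3⟩ := e3_le.mp h
    have h1 : a0 ≤ p := by omega
    have h2 : a1 ≤ q := by omega
    have h3 : a2 ≤ r := by omega
    rw [e3_sub, show m + p - (m + a0) = p - a0 from by omega,
      show m + q - (m + a1) = q - a1 from by omega,
      show m + r - (m + a2) = r - a2 from by omega, coeff_trinom]
    rw [if_pos (by simp only [e3_apply, Matrix.cons_val_zero, Matrix.cons_val_one,
      Matrix.head_cons, Matrix.cons_val_two, Matrix.tail_cons]; omega)]
    rw [e3_coe]
    have hk := natkey m p q r a0 a1 a2 hs h9 h1 h2 h3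
    have hkR : ((Nat.multinomial Finset.univ ![p - a0, q - a1, r - a2] : ℝ))
        * ((p.factorial : ℝ) * q.factorial * r.factorial)
        = (m.factorial : ℝ) * ((p.descFactorial a0 : ℝ) * q.descFactorial a1 * r.descFactorial a2) := by
      exact_mod_cast congrArg (Nat.cast : ℕ → ℝ) hk
    have hne : ((p.factorial : ℝ) * q.factorial * r.factorial) ≠ 0 := by
      positivity
    field_simp
    linear_combination c * hkR
  · have hlt : ¬(a0 ≤ p ∧ a1 ≤ q ∧ a2 ≤ r) := by
      intro ⟨h1, h2, h3⟩
      exact h (e3_le.mpr ⟨by omega, by omega, by omega⟩)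
    have : p.descFactorial a0 * q.descFactorial a1 * r.descFactorial a2 = 0 := by
      rcases not_and_or.mp hlt with h' | h'
      · rw [Nat.descFactorial_of_lt (show p < a0 by omega)]; ring
      rcases not_and_or.mp h' with h'' | h''
      · rw [Nat.descFactorial_of_lt (show q < a1 by omega)]; ring
      · rw [Nat.descFactorial_of_lt (show r < a2 by omega)]; ring
    have hz : (p.descFactorial a0 : ℝ) * q.descFactorial a1 * r.descFactorial a2 = 0 := by
      exact_mod_cast congrArg (Nat.cast : ℕ → ℝ) this
    linear_combination (-((m.factorial : ℝ) / (p.factorial * q.factorial * r.factorial) * c)) * hz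

noncomputable def S (p q r : ℕ) : ℝ :=
    (1 : ℝ) * (p.descFactorial 0 : ℝ) * (q.descFactorial 3 : ℝ) * (r.descFactorial 6 : ℝ) +
    (-1 : ℝ) * (p.descFactorial 0 : ℝ) * (q.descFactorial 4 : ℝ) * (r.descFactorial 5 : ℝ) +
    (-1 : ℝ) * (p.descFactorial 0 : ℝ) * (q.descFactorial 5 : ℝ) * (r.descFactorial 4 : ℝ) +
    (1 : ℝ) * (p.descFactorial 0 : ℝ) * (q.descFactorial 6 : ℝ) * (r.descFactorial 3 : ℝ) +
    (-1 : ℝ) * (p.descFactorial 1 : ℝ) * (q.descFactorial 2 : ℝ) * (r.descFactorial 6 : ℝ) +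
    (2 : ℝ) * (p.descFactorial 1 : ℝ) * (q.descFactorial 4 : ℝ) * (r.descFactorial 4 : ℝ) +
    (-1 : ℝ) * (p.descFactorial 1 : ℝ) * (q.descFactorial 6 : ℝ) * (r.descFactorial 2 : ℝ) +
    (-1 : ℝ) * (p.descFactorial 2 : ℝ) * (q.descFactorial 1 : ℝ) * (r.descFactorial 6 : ℝ) +
    (2 : ℝ) * (p.descFactorial 2 : ℝ) * (q.descFactorial 2 : ℝ) * (r.descFactorial 5 : ℝ) +
    (-1 : ℝ) * (p.descFactorial 2 : ℝ) * (q.descFactorial 3 : ℝ) * (r.descFactorial 4 : ℝ) +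
    (-1 : ℝ) * (p.descFactorial 2 : ℝ) * (q.descFactorial 4 : ℝ) * (r.descFactorial 3 : ℝ) +
    (2 : ℝ) * (p.descFactorial 2 : ℝ) * (q.descFactorial 5 : ℝ) * (r.descFactorial 2 : ℝ) +
    (-1 : ℝ) * (p.descFactorial 2 : ℝ) * (q.descFactorial 6 : ℝ) * (r.descFactorial 1 : ℝ) +
    (1 : ℝ) * (p.descFactorial 3 : ℝ) * (q.descFactorial 0 : ℝ) * (r.descFactorial 6 : ℝ) +
    (-1 : ℝ) * (p.descFactorial 3 : ℝ) * (q.descFactorial 2 : ℝ) * (r.descFactorial 4 : ℝ) +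
    (-1 : ℝ) * (p.descFactorial 3 : ℝ) * (q.descFactorial 4 : ℝ) * (r.descFactorial 2 : ℝ) +
    (1 : ℝ) * (p.descFactorial 3 : ℝ) * (q.descFactorial 6 : ℝ) * (r.descFactorial 0 : ℝ) +
    (-1 : ℝ) * (p.descFactorial 4 : ℝ) * (q.descFactorial 0 : ℝ) * (r.descFactorial 5 : ℝ) +
    (2 : ℝ) * (p.descFactorial 4 : ℝ) * (q.descFactorial 1 : ℝ) * (r.descFactorial 4 : ℝ) +
    (-1 : ℝ) * (p.descFactorial 4 : ℝ) * (q.descFactorial 2 : ℝ) * (r.descFactorial 3 : ℝ) +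
    (-1 : ℝ) * (p.descFactorial 4 : ℝ) * (q.descFactorial 3 : ℝ) * (r.descFactorial 2 : ℝ) +
    (2 : ℝ) * (p.descFactorial 4 : ℝ) * (q.descFactorial 4 : ℝ) * (r.descFactorial 1 : ℝ) +
    (-1 : ℝ) * (p.descFactorial 4 : ℝ) * (q.descFactorial 5 : ℝ) * (r.descFactorial 0 : ℝ) +
    (-1 : ℝ) * (p.descFactorial 5 : ℝ) * (q.descFactorial 0 : ℝ) * (r.descFactorial 4 : ℝ) +
    (2 : ℝ) * (p.descFactorial 5 : ℝ) * (q.descFactorial 2 : ℝ) * (r.descFactorial 2 : ℝ) +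
    (-1 : ℝ) * (p.descFactorial 5 : ℝ) * (q.descFactorial 4 : ℝ) * (r.descFactorial 0 : ℝ) +
    (1 : ℝ) * (p.descFactorial 6 : ℝ) * (q.descFactorial 0 : ℝ) * (r.descFactorial 3 : ℝ) +
    (-1 : ℝ) * (p.descFactorial 6 : ℝ) * (q.descFactorial 1 : ℝ) * (r.descFactorial 2 : ℝ) +
    (-1 : ℝ) * (p.descFactorial 6 : ℝ) * (q.descFactorial 2 : ℝ) * (r.descFactorial 1 : ℝ) +
    (1 : ℝ) * (p.descFactorial 6 : ℝ) * (q.descFactorial 3 : ℝ) * (r.descFactorial 0 : ℝ)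

lemma Dexp : (∏ i : Fin 3, ∏ j ∈ Finset.Ioi i, ((X i - X j) ^ 2 * (X i + X j)) :
    MvPolynomial (Fin 3) ℝ) =
      monomial (e3 0 3 6) (1 : ℝ) +
      monomial (e3 0 4 5) (-1 : ℝ) +
      monomial (e3 0 5 4) (-1 : ℝ) +
      monomial (e3 0 6 3) (1 : ℝ) +
      monomial (e3 1 2 6) (-1 : ℝ) +
      monomial (e3 1 4 4) (2 : ℝ) +
      monomial (e3 1 6 2) (-1 : ℝ) +
      monomial (e3 2 1 6) (-1 : ℝ) +
      monomial (e3 2 2 5) (2 : ℝ) +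
      monomial (e3 2 3 4) (-1 : ℝ) +
      monomial (e3 2 4 3) (-1 : ℝ) +
      monomial (e3 2 5 2) (2 : ℝ) +
      monomial (e3 2 6 1) (-1 : ℝ) +
      monomial (e3 3 0 6) (1 : ℝ) +
      monomial (e3 3 2 4) (-1 : ℝ) +
      monomial (e3 3 4 2) (-1 : ℝ) +
      monomial (e3 3 6 0) (1 : ℝ) +
      monomial (e3 4 0 5) (-1 : ℝ) +
      monomial (e3 4 1 4) (2 : ℝ) +
      monomial (e3 4 2 3) (-1 : ℝ) +
      monomial (e3 4 3 2) (-1 : ℝ) +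
      monomial (e3 4 4 1) (2 : ℝ) +
      monomial (e3 4 5 0) (-1 : ℝ) +
      monomial (e3 5 0 4) (-1 : ℝ) +
      monomial (e3 5 2 2) (2 : ℝ) +
      monomial (e3 5 4 0) (-1 : ℝ) +
      monomial (e3 6 0 3) (1 : ℝ) +
      monomial (e3 6 1 2) (-1 : ℝ) +
      monomial (e3 6 2 1) (-1 : ℝ) +
      monomial (e3 6 3 0) (1 : ℝ) := by
  have hmc : ∀ (a b c : ℕ) (v : ℝ), monomial (e3 a b c) v
      = C v * ((X 0 : MvPolynomial (Fin 3) ℝ)^a * X 1^b * X 2^c) := by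
    intro a b c v
    rw [mono_eq, C_mul_monomial, mul_one]
  rw [Fin.prod_univ_three]
  rw [show Finset.Ioi (0 : Fin 3) = {1, 2} from rfl, show Finset.Ioi (1 : Fin 3) = {2} from rfl,
    show Finset.Ioi (2 : Fin 3) = (∅ : Finset (Fin 3)) from rfl]
  rw [Finset.prod_insert (by decide), Finset.prod_singleton, Finset.prod_singleton,
    Finset.prod_empty]
  simp only [hmc, map_neg, map_one, map_ofNat]
  ring

lemma coeff_h (m p q r : ℕ) (hs : p + q + r = m + 9) :
    coeff (e3 (m+p) (m+q) (m+r))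
        ((X 0 : MvPolynomial (Fin 3) ℝ) ^ m * X 1 ^ m * X 2 ^ m * (X 0 + X 1 + X 2) ^ m *
          ∏ i : Fin 3, ∏ j ∈ Finset.Ioi i, ((X i - X j) ^ 2 * (X i + X j)))
      = (m.factorial : ℝ) / (p.factorial * q.factorial * r.factorial) * S p q r := by
  have hterm : ∀ (a b c : ℕ) (v : ℝ),
      (X 0 : MvPolynomial (Fin 3) ℝ) ^ m * X 1 ^ m * X 2 ^ m * (X 0 + X 1 + X 2) ^ m *
        monomial (e3 a b c) v
      = (X 0 + X 1 + X 2) ^ m * monomial (e3 (m+a) (m+b) (m+c)) v := by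
    intro a b c v
    rw [mono_eq]
    rw [show (monomial (e3 m m m) (1:ℝ)) * (X 0 + X 1 + X 2) ^ m * monomial (e3 a b c) v
        = (X 0 + X 1 + X 2) ^ m * ((monomial (e3 m m m) (1:ℝ)) * monomial (e3 a b c) v) from by ring]
    rw [monomial_mul, one_mul, e3_add]
  rw [Dexp]
  simp only [mul_add, coeff_add, hterm]
  rw [key m p q r 0 3 6 hs (by norm_num) (1 : ℝ)]
  rw [key m p q r 0 4 5 hs (by norm_num) (-1 : ℝ)]
  rw [key m p q r 0 5 4 hs (by norm_num) (-1 : ℝ)]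
  rw [key m p q r 0 6 3 hs (by norm_num) (1 : ℝ)]
  rw [key m p q r 1 2 6 hs (by norm_num) (-1 : ℝ)]
  rw [key m p q r 1 4 4 hs (by norm_num) (2 : ℝ)]
  rw [key m p q r 1 6 2 hs (by norm_num) (-1 : ℝ)]
  rw [key m p q r 2 1 6 hs (by norm_num) (-1 : ℝ)]
  rw [key m p q r 2 2 5 hs (by norm_num) (2 : ℝ)]
  rw [key m p q r 2 3 4 hs (by norm_num) (-1 : ℝ)]
  rw [key m p q r 2 4 3 hs (by norm_num) (-1 : ℝ)]
  rw [key m p q r 2 5 2 hs (by norm_num) (2 : ℝ)]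
  rw [key m p q r 2 6 1 hs (by norm_num) (-1 : ℝ)]
  rw [key m p q r 3 0 6 hs (by norm_num) (1 : ℝ)]
  rw [key m p q r 3 2 4 hs (by norm_num) (-1 : ℝ)]
  rw [key m p q r 3 4 2 hs (by norm_num) (-1 : ℝ)]
  rw [key m p q r 3 6 0 hs (by norm_num) (1 : ℝ)]
  rw [key m p q r 4 0 5 hs (by norm_num) (-1 : ℝ)]
  rw [key m p q r 4 1 4 hs (by norm_num) (2 : ℝ)]
  rw [key m p q r 4 2 3 hs (by norm_num) (-1 : ℝ)]
  rw [key m p q r 4 3 2 hs (by norm_num) (-1 : ℝ)]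
  rw [key m p q r 4 4 1 hs (by norm_num) (2 : ℝ)]
  rw [key m p q r 4 5 0 hs (by norm_num) (-1 : ℝ)]
  rw [key m p q r 5 0 4 hs (by norm_num) (-1 : ℝ)]
  rw [key m p q r 5 2 2 hs (by norm_num) (2 : ℝ)]
  rw [key m p q r 5 4 0 hs (by norm_num) (-1 : ℝ)]
  rw [key m p q r 6 0 3 hs (by norm_num) (1 : ℝ)]
  rw [key m p q r 6 1 2 hs (by norm_num) (-1 : ℝ)]
  rw [key m p q r 6 2 1 hs (by norm_num) (-1 : ℝ)]
  rw [key m p q r 6 3 0 hs (by norm_num) (1 : ℝ)]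
  simp only [S]
  ring

lemma descCastR (x : ℕ) : ∀ k : ℕ, ((x.descFactorial k : ℕ) : ℝ) = ∏ i ∈ Finset.range k, ((x:ℝ) - i)
  | 0 => by simp
  | (k+1) => by
    rw [Nat.descFactorial_succ, Finset.prod_range_succ, Nat.cast_mul, descCastR x k]
    rcases le_or_gt k x with h | h
    · rw [Nat.cast_sub h]; ring
    · have h1 : x - k = 0 := by omega
      have h2 : (∏ i ∈ Finset.range k, ((x:ℝ) - i)) = 0 :=
        Finset.prod_eq_zero (Finset.mem_range.mpr h) (by simp)
      rw [h1, h2]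
      simp

lemma S0_ne (t : ℕ) : S (t+4) (t+3) (t+2) ≠ 0 := by
  apply ne_of_lt
  simp only [S, descCastR, Finset.prod_range_succ, Finset.prod_range_zero]
  push_cast
  set x : ℝ := (t : ℝ) with hxdef
  have hx : (0:ℝ) ≤ x := Nat.cast_nonneg t
  ring_nf
  nlinarith [sq_nonneg (x - 1), pow_nonneg hx 3, pow_nonneg hx 4, pow_nonneg hx 5,
    pow_nonneg hx 6, sq_nonneg x]

lemma S1_ne (t : ℕ) : S (t+5) (t+3) (t+2) ≠ 0 := by
  rcases le_or_gt t 2 with h | h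
  · interval_cases t <;> (simp [S, descCastR, Finset.prod_range_succ]; norm_num)
  · apply ne_of_lt
    simp only [S, descCastR, Finset.prod_range_succ, Finset.prod_range_zero]
    push_cast
    set x : ℝ := (t : ℝ) with hxdef
    have hx : (3:ℝ) ≤ x := by
      have h3 : (3:ℕ) ≤ t := h
      calc (3:ℝ) = ((3:ℕ):ℝ) := by norm_num
        _ ≤ x := Nat.cast_le.mpr h3
    ring_nf
    nlinarith [mul_nonneg (sub_nonneg.mpr hx) (pow_nonneg (by linarith : (0:ℝ) ≤ x) 5),
      mul_nonneg (sub_nonneg.mpr hx) (pow_nonneg (by linarith : (0:ℝ) ≤ x) 4),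
      mul_nonneg (sub_nonneg.mpr hx) (pow_nonneg (by linarith : (0:ℝ) ≤ x) 3),
      mul_nonneg (sub_nonneg.mpr hx) (pow_nonneg (by linarith : (0:ℝ) ≤ x) 2),
      mul_nonneg (sub_nonneg.mpr hx) (by linarith : (0:ℝ) ≤ x)]

lemma S2_ne (t : ℕ) : S (t+6) (t+3) (t+2) ≠ 0 := by
  rcases le_or_gt t 6 with h | h
  · interval_cases t <;> (simp [S, descCastR, Finset.prod_range_succ]; norm_num)
  · apply ne_of_lt
    simp only [S, descCastR, Finset.prod_range_succ, Finset.prod_range_zero]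
    push_cast
    set x : ℝ := (t : ℝ) with hxdef
    have hx : (7:ℝ) ≤ x := by
      have h7 : (7:ℕ) ≤ t := h
      calc (7:ℝ) = ((7:ℕ):ℝ) := by norm_num
        _ ≤ x := Nat.cast_le.mpr h7
    ring_nf
    nlinarith [mul_nonneg (sub_nonneg.mpr hx) (pow_nonneg (by linarith : (0:ℝ) ≤ x) 5),
      mul_nonneg (sub_nonneg.mpr hx) (pow_nonneg (by linarith : (0:ℝ) ≤ x) 4),
      mul_nonneg (sub_nonneg.mpr hx) (pow_nonneg (by linarith : (0:ℝ) ≤ x) 3),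
      mul_nonneg (sub_nonneg.mpr hx) (pow_nonneg (by linarith : (0:ℝ) ≤ x) 2),
      mul_nonneg (sub_nonneg.mpr hx) (by linarith : (0:ℝ) ≤ x)]

/-- For `n ≥ 4`, in the polynomial
`h = x₁^{n-4} x₂^{n-4} x₃^{n-4} (x₁+x₂+x₃)^{n-4} · ∏_{1≤i<j≤3} (xᵢ-xⱼ)²(xᵢ+xⱼ)`
over `ℝ`, the coefficient of `x₁^a x₂^b x₃^c` is nonzero, where
`b = ⌊(4n-7)/3⌋`, `c = b - 1`, and `a = 4n - 7 - b - c`. -/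
theorem statement_9 (n : ℕ) (hn : 4 ≤ n) :
    MvPolynomial.coeff
        (Finsupp.equivFunOnFinite.symm
          ![4 * n - 7 - (4 * n - 7) / 3 - ((4 * n - 7) / 3 - 1),
            (4 * n - 7) / 3, (4 * n - 7) / 3 - 1])
        ((X 0) ^ (n - 4) * (X 1) ^ (n - 4) * (X 2) ^ (n - 4) *
            (X 0 + X 1 + X 2) ^ (n - 4) *
            ∏ i : Fin 3, ∏ j ∈ Finset.Ioi i, ((X i - X j) ^ 2 * (X i + X j)) :
          MvPolynomial (Fin 3) ℝ) ≠ 0 := by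
  set m := n - 4 with hm
  obtain ⟨t, ht⟩ : ∃ t, m = 3*t ∨ m = 3*t+1 ∨ m = 3*t+2 := ⟨m/3, by omega⟩
  rcases ht with ht | ht | ht
  · have h2 : (4 * n - 7) / 3 - 1 = m + (t+2) := by omega
    have h1 : (4 * n - 7) / 3 = m + (t+3) := by omega
    have h0 : 4 * n - 7 - (m + (t+3)) - (m + (t+2)) = m + (t+4) := by omega
    rw [h2, h1, h0]
    show coeff (e3 (m+(t+4)) (m+(t+3)) (m+(t+2))) _ ≠ 0
    rw [coeff_h m (t+4) (t+3) (t+2) (by omega)]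
    exact mul_ne_zero (by positivity) (S0_ne t)
  · have h2 : (4 * n - 7) / 3 - 1 = m + (t+2) := by omega
    have h1 : (4 * n - 7) / 3 = m + (t+3) := by omega
    have h0 : 4 * n - 7 - (m + (t+3)) - (m + (t+2)) = m + (t+5) := by omega
    rw [h2, h1, h0]
    show coeff (e3 (m+(t+5)) (m+(t+3)) (m+(t+2))) _ ≠ 0
    rw [coeff_h m (t+5) (t+3) (t+2) (by omega)]
    exact mul_ne_zero (by positivity) (S1_ne t)
  · have h2 : (4 * n - 7) / 3 - 1 = m + (t+2) := by omega
    have h1 : (4 * n - 7) / 3 = m + (t+3) := by omega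
    have h0 : 4 * n - 7 - (m + (t+3)) - (m + (t+2)) = m + (t+6) := by omega
    rw [h2, h1, h0]
    show coeff (e3 (m+(t+6)) (m+(t+3)) (m+(t+2))) _ ≠ 0
    rw [coeff_h m (t+6) (t+3) (t+2) (by omega)]
    exact mul_ne_zero (by positivity) (S2_ne t)
end

section
/- For all integers N ≥ 1 and t ≥ 0, the coefficient of the monomial ∏_{1 ≤ i ≤ N} x_i^{2(N−1)+i−1+t} in the polynomial ∏_{1 ≤ i < j ≤ N} (x_i − x_j)^5 · ∏_{1 ≤ i ≤ N} x_i^t has absolute value (3N)! / (N! · 6^N); in particular, this coefficient is nonzero. -/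
open MvPolynomial

open Finset

namespace S11

/-- Lagrange-interpolation core identity over a field. -/
theorem star_field {F ι : Type*} [Field F] [DecidableEq ι] (s : Finset ι) (hs : s.Nonempty)
    (v : ι → F) (hv : Set.InjOn v s) :
    ∏ i ∈ s, ∏ j ∈ s.erase i, (v j - v i)
      = ∑ m ∈ s, (∏ j ∈ s.erase m, v j) * ∏ i ∈ s.erase m, ∏ j ∈ s.erase i, (v j - v i) := by
  have h1 : ∑ j ∈ s, Lagrange.basis s v j = 1 := Lagrange.sum_basis hv hs
  have h2 : ∑ i ∈ s, ∏ j ∈ s.erase i, ((v i - v j)⁻¹ * (0 - v j))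
      = Polynomial.eval 0 (∑ j ∈ s, Lagrange.basis s v j) := by
    rw [Polynomial.eval_finset_sum]
    refine Finset.sum_congr rfl fun i _ => ?_
    rw [Lagrange.basis, Polynomial.eval_prod]
    refine Finset.prod_congr rfl fun j _ => ?_
    simp [Lagrange.basisDivisor]
  rw [h1, Polynomial.eval_one] at h2
  have key : ∀ i ∈ s,
      (∏ j ∈ s.erase i, ((v i - v j)⁻¹ * (0 - v j)))
        * ∏ l ∈ s, ∏ j ∈ s.erase l, (v j - v l)
      = (∏ j ∈ s.erase i, v j) * ∏ l ∈ s.erase i, ∏ j ∈ s.erase l, (v j - v l) := by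
    intro i hi
    rw [← Finset.mul_prod_erase s _ hi, ← mul_assoc, mul_comm _ (∏ j ∈ s.erase i, (v j - v i))]
    congr 1
    rw [← Finset.prod_mul_distrib]
    refine Finset.prod_congr rfl fun j hj => ?_
    have hji : j ≠ i := (Finset.mem_erase.mp hj).1
    have hjs : j ∈ s := (Finset.mem_erase.mp hj).2
    have hne : v i - v j ≠ 0 := sub_ne_zero_of_ne fun h => hji (hv hjs hi (h.symm))
    field_simp
    ring
  calc ∏ i ∈ s, ∏ j ∈ s.erase i, (v j - v i)
      = (∑ i ∈ s, ∏ j ∈ s.erase i, ((v i - v j)⁻¹ * (0 - v j)))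
        * ∏ l ∈ s, ∏ j ∈ s.erase l, (v j - v l) := by rw [h2, one_mul]
    _ = ∑ i ∈ s, (∏ j ∈ s.erase i, ((v i - v j)⁻¹ * (0 - v j)))
        * ∏ l ∈ s, ∏ j ∈ s.erase l, (v j - v l) := Finset.sum_mul _ _ _
    _ = _ := Finset.sum_congr rfl key

variable {n : ℕ}

/-- The star identity for multivariate polynomials over ℝ. -/
theorem star_poly (s : Finset (Fin n)) (hs : s.Nonempty) :
    ∏ i ∈ s, ∏ j ∈ s.erase i, (X j - X i : MvPolynomial (Fin n) ℝ)
      = ∑ m ∈ s, (∏ j ∈ s.erase m, X j)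
          * ∏ i ∈ s.erase m, ∏ j ∈ s.erase i, (X j - X i) := by
  set K := FractionRing (MvPolynomial (Fin n) ℝ)
  have hinj : Function.Injective (algebraMap (MvPolynomial (Fin n) ℝ) K) :=
    IsFractionRing.injective _ _
  apply hinj
  have hv : Set.InjOn (fun i => algebraMap (MvPolynomial (Fin n) ℝ) K (X i)) s := by
    intro i _ j _ h
    exact X_injective (hinj h)
  have := star_field s hs (fun i => algebraMap (MvPolynomial (Fin n) ℝ) K (X i)) hv
  simpa [map_prod, map_sum, map_sub, map_mul] using this

noncomputable def Hh (s : Finset (Fin n)) (i : Fin n) : MvPolynomial (Fin n) ℝ :=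
  ∏ j ∈ s.erase i, (X j - X i)

noncomputable def Gg (s : Finset (Fin n)) (a : Fin n → ℕ) : MvPolynomial (Fin n) ℝ :=
  ∏ i ∈ s, (Hh s i) ^ (a i)

noncomputable def vv (s : Finset (Fin n)) (a : Fin n → ℕ) : Fin n →₀ ℕ :=
  ∑ j ∈ s, Finsupp.single j ((∑ i ∈ s, a i) - a j)

theorem vv_apply (s : Finset (Fin n)) (a : Fin n → ℕ) (k : Fin n) :
    vv s a k = if k ∈ s then (∑ i ∈ s, a i) - a k else 0 := by
  classical
  rw [vv, Finsupp.finset_sum_apply]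
  simp_rw [Finsupp.single_apply]
  rw [Finset.sum_ite_eq' s k (fun j => (∑ i ∈ s, a i) - a j)]

/-- coefficient of `x_m^A` picked out by mapping to a one-variable polynomial. -/
theorem coeff_single_eq (m : Fin n) (A : ℕ) (p : MvPolynomial (Fin n) ℝ) :
    coeff (Finsupp.single m A) p
      = (MvPolynomial.aeval
          (fun j : Fin n => if j = m then (Polynomial.X : Polynomial ℝ) else 0) p).coeff A := by
  classical
  have hterm : ∀ d : Fin n →₀ ℕ, ∀ c : ℝ,
      ((MvPolynomial.aeval
          (fun j : Fin n => if j = m then (Polynomial.X : Polynomial ℝ) else 0))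
          (monomial d c)).coeff A = if d = Finsupp.single m A then c else 0 := by
    intro d c
    rw [MvPolynomial.aeval_monomial]
    by_cases hd : d.support ⊆ {m}
    · have hd' : d = Finsupp.single m (d m) := Finsupp.support_subset_singleton.mp hd
      rw [hd']
      rw [Finsupp.prod_single_index (by simp)]
      simp only [if_pos rfl, if_true, Polynomial.algebraMap_eq, Polynomial.coeff_C_mul,
        Polynomial.coeff_X_pow, (Finsupp.single_injective m).eq_iff]
      split_ifs with h1 h2 h2
      · rw [mul_one]
      · exact absurd h1.symm h2
      · exact absurd h2.symm h1
      · rw [mul_zero]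
    · obtain ⟨j, hj, hjm⟩ : ∃ j ∈ d.support, j ≠ m := by
        by_contra h
        push_neg at h
        exact hd fun x hx => Finset.mem_singleton.mpr (h x hx)
      have : (d.prod fun i k => (if i = m then (Polynomial.X : Polynomial ℝ) else 0) ^ k) = 0 := by
        apply Finset.prod_eq_zero hj
        show (if j = m then (Polynomial.X : Polynomial ℝ) else 0) ^ d j = 0
        rw [if_neg hjm]
        exact zero_pow (Finsupp.mem_support_iff.mp hj)
      rw [this, mul_zero, Polynomial.coeff_zero]
      have : d ≠ Finsupp.single m A := by
        intro h
        apply hd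
        rw [h]
        exact Finsupp.support_single_subset
      rw [if_neg this]
  conv_rhs => rw [MvPolynomial.as_sum p]
  rw [map_sum, Polynomial.finset_sum_coeff]
  simp_rw [hterm]
  rw [Finset.sum_ite_eq' p.support (Finsupp.single m A) (fun d => coeff d p)]
  split_ifs with h
  · rfl
  · rw [MvPolynomial.notMem_support_iff.mp h]

theorem coeff_extract (m : Fin n) (s' : Finset (Fin n)) (hm : m ∉ s') (a : Fin n → ℕ)
    (G' : MvPolynomial (Fin n) ℝ) (hG' : ∀ d ∈ G'.support, d m = 0) (w : Fin n →₀ ℕ)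
    (hw : w m = 0) :
    coeff (Finsupp.single m (∑ i ∈ s', a i) + w) ((∏ i ∈ s', (X m - X i) ^ a i) * G')
      = coeff w G' := by
  classical
  set A := ∑ i ∈ s', a i with hA
  set B := ∏ i ∈ s', (X m - X i : MvPolynomial (Fin n) ℝ) ^ a i with hB
  have hBhom : B.IsHomogeneous A := by
    rw [hB, hA]
    have := IsHomogeneous.prod s' (fun i => (X m - X i : MvPolynomial (Fin n) ℝ) ^ a i)
      (fun i => 1 * a i)
      (fun i _ => ((isHomogeneous_X ℝ m).sub (isHomogeneous_X ℝ i)).pow (a i))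
    simpa using this
  have hBcoeff : coeff (Finsupp.single m A) B = 1 := by
    rw [coeff_single_eq]
    have hXA : (MvPolynomial.aeval
        (fun j : Fin n => if j = m then (Polynomial.X : Polynomial ℝ) else 0)) B
        = Polynomial.X ^ A := by
      rw [hB, map_prod, hA, ← Finset.prod_pow_eq_pow_sum]
      refine Finset.prod_congr rfl fun i hi => ?_
      rw [map_pow, map_sub, MvPolynomial.aeval_X, MvPolynomial.aeval_X, if_pos rfl,
        if_neg (by rintro rfl; exact hm hi), sub_zero]
    rw [hXA, Polynomial.coeff_X_pow, if_pos rfl]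
  rw [MvPolynomial.coeff_mul]
  rw [Finset.sum_eq_single (Finsupp.single m A, w)]
  · rw [hBcoeff, one_mul]
  · rintro ⟨d, e⟩ hde hne
    rw [Finset.HasAntidiagonal.mem_antidiagonal] at hde
    by_cases hd0 : coeff d B = 0
    · rw [hd0, zero_mul]
    by_cases he0 : coeff e G' = 0
    · rw [he0, mul_zero]
    exfalso
    have hem : e m = 0 := hG' e (MvPolynomial.mem_support_iff.mpr he0)
    have hdm : d m = A := by
      have h := DFunLike.congr_fun hde m
      simpa [hem, hw] using h
    have hddeg : d.degree = A := by
      by_contra h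
      exact hd0 (hBhom.coeff_eq_zero h)
    have hd : d = Finsupp.single m A := by
      ext j
      rcases eq_or_ne j m with rfl | hj
      · simpa using hdm
      · rw [Finsupp.single_apply, if_neg (fun h => hj h.symm)]
        by_contra hdj
        have hjsupp : j ∈ d.support := Finsupp.mem_support_iff.mpr hdj
        rcases Nat.eq_zero_or_pos A with hA0 | hA0
        · have hd0' : d = 0 := (Finsupp.degree_eq_zero_iff d).mp (by rw [hddeg, hA0])
          exact hdj (by simp [hd0'])
        · have hmsupp : m ∈ d.support := Finsupp.mem_support_iff.mpr (by omega)
          have hle : d m + d j ≤ d.degree := by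
            rw [Finsupp.degree]
            have hsub : ({m, j} : Finset (Fin n)) ⊆ d.support := by
              intro x hx
              rcases Finset.mem_insert.mp hx with rfl | hx
              · exact hmsupp
              · exact (Finset.mem_singleton.mp hx) ▸ hjsupp
            calc d m + d j = ∑ x ∈ ({m, j} : Finset (Fin n)), d x := by
                  rw [Finset.sum_pair (fun h => hj (h.symm))]
              _ ≤ ∑ x ∈ d.support, d x := Finset.sum_le_sum_of_subset hsub
          omega
    apply hne
    have he : e = w := by
      rw [hd] at hde
      exact add_left_cancel hde
    rw [hd, he]
  · intro h
    exact absurd (Finset.HasAntidiagonal.mem_antidiagonal.mpr (by rfl)) h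

theorem single_sum_apply (S : Finset (Fin n)) (c : Fin n → ℕ) (k : Fin n) :
    (∑ j ∈ S, Finsupp.single j (c j)) k = if k ∈ S then c k else 0 := by
  classical
  rw [Finsupp.finset_sum_apply]
  simp_rw [Finsupp.single_apply]
  rw [Finset.sum_ite_eq' S k c]

theorem prod_X_eq_monomial (S : Finset (Fin n)) :
    ∏ j ∈ S, (X j : MvPolynomial (Fin n) ℝ)
      = monomial (∑ j ∈ S, Finsupp.single j 1) 1 := by
  classical
  induction S using Finset.induction_on with
  | empty => simp
  | insert _ _ hx ih =>
    rw [Finset.prod_insert hx, Finset.sum_insert hx, ih, X, monomial_mul, one_mul]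

theorem Gg_vars (s : Finset (Fin n)) (a : Fin n → ℕ) {m : Fin n} (hm : m ∉ s) :
    ∀ d ∈ (Gg s a).support, d m = 0 := by
  classical
  intro d hd
  by_contra h
  have hmem : m ∈ (Gg s a).vars := (mem_vars m).mpr ⟨d, hd, Finsupp.mem_support_iff.mpr h⟩
  have hsub : (Gg s a).vars ⊆ s := by
    refine subset_trans (vars_prod _) ?_
    intro x hx
    rw [Finset.mem_biUnion] at hx
    obtain ⟨i, hi, hx⟩ := hx
    have hx2 : x ∈ (Hh s i).vars := vars_pow _ _ hx
    have hsub2 : (Hh s i).vars ⊆ s := by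
      refine subset_trans (vars_prod _) ?_
      intro y hy
      rw [Finset.mem_biUnion] at hy
      obtain ⟨j, hj, hy⟩ := hy
      have : y ∈ ((X j : MvPolynomial (Fin n) ℝ).vars ∪ (X i : MvPolynomial (Fin n) ℝ).vars) :=
        vars_sub_subset (p := X j) (q := X i) hy
      rw [vars_X, vars_X] at this
      rcases Finset.mem_union.mp this with h' | h'
      · exact (Finset.mem_singleton.mp h') ▸ (Finset.mem_erase.mp hj).2
      · exact (Finset.mem_singleton.mp h') ▸ hi
    exact hsub2 hx2
  exact hm (hsub hmem)

theorem two_le_sum {s : Finset (Fin n)} {a : Fin n → ℕ} {k m : Fin n}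
    (hk : k ∈ s) (hm : m ∈ s) (hkm : k ≠ m) : a k + a m ≤ ∑ i ∈ s, a i := by
  classical
  have h1 : m ∈ s.erase k := Finset.mem_erase.mpr ⟨hkm.symm, hm⟩
  calc a k + a m ≤ a k + ∑ i ∈ s.erase k, a i :=
        Nat.add_le_add_left (Finset.single_le_sum (fun _ _ => Nat.zero_le _) h1) _
    _ = ∑ i ∈ s, a i := Finset.add_sum_erase s a hk

theorem mult_erase {s : Finset (Fin n)} {a : Fin n → ℕ} {m : Fin n} (hm : m ∈ s)
    (h0 : a m = 0) : Nat.multinomial (s.erase m) a = Nat.multinomial s a := by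
  classical
  have h1 := Nat.multinomial_spec (s.erase m) a
  have h2 := Nat.multinomial_spec s a
  have hp : ∏ i ∈ s.erase m, (a i).factorial = ∏ i ∈ s, (a i).factorial :=
    Finset.prod_erase s (by rw [h0]; rfl)
  have hs : ∑ i ∈ s.erase m, a i = ∑ i ∈ s, a i := Finset.sum_erase s (by rw [h0])
  rw [hp, hs] at h1
  rw [← h2] at h1
  exact Nat.eq_of_mul_eq_mul_left (Finset.prod_pos fun i _ => Nat.factorial_pos _) h1

theorem sum_update_sub {s : Finset (Fin n)} {a : Fin n → ℕ} {m : Fin n} (hm : m ∈ s)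
    (h1 : 1 ≤ a m) :
    ∑ i ∈ s, Function.update a m (a m - 1) i = (∑ i ∈ s, a i) - 1 := by
  classical
  rw [Finset.sum_update_of_mem hm]
  have h2 := Finset.add_sum_erase s a hm
  rw [Finset.sdiff_singleton_eq_erase]
  omega

theorem mult_rec {s : Finset (Fin n)} {a : Fin n → ℕ} (hs : s.Nonempty)
    (h : ∀ i ∈ s, 1 ≤ a i) :
    ∑ m ∈ s, Nat.multinomial s (Function.update a m (a m - 1)) = Nat.multinomial s a := by
  classical
  set A := ∑ i ∈ s, a i with hA
  have hApos : 1 ≤ A := le_trans (h _ hs.choose_spec) (Finset.single_le_sum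
    (fun _ _ => Nat.zero_le _) hs.choose_spec)
  set P := ∏ i ∈ s, (a i).factorial with hP
  have hPpos : 0 < P := Finset.prod_pos fun i _ => Nat.factorial_pos _
  apply Nat.eq_of_mul_eq_mul_right hPpos
  rw [Finset.sum_mul]
  have hterm : ∀ m ∈ s, Nat.multinomial s (Function.update a m (a m - 1)) * P
      = a m * (A - 1).factorial := by
    intro m hm
    have hup : ∏ i ∈ s, (Function.update a m (a m - 1) i).factorial
        = (a m - 1).factorial * ∏ i ∈ s.erase m, (a i).factorial := by
      rw [← Finset.mul_prod_erase s _ hm, Function.update_self]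
      congr 1
      exact Finset.prod_congr rfl fun i hi => by
        rw [Function.update_of_ne (Finset.mem_erase.mp hi).1]
    have hP2 : P = a m * ∏ i ∈ s, (Function.update a m (a m - 1) i).factorial := by
      rw [hP, ← Finset.mul_prod_erase s _ hm, hup, ← mul_assoc,
        Nat.mul_factorial_pred (Nat.one_le_iff_ne_zero.mp (h m hm))]
    have hspec := Nat.multinomial_spec s (Function.update a m (a m - 1))
    rw [sum_update_sub hm (h m hm)] at hspec
    rw [hP2, ← mul_assoc, mul_comm (Nat.multinomial _ _) (a m), mul_assoc, mul_comm
      (Nat.multinomial s (Function.update a m (a m - 1)))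
      (∏ i ∈ s, (Function.update a m (a m - 1) i).factorial), hspec, hA]
  rw [Finset.sum_congr rfl hterm, ← Finset.sum_mul, ← hA,
    Nat.mul_factorial_pred (Nat.one_le_iff_ne_zero.mp hApos), mul_comm, Nat.multinomial_spec, hA]

theorem dyson : ∀ (K : ℕ) (s : Finset (Fin n)) (a : Fin n → ℕ),
    (∑ i ∈ s, a i) + s.card = K →
    coeff (vv s a) (Gg s a) = (Nat.multinomial s a : ℝ) := by
  intro K
  induction K using Nat.strong_induction_on with
  | _ K ih =>
  intro s a hK
  classical
  by_cases hzero : ∃ m ∈ s, a m = 0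
  · -- boundary case
    obtain ⟨m, hm, h0⟩ := hzero
    set s' := s.erase m with hs'
    have hms' : m ∉ s' := Finset.notMem_erase m s
    set A := ∑ i ∈ s, a i with hA
    have hAs' : ∑ i ∈ s', a i = A := Finset.sum_erase s (by rw [h0])
    -- decompose Gg
    have hGg : Gg s a = (∏ i ∈ s', (X m - X i) ^ a i) * Gg s' a := by
      rw [Gg, ← Finset.mul_prod_erase s _ hm, h0, pow_zero, one_mul, ← hs', Gg,
        ← Finset.prod_mul_distrib]
      refine Finset.prod_congr rfl fun i hi => ?_
      have him : i ≠ m := (Finset.mem_erase.mp hi).1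
      have hHh : Hh s i = (X m - X i) * Hh s' i := by
        rw [Hh, ← Finset.mul_prod_erase (s.erase i) _
          (Finset.mem_erase.mpr ⟨him.symm, hm⟩), Hh, hs', Finset.erase_right_comm]
      rw [hHh, mul_pow]
    -- decompose vv
    have hvv : vv s a = Finsupp.single m (∑ i ∈ s', a i) + vv s' a := by
      ext k
      rw [Finsupp.add_apply, vv_apply, vv_apply, Finsupp.single_apply, hAs']
      by_cases hkm : m = k
      · subst hkm
        rw [if_pos hm, if_pos rfl, if_neg hms', h0, Nat.sub_zero, add_zero]
      · rw [if_neg hkm]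
        by_cases hks : k ∈ s
        · rw [if_pos hks, if_pos (Finset.mem_erase.mpr ⟨fun h => hkm h.symm, hks⟩), zero_add]
        · rw [if_neg hks, if_neg (fun h : k ∈ s' => hks (Finset.mem_of_mem_erase h)), zero_add]
    rw [hGg, hvv, coeff_extract m s' hms' a (Gg s' a) (Gg_vars s' a hms')
      (vv s' a) (by rw [vv_apply, if_neg hms'])]
    have hcard : 0 < s.card := Finset.card_pos.mpr ⟨m, hm⟩
    have hKlt : (∑ i ∈ s', a i) + s'.card < K := by
      rw [hAs', hs', Finset.card_erase_of_mem hm]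
      omega
    rw [ih _ hKlt s' a rfl, mult_erase hm h0]
  · push_neg at hzero
    rcases s.eq_empty_or_nonempty with rfl | hs
    · simp [Gg, vv, Nat.multinomial]
    · -- recursion case
      have hpos : ∀ i ∈ s, 1 ≤ a i := fun i hi => Nat.one_le_iff_ne_zero.mpr (hzero i hi)
      set A := ∑ i ∈ s, a i with hA
      -- Gg decomposition via star identity
      have hGg : Gg s a = ∑ m ∈ s, (∏ j ∈ s.erase m, X j)
          * Gg s (Function.update a m (a m - 1)) := by
        have hsplit : Gg s a = (∏ i ∈ s, Hh s i ^ (a i - 1)) * ∏ i ∈ s, Hh s i := by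
          rw [Gg, ← Finset.prod_mul_distrib]
          refine Finset.prod_congr rfl fun i hi => ?_
          rw [← pow_succ]
          congr 1
          have := hpos i hi
          omega
        have hstar := star_poly s hs
        rw [hsplit]
        have hHform : ∀ i, Hh s i = ∏ j ∈ s.erase i, (X j - X i : MvPolynomial (Fin n) ℝ) :=
          fun i => rfl
        simp_rw [hHform]
        rw [hstar, Finset.mul_sum]
        refine Finset.sum_congr rfl fun m hm => ?_
        rw [← mul_assoc, mul_right_comm,
          mul_comm _ (∏ j ∈ s.erase m, (X j : MvPolynomial (Fin n) ℝ))]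
        congr 1
        rw [Gg]
        rw [← Finset.mul_prod_erase s (fun i => Hh s i ^ Function.update a m (a m - 1) i) hm,
          Function.update_self,
          ← Finset.mul_prod_erase s (fun i => (∏ j ∈ s.erase i,
            (X j - X i : MvPolynomial (Fin n) ℝ)) ^ (a i - 1)) hm]
        rw [mul_assoc, ← Finset.prod_mul_distrib]
        have : ∀ i ∈ s.erase m, (∏ j ∈ s.erase i, (X j - X i : MvPolynomial (Fin n) ℝ))
            ^ (a i - 1) * ∏ j ∈ s.erase i, (X j - X i)
            = Hh s i ^ Function.update a m (a m - 1) i := by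
          intro i hi
          rw [Function.update_of_ne (Finset.mem_erase.mp hi).1, Hh, ← pow_succ]
          congr 1
          have := hpos i (Finset.mem_of_mem_erase hi)
          omega
        rw [Finset.prod_congr rfl this]
        rfl
      rw [hGg, MvPolynomial.coeff_sum]
      have hterm : ∀ m ∈ s, coeff (vv s a) ((∏ j ∈ s.erase m, X j)
          * Gg s (Function.update a m (a m - 1)))
          = (Nat.multinomial s (Function.update a m (a m - 1)) : ℝ) := by
        intro m hm
        set a' := Function.update a m (a m - 1) with ha'
        have hsum' : ∑ i ∈ s, a' i = A - 1 := sum_update_sub hm (hpos m hm)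
        set u : Fin n →₀ ℕ := ∑ j ∈ s.erase m, Finsupp.single j 1 with hu
        have hun : ∀ k, u k = if k ∈ s.erase m then 1 else 0 :=
          fun k => single_sum_apply (s.erase m) (fun _ => 1) k
        have hle : u ≤ vv s a := by
          intro k
          rw [hun, vv_apply]
          by_cases hk : k ∈ s.erase m
          · rw [if_pos hk, if_pos (Finset.mem_of_mem_erase hk)]
            have h2 := two_le_sum (a := a) (Finset.mem_of_mem_erase hk) hm
              (Finset.mem_erase.mp hk).1
            have := hpos m hm
            omega
          · rw [if_neg hk]
            exact Nat.zero_le _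
        have hsub : vv s a - u = vv s a' := by
          ext k
          rw [Finsupp.tsub_apply, vv_apply, vv_apply, hun, hsum', ← hA]
          by_cases hks : k ∈ s
          · rw [if_pos hks, if_pos hks]
            rcases eq_or_ne k m with rfl | hkm
            · rw [if_neg (Finset.notMem_erase k s), ha', Function.update_self]
              have := hpos k hks
              have : a k ≤ A := Finset.single_le_sum (fun _ _ => Nat.zero_le _) hks
              omega
            · rw [if_pos (Finset.mem_erase.mpr ⟨hkm, hks⟩), ha',
                Function.update_of_ne hkm]
              have h2 := two_le_sum (a := a) hks hm hkm
              have := hpos m hm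
              omega
          · rw [if_neg hks, if_neg hks,
              if_neg (fun h => hks (Finset.mem_of_mem_erase h))]
        rw [prod_X_eq_monomial, ← hu, mul_comm, MvPolynomial.coeff_mul_monomial',
          if_pos hle, hsub, mul_one]
        have hKlt : (∑ i ∈ s, a' i) + s.card < K := by
          rw [hsum']
          have : 1 ≤ A := le_trans (hpos _ hs.choose_spec)
            (Finset.single_le_sum (fun _ _ => Nat.zero_le _) hs.choose_spec)
          omega
        exact ih _ hKlt s a' rfl
      rw [Finset.sum_congr rfl hterm, ← Nat.cast_sum]
      congr 1
      exact mult_rec hs hpos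

theorem prod_X_pow_mon {ι : Type*} (S : Finset ι) (f : ι → Fin n) (g : ι → ℕ) :
    ∏ j ∈ S, (X (f j) : MvPolynomial (Fin n) ℝ) ^ g j
      = monomial (∑ j ∈ S, Finsupp.single (f j) (g j)) 1 := by
  classical
  induction S using Finset.induction_on with
  | empty => simp
  | insert _ _ hx ih =>
    rw [Finset.prod_insert hx, Finset.sum_insert hx, ih, X_pow_eq_monomial, monomial_mul,
      one_mul]

theorem coeff_neg_one_pow_mul (k : ℕ) (d : Fin n →₀ ℕ) (p : MvPolynomial (Fin n) ℝ) :
    coeff d ((-1 : MvPolynomial (Fin n) ℝ) ^ k * p) = (-1 : ℝ) ^ k * coeff d p := by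
  have h : ((-1 : MvPolynomial (Fin n) ℝ)) = C (-1 : ℝ) := by simp
  rw [h, ← map_pow, coeff_C_mul]

theorem pm_one (k : ℕ) : (-1 : ℝ) ^ k = 1 ∨ (-1 : ℝ) ^ k = -1 := by
  rcases Nat.even_or_odd k with h | h
  · exact Or.inl h.neg_one_pow
  · exact Or.inr h.neg_one_pow

theorem sign_cast_cases (g : Equiv.Perm (Fin n)) :
    ((Equiv.Perm.sign g : ℤ) : ℝ) = 1 ∨ ((Equiv.Perm.sign g : ℤ) : ℝ) = -1 := by
  rcases Int.units_eq_one_or (Equiv.Perm.sign g) with h | h <;> rw [h] <;> simp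

theorem rename_W (g : Equiv.Perm (Fin n)) :
    rename (⇑g) ((Matrix.vandermonde (fun i : Fin n => (X i : MvPolynomial (Fin n) ℝ))).det)
      = ((Equiv.Perm.sign g : ℤ) : MvPolynomial (Fin n) ℝ)
        * (Matrix.vandermonde (fun i : Fin n => X i)).det := by
  have h1 := RingHom.map_det (rename (⇑g) : MvPolynomial (Fin n) ℝ →ₐ[ℝ] _).toRingHom
    (Matrix.vandermonde (fun i : Fin n => (X i : MvPolynomial (Fin n) ℝ)))
  have h2 : (Matrix.vandermonde (fun i : Fin n => (X i : MvPolynomial (Fin n) ℝ))).map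
      ⇑(rename (⇑g) : MvPolynomial (Fin n) ℝ →ₐ[ℝ] _).toRingHom
      = (Matrix.vandermonde (fun i : Fin n => (X i : MvPolynomial (Fin n) ℝ))).submatrix
          (⇑g) id := by
    ext i j
    simp [Matrix.map_apply, Matrix.vandermonde_apply, map_pow]
  rw [RingHom.mapMatrix_apply, h2, Matrix.det_permute] at h1
  exact h1

theorem coeff_W5_perm (g : Equiv.Perm (Fin n)) (d : Fin n →₀ ℕ) :
    coeff (Finsupp.mapDomain (⇑g) d)
        ((Matrix.vandermonde (fun i : Fin n => (X i : MvPolynomial (Fin n) ℝ))).det ^ 5)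
      = ((Equiv.Perm.sign g : ℤ) : ℝ)
        * coeff d ((Matrix.vandermonde (fun i : Fin n => (X i : MvPolynomial (Fin n) ℝ))).det ^ 5)
    := by
  have h0 := coeff_rename_mapDomain (⇑g) g.injective
    ((Matrix.vandermonde (fun i : Fin n => (X i : MvPolynomial (Fin n) ℝ))).det ^ 5) d
  have hsgn : (((Equiv.Perm.sign g : ℤ) : MvPolynomial (Fin n) ℝ)) ^ 5
      = ((Equiv.Perm.sign g : ℤ) : MvPolynomial (Fin n) ℝ) := by
    rcases Int.units_eq_one_or (Equiv.Perm.sign g) with h | h <;> rw [h] <;> norm_num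
  have h1 : rename (⇑g)
      ((Matrix.vandermonde (fun i : Fin n => (X i : MvPolynomial (Fin n) ℝ))).det ^ 5)
      = ((Equiv.Perm.sign g : ℤ) : MvPolynomial (Fin n) ℝ)
        * (Matrix.vandermonde (fun i : Fin n => (X i : MvPolynomial (Fin n) ℝ))).det ^ 5 := by
    rw [map_pow, rename_W, mul_pow, hsgn]
  rw [h1] at h0
  have hC : ((Equiv.Perm.sign g : ℤ) : MvPolynomial (Fin n) ℝ)
      = C (((Equiv.Perm.sign g : ℤ) : ℝ)) := by
    rw [map_intCast]
  rw [hC, coeff_C_mul] at h0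
  have hsq : ((Equiv.Perm.sign g : ℤ) : ℝ) * ((Equiv.Perm.sign g : ℤ) : ℝ) = 1 := by
    rcases sign_cast_cases g with h | h <;> rw [h] <;> norm_num
  calc coeff (Finsupp.mapDomain (⇑g) d)
        ((Matrix.vandermonde (fun i : Fin n => (X i : MvPolynomial (Fin n) ℝ))).det ^ 5)
      = (((Equiv.Perm.sign g : ℤ) : ℝ) * ((Equiv.Perm.sign g : ℤ) : ℝ))
        * coeff (Finsupp.mapDomain (⇑g) d)
          ((Matrix.vandermonde (fun i : Fin n => (X i : MvPolynomial (Fin n) ℝ))).det ^ 5) := by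
        rw [hsq, one_mul]
    _ = ((Equiv.Perm.sign g : ℤ) : ℝ)
        * coeff d ((Matrix.vandermonde (fun i : Fin n => (X i : MvPolynomial (Fin n) ℝ))).det
          ^ 5) := by rw [mul_assoc, h0]

end S11


open S11

/-- For integers `N ≥ 1` and `t ≥ 0`, the coefficient of the monomial
`∏_{1 ≤ i ≤ N} x_i^{2(N-1)+i-1+t}` in `∏_{1 ≤ i < j ≤ N} (x_i - x_j)^5 · ∏_i x_i^t`
has absolute value `(3N)! / (N! · 6^N)`; in particular it is nonzero.
(Here the variable `i : Fin N` corresponds to the index `i + 1 ∈ {1, …, N}`.) -/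
theorem statement_11 (N t : ℕ) (hN : 1 ≤ N) :
    |MvPolynomial.coeff
        (Finsupp.equivFunOnFinite.symm fun i : Fin N => 2 * (N - 1) + i.1 + t)
        ((∏ i : Fin N, ∏ j ∈ Finset.Ioi i, (X i - X j) ^ 5) *
          ∏ i : Fin N, (X i) ^ t : MvPolynomial (Fin N) ℝ)| =
      ((3 * N).factorial : ℝ) / ((N.factorial : ℝ) * (6 : ℝ) ^ N) ∧
    MvPolynomial.coeff
        (Finsupp.equivFunOnFinite.symm fun i : Fin N => 2 * (N - 1) + i.1 + t)
        ((∏ i : Fin N, ∏ j ∈ Finset.Ioi i, (X i - X j) ^ 5) *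
          ∏ i : Fin N, (X i) ^ t : MvPolynomial (Fin N) ℝ) ≠ 0 := by
  classical
  have hN0 : 0 < N := hN
  set W : MvPolynomial (Fin N) ℝ := (Matrix.vandermonde fun i : Fin N => X i).det with hWdef
  have hWprod : W = ∏ i : Fin N, ∏ j ∈ Finset.Ioi i, (X j - X i) := Matrix.det_vandermonde _
  set Cn : ℕ := ∑ i : Fin N, (Finset.Ioi i).card with hCn
  set ν : Fin N →₀ ℕ := Finsupp.equivFunOnFinite.symm (fun i : Fin N => 2*(N-1)+i.1) with hν
  set c : ℝ := coeff ν (W^5) with hc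
  set mlt : ℕ := Nat.multinomial Finset.univ (fun _ : Fin N => 3) with hmlt
  set u : Fin N →₀ ℕ := Finsupp.equivFunOnFinite.symm (fun _ : Fin N => 3*(N-1)) with hu
  set srev : ℝ := ((Equiv.Perm.sign (Fin.revPerm : Equiv.Perm (Fin N)) : ℤ) : ℝ) with hsrev
  have hΔ : (∏ i : Fin N, ∏ j ∈ Finset.Ioi i, (X i - X j : MvPolynomial (Fin N) ℝ))
      = (-1 : MvPolynomial (Fin N) ℝ)^Cn * W := by
    rw [hWprod, hCn, ← Finset.prod_pow_eq_pow_sum, ← Finset.prod_mul_distrib]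
    refine Finset.prod_congr rfl fun i _ => ?_
    rw [← Finset.prod_const, ← Finset.prod_mul_distrib]
    exact Finset.prod_congr rfl fun j _ => by ring
  -- Step 1 : strip the sign and the t-shift
  have hstep1 : MvPolynomial.coeff
      (Finsupp.equivFunOnFinite.symm fun i : Fin N => 2 * (N - 1) + i.1 + t)
      ((∏ i : Fin N, ∏ j ∈ Finset.Ioi i, (X i - X j) ^ 5) *
        ∏ i : Fin N, (X i) ^ t : MvPolynomial (Fin N) ℝ) = (-1:ℝ)^(Cn*5) * c := by
    have h5 : (∏ i : Fin N, ∏ j ∈ Finset.Ioi i, (X i - X j : MvPolynomial (Fin N) ℝ)^5)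
        = (∏ i : Fin N, ∏ j ∈ Finset.Ioi i, (X i - X j))^5 := by
      rw [← Finset.prod_pow]
      exact Finset.prod_congr rfl fun i _ => Finset.prod_pow _ _ _
    have hP5 : (∏ i : Fin N, ∏ j ∈ Finset.Ioi i, (X i - X j : MvPolynomial (Fin N) ℝ)^5)
        = (-1 : MvPolynomial (Fin N) ℝ)^(Cn*5) * W^5 := by
      rw [h5, hΔ, mul_pow, ← pow_mul]
    have hXt : (∏ i : Fin N, (X i : MvPolynomial (Fin N) ℝ)^t)
        = monomial (∑ i : Fin N, Finsupp.single i t) 1 := by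
      have h := prod_X_pow_mon (n := N) Finset.univ (fun j => j) (fun _ => t)
      simpa using h
    have hle : (∑ i : Fin N, Finsupp.single i t) ≤ Finsupp.equivFunOnFinite.symm
        (fun i : Fin N => 2*(N-1)+i.1+t) := by
      rw [Finsupp.le_def]
      intro k
      rw [single_sum_apply Finset.univ (fun _ => t) k, if_pos (Finset.mem_univ k)]
      simp only [Finsupp.coe_equivFunOnFinite_symm]
      omega
    have hidx : (Finsupp.equivFunOnFinite.symm fun i : Fin N => 2 * (N - 1) + i.1 + t)
        - (∑ i : Fin N, Finsupp.single i t) = ν := by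
      ext k
      rw [Finsupp.tsub_apply, single_sum_apply Finset.univ (fun _ => t) k,
        if_pos (Finset.mem_univ k), hν]
      simp only [Finsupp.coe_equivFunOnFinite_symm]
      omega
    rw [hP5, hXt, mul_assoc, coeff_neg_one_pow_mul, MvPolynomial.coeff_mul_monomial',
      if_pos hle, mul_one, hidx, hc]
  -- Step 2 : determinant expansion and antisymmetry
  have hstep2 : coeff u (W^6) = (N.factorial : ℝ) * (srev * c) := by
    have hdet : W = ∑ σ : Equiv.Perm (Fin N), Equiv.Perm.sign σ •
        ∏ i : Fin N, (X (σ i) : MvPolynomial (Fin N) ℝ) ^ (i:ℕ) := by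
      rw [hWdef, Matrix.det_apply]
      exact Finset.sum_congr rfl fun σ _ => by simp [Matrix.vandermonde_apply]
    have h6 : W^6 = W^5 * W := by ring
    rw [h6]
    nth_rewrite 2 [hdet]
    rw [Finset.mul_sum, MvPolynomial.coeff_sum]
    have hterm : ∀ σ : Equiv.Perm (Fin N), coeff u (W^5 * (Equiv.Perm.sign σ •
        ∏ i : Fin N, (X (σ i) : MvPolynomial (Fin N) ℝ) ^ (i:ℕ))) = srev * c := by
      intro σ
      rw [mul_smul_comm, Units.smul_def, MvPolynomial.coeff_smul,
        prod_X_pow_mon Finset.univ (⇑σ) (fun i : Fin N => (i:ℕ))]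
      set mσ : Fin N →₀ ℕ := ∑ i : Fin N, Finsupp.single (σ i) ((i : Fin N):ℕ) with hmσ
      have hmσ_apply : ∀ k, mσ k = ((σ⁻¹ k : Fin N) : ℕ) := by
        intro k
        rw [hmσ]
        have hre : (∑ i : Fin N, Finsupp.single (σ i) ((i : Fin N):ℕ))
            = ∑ i : Fin N, Finsupp.single i ((σ⁻¹ i : Fin N) : ℕ) := by
          rw [← Equiv.sum_comp σ (fun i => Finsupp.single i ((σ⁻¹ i : Fin N):ℕ))]
          exact Finset.sum_congr rfl fun i _ => by simp
        rw [hre, single_sum_apply Finset.univ (fun i => ((σ⁻¹ i : Fin N):ℕ)) k,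
          if_pos (Finset.mem_univ k)]
      have hle : mσ ≤ u := by
        rw [Finsupp.le_def]
        intro k
        rw [hmσ_apply, hu]
        simp only [Finsupp.coe_equivFunOnFinite_symm]
        have := (σ⁻¹ k).isLt
        omega
      rw [coeff_mul_monomial', if_pos hle, mul_one]
      set g : Equiv.Perm (Fin N) := σ * Fin.revPerm with hg
      have hmap : u - mσ = Finsupp.mapDomain (⇑g) ν := by
        ext k
        rw [Finsupp.tsub_apply, Finsupp.mapDomain_equiv_apply]
        have hsymm : g.symm k = Fin.rev (σ⁻¹ k) := by
          rw [Equiv.symm_apply_eq, hg]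
          simp [Equiv.Perm.mul_apply, Fin.rev_rev]
        rw [hsymm, hν]
        simp only [Finsupp.coe_equivFunOnFinite_symm, hmσ_apply, hu, Fin.val_rev]
        have h1 := (σ⁻¹ k).isLt
        omega
      rw [hmap, hWdef, coeff_W5_perm, ← hWdef, ← hc]
      have hsgnmul : ((Equiv.Perm.sign g : ℤ) : ℝ)
          = ((Equiv.Perm.sign σ : ℤ) : ℝ) * srev := by
        rw [hsrev, hg, map_mul]
        push_cast [Units.val_mul]
        ring
      rw [hsgnmul, zsmul_eq_mul]
      push_cast
      rcases sign_cast_cases σ with h | h <;> rw [h] <;> ring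
    rw [Finset.sum_congr rfl (fun σ _ => hterm σ), Finset.sum_const, Finset.card_univ,
      Fintype.card_perm, Fintype.card_fin, nsmul_eq_mul]
  -- Step 3 : Dyson's identity
  have hstep3 : (mlt : ℝ) = (-1:ℝ)^(Cn*3) * coeff u (W^6) := by
    have hdy := dyson ((∑ _i ∈ (univ : Finset (Fin N)), 3) + (univ : Finset (Fin N)).card)
      univ (fun _ : Fin N => 3) rfl
    have hvvu : vv univ (fun _ : Fin N => 3) = u := by
      ext k
      rw [vv_apply, if_pos (Finset.mem_univ k), hu]
      simp only [Finsupp.coe_equivFunOnFinite_symm, Finset.sum_const, Finset.card_univ,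
        Fintype.card_fin, smul_eq_mul]
      omega
    have hH : (∏ i : Fin N, Hh univ i) = ((-1 : MvPolynomial (Fin N) ℝ)^Cn) * (W * W) := by
      have herase : ∀ i : Fin N, (univ : Finset (Fin N)).erase i
          = Finset.Ioi i ∪ Finset.Iio i := by
        intro i
        ext j
        simp only [Finset.mem_erase, Finset.mem_univ, and_true, Finset.mem_union,
          Finset.mem_Ioi, Finset.mem_Iio]
        constructor
        · intro h
          exact h.lt_or_gt.symm
        · rintro (h | h)
          · exact ne_of_gt h
          · exact ne_of_lt h
      have hdisj : ∀ i : Fin N, Disjoint (Finset.Ioi i) (Finset.Iio i) := by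
        intro i
        rw [Finset.disjoint_left]
        intro j hj hj'
        rw [Finset.mem_Ioi] at hj
        rw [Finset.mem_Iio] at hj'
        exact absurd hj (not_lt.mpr hj'.le)
      have h1 : (∏ i : Fin N, Hh univ i)
          = (∏ i : Fin N, ∏ j ∈ Finset.Ioi i, (X j - X i : MvPolynomial (Fin N) ℝ))
            * ∏ i : Fin N, ∏ j ∈ Finset.Iio i, (X j - X i) := by
        rw [← Finset.prod_mul_distrib]
        exact Finset.prod_congr rfl fun i _ => by rw [Hh, herase i, Finset.prod_union (hdisj i)]
      have h2 : (∏ i : Fin N, ∏ j ∈ Finset.Iio i, (X j - X i : MvPolynomial (Fin N) ℝ))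
          = ∏ j : Fin N, ∏ i ∈ Finset.Ioi j, (X j - X i) := by
        exact Finset.prod_comm' (fun x y => by
          simp only [Finset.mem_univ, true_and, and_true, Finset.mem_Iio, Finset.mem_Ioi])
      rw [h1, h2, ← hWprod, hΔ]
      ring
    have hGgW : Gg univ (fun _ : Fin N => 3)
        = (-1 : MvPolynomial (Fin N) ℝ)^(Cn*3) * W^6 := by
      rw [Gg, Finset.prod_pow, hH, mul_pow, ← pow_mul]
      ring
    rw [hvvu, hGgW, coeff_neg_one_pow_mul] at hdy
    rw [← hmlt] at hdy
    exact hdy.symm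
  -- multinomial value
  have hmval : (6:ℕ)^N * mlt = (3*N).factorial := by
    have hspec := Nat.multinomial_spec (univ : Finset (Fin N)) (fun _ : Fin N => 3)
    rw [Finset.prod_const, Finset.sum_const, Finset.card_univ, Fintype.card_fin] at hspec
    rw [← hmlt] at hspec
    have h36 : Nat.factorial 3 = 6 := rfl
    rw [h36] at hspec
    rw [hspec]
    congr 1
    rw [smul_eq_mul]
    ring
  -- assembly
  have hmpos : 0 < mlt := by
    rcases Nat.eq_zero_or_pos mlt with h | h
    · rw [h, mul_zero] at hmval
      exact absurd hmval.symm (Nat.factorial_pos _).ne'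
    · exact h
  have hfacpos : (0:ℝ) < (N.factorial : ℝ) := by positivity
  have hsrev_abs : |srev| = 1 := by
    rcases sign_cast_cases (Fin.revPerm : Equiv.Perm (Fin N)) with h | h <;>
      rw [hsrev, h] <;> norm_num
  have he3_abs : |(-1:ℝ)^(Cn*3)| = 1 := by
    rcases pm_one (Cn*3) with h | h <;> rw [h] <;> norm_num
  have he1_abs : |(-1:ℝ)^(Cn*5)| = 1 := by
    rcases pm_one (Cn*5) with h | h <;> rw [h] <;> norm_num
  have e3sq : (-1:ℝ)^(Cn*3) * (-1:ℝ)^(Cn*3) = 1 := by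
    rcases pm_one (Cn*3) with h | h <;> rw [h] <;> norm_num
  have hW6 : coeff u (W^6) = (-1:ℝ)^(Cn*3) * mlt := by
    rw [hstep3, ← mul_assoc, e3sq, one_mul]
  have habs_c : (N.factorial : ℝ) * |c| = (mlt:ℝ) := by
    have heq : (N.factorial:ℝ) * (srev * c) = (-1:ℝ)^(Cn*3) * mlt := by
      rw [← hstep2, hW6]
    have h := congrArg abs heq
    rw [abs_mul, abs_mul, abs_mul, hsrev_abs, he3_abs, one_mul, one_mul,
      Nat.abs_cast, Nat.abs_cast] at h
    exact h
  have hcabs : |c| = (mlt:ℝ) / (N.factorial:ℝ) := by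
    rw [eq_div_iff hfacpos.ne']
    linarith [habs_c]
  have hmcast : (6:ℝ)^N * (mlt:ℝ) = ((3*N).factorial : ℝ) := by
    exact_mod_cast congrArg (Nat.cast : ℕ → ℝ) hmval
  constructor
  · rw [hstep1, abs_mul, he1_abs, one_mul, hcabs,
      div_eq_div_iff hfacpos.ne' (by positivity : ((N.factorial:ℝ) * (6:ℝ)^N) ≠ 0)]
    push_cast
    nlinarith [hmcast]
  · rw [hstep1]
    have habspos : 0 < |(-1:ℝ)^(Cn*5) * c| := by
      rw [abs_mul, he1_abs, one_mul, hcabs]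
      positivity
    exact fun h => by rw [h] at habspos; simp at habspos
end

section
/- For all integers N ≥ 1 and t ≥ 0, the coefficient of the monomial ∏_{1 ≤ i ≤ N} x_i^{2((N−1)+i−1)+t} in the polynomial ∏_{1 ≤ i < j ≤ N} (x_i^2 − x_j^2)^3 · ∏_{1 ≤ i ≤ N} x_i^t is nonzero. -/
open MvPolynomial

namespace Stmt12

open Finset

abbrev K := ZMod 2

noncomputable def vec {N : ℕ} (σ : Equiv.Perm (Fin N)) : Fin N →₀ ℕ :=
  Finsupp.equivFunOnFinite.symm fun i => (σ i : ℕ)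

lemma vec_apply {N : ℕ} (σ : Equiv.Perm (Fin N)) (i : Fin N) : vec σ i = σ i := rfl

noncomputable def ee (N : ℕ) : Fin N →₀ ℕ :=
  Finsupp.equivFunOnFinite.symm fun i => (N - 1) + (i : ℕ)

lemma ee_apply (N : ℕ) (i : Fin N) : ee N i = (N - 1) + (i : ℕ) := rfl

lemma prod_X_pow {N : ℕ} (R : Type*) [CommSemiring R] (c : Fin N → ℕ) :
    (∏ i, (X i : MvPolynomial (Fin N) R) ^ c i)
      = monomial (Finsupp.equivFunOnFinite.symm c) 1 := by
  rw [← prod_X_pow_eq_monomial]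
  refine (Finset.prod_subset (Finset.subset_univ _) ?_).symm
  intro i _ hi
  have : (Finsupp.equivFunOnFinite.symm c) i = 0 := by
    simpa using (Finsupp.notMem_support_iff.mp hi)
  have hc : c i = 0 := this
  simp [hc]

lemma vandermonde_sum (N : ℕ) :
    (∏ i : Fin N, ∏ j ∈ Finset.Ioi i, (X i + X j : MvPolynomial (Fin N) K))
      = ∑ σ : Equiv.Perm (Fin N), monomial (vec σ) 1 := by
  have h := Matrix.det_vandermonde (fun i : Fin N => (X i : MvPolynomial (Fin N) K))
  have hprod : (∏ i : Fin N, ∏ j ∈ Finset.Ioi i, (X i + X j : MvPolynomial (Fin N) K))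
      = (Matrix.vandermonde (fun i : Fin N => (X i : MvPolynomial (Fin N) K))).det := by
    rw [h]
    refine Finset.prod_congr rfl fun i _ => Finset.prod_congr rfl fun j _ => ?_
    rw [CharTwo.sub_eq_add, add_comm]
  rw [hprod, Matrix.det_apply]
  have hterm : ∀ σ : Equiv.Perm (Fin N),
      (Equiv.Perm.sign σ) •
          (∏ i : Fin N, Matrix.vandermonde (fun i : Fin N => (X i : MvPolynomial (Fin N) K)) (σ i) i)
        = monomial (vec σ⁻¹) 1 := by
    intro σ
    have h1 : (∏ i : Fin N, Matrix.vandermonde (fun i : Fin N => (X i : MvPolynomial (Fin N) K)) (σ i) i)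
        = monomial (vec σ⁻¹) 1 := by
      have h2 : (∏ i : Fin N, (X (σ i) : MvPolynomial (Fin N) K) ^ (i : ℕ))
          = ∏ i : Fin N, (X i : MvPolynomial (Fin N) K) ^ ((σ⁻¹ i : Fin N) : ℕ) := by
        rw [← Equiv.prod_comp σ (fun j => (X j : MvPolynomial (Fin N) K) ^ ((σ⁻¹ j : Fin N) : ℕ))]
        refine Finset.prod_congr rfl fun i _ => ?_
        simp
      simp only [Matrix.vandermonde_apply]
      rw [h2, prod_X_pow]
      rfl
    rcases Int.units_eq_one_or (Equiv.Perm.sign σ) with hs | hs <;> rw [hs] <;>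
      simpa [Units.smul_def, CharTwo.neg_eq, Matrix.vandermonde_apply] using h1
  rw [Finset.sum_congr rfl fun σ _ => hterm σ]
  exact Equiv.sum_comp (Equiv.inv (Equiv.Perm (Fin N))) (fun σ => monomial (vec σ) 1)

lemma unique_pair {N : ℕ} (hN : 1 ≤ N) (σ τ : Equiv.Perm (Fin N))
    (h : ∀ i : Fin N, (σ i : ℕ) + (σ i : ℕ) + (τ i : ℕ) = (N - 1) + (i : ℕ)) :
    σ = 1 ∧ τ = Fin.revPerm := by
  set a : Fin N → ℤ := fun i => ((σ i : ℕ) : ℤ) with ha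
  set b : Fin N → ℤ := fun i => ((i : ℕ) : ℤ) with hb
  have h1 : ∀ i, 2 * a i + ((τ i : ℕ) : ℤ) = ((N : ℤ) - 1) + b i := by
    intro i
    have hi := h i
    have : ((N - 1 : ℕ) : ℤ) = (N : ℤ) - 1 := by push_cast [Nat.cast_sub hN]; ring
    simp only [ha, hb]
    push_cast [← this]
    omega
  have hA : ∑ i, a i ^ 2 = ∑ i, b i ^ 2 :=
    Equiv.sum_comp σ (fun j => ((j : ℕ) : ℤ) ^ 2)
  have hB : ∑ i, a i = ∑ i, b i :=
    Equiv.sum_comp σ (fun j => ((j : ℕ) : ℤ))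
  have hC2 : ∑ i, ((τ i : ℕ) : ℤ) ^ 2 = ∑ i, b i ^ 2 :=
    Equiv.sum_comp τ (fun j => ((j : ℕ) : ℤ) ^ 2)
  have hsum : 2 * ∑ i, b i = (N : ℤ) * ((N : ℤ) - 1) := by
    have h2 : (∑ i ∈ range N, i) * 2 = N * (N - 1) := Finset.sum_range_id_mul_two N
    have h3 : (∑ i : Fin N, b i) = ((∑ i ∈ range N, i : ℕ) : ℤ) := by
      simp only [hb]
      rw [Fin.sum_univ_eq_sum_range]
      push_cast
      rfl
    have h4 : ((N * (N - 1) : ℕ) : ℤ) = (N : ℤ) * ((N : ℤ) - 1) := by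
      push_cast [Nat.cast_sub hN]; ring
    rw [h3]
    omega
  have hexp : ∑ i, (((N : ℤ) - 1) + b i - 2 * a i) ^ 2 = ∑ i, b i ^ 2 := by
    rw [← hC2]
    refine Finset.sum_congr rfl fun i _ => ?_
    have h5 := h1 i
    have : ((N : ℤ) - 1) + b i - 2 * a i = ((τ i : ℕ) : ℤ) := by linarith
    rw [this]
  have expand1 : ∑ i, (((N : ℤ) - 1) + b i - 2 * a i) ^ 2
      = (N : ℤ) * ((N : ℤ) - 1) ^ 2 + ∑ i, b i ^ 2 + 4 * ∑ i, a i ^ 2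
        + 2 * ((N : ℤ) - 1) * ∑ i, b i - 4 * ((N : ℤ) - 1) * ∑ i, a i
        - 4 * ∑ i, a i * b i := by
    have step : ∀ i ∈ (univ : Finset (Fin N)), (((N : ℤ) - 1) + b i - 2 * a i) ^ 2
        = (((N : ℤ) - 1) ^ 2 + b i ^ 2 + 4 * a i ^ 2 + 2 * ((N : ℤ) - 1) * b i)
          - (4 * ((N : ℤ) - 1) * a i + 4 * (a i * b i)) := fun i _ => by ring
    rw [Finset.sum_congr rfl step]
    rw [Finset.sum_sub_distrib]
    simp only [Finset.sum_add_distrib, ← Finset.mul_sum, Finset.sum_const,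
      Finset.card_univ, Fintype.card_fin, nsmul_eq_mul]
    ring
  have expand2 : ∑ i, (a i - b i) ^ 2
      = (∑ i, a i ^ 2 + ∑ i, b i ^ 2) - 2 * ∑ i, a i * b i := by
    have step : ∀ i ∈ (univ : Finset (Fin N)), (a i - b i) ^ 2
        = (a i ^ 2 + b i ^ 2) - 2 * (a i * b i) := fun i _ => by ring
    rw [Finset.sum_congr rfl step]
    rw [Finset.sum_sub_distrib]
    simp only [Finset.sum_add_distrib, ← Finset.mul_sum]
  have h2key : 2 * ∑ i, (a i - b i) ^ 2 = 0 := by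
    linear_combination 2 * expand2 + hexp - expand1 - 2 * hA + 4 * ((N : ℤ) - 1) * hB
      + ((N : ℤ) - 1) * hsum
  have hkey : ∑ i, (a i - b i) ^ 2 = 0 := by omega
  have hzero : ∀ i ∈ (univ : Finset (Fin N)), (a i - b i) ^ 2 = 0 :=
    (Finset.sum_eq_zero_iff_of_nonneg fun i _ => sq_nonneg _).mp hkey
  have hai : ∀ i : Fin N, σ i = i := by
    intro i
    have := hzero i (Finset.mem_univ i)
    have h6 : a i = b i := by nlinarith [this]
    simp only [ha, hb] at h6
    have : (σ i : ℕ) = (i : ℕ) := by exact_mod_cast h6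
    exact Fin.ext this
  constructor
  · exact Equiv.ext fun i => hai i
  · refine Equiv.ext fun i => ?_
    have h7 := h i
    rw [hai i] at h7
    have h8 : (τ i : ℕ) = N - 1 - (i : ℕ) := by omega
    have h9 : ((Fin.revPerm i : Fin N) : ℕ) = N - ((i : ℕ) + 1) := rfl
    have hlt := i.isLt
    have : (τ i : ℕ) = ((Fin.revPerm i : Fin N) : ℕ) := by omega
    exact Fin.ext this

lemma half_eq {N : ℕ} (u m : Fin N →₀ ℕ) (h : u + u = m + m) : u = m := by
  ext i
  have := DFunLike.congr_fun h i
  simp only [Finsupp.add_apply] at this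
  omega

lemma coeff_sq {N : ℕ} (f : MvPolynomial (Fin N) K) (m : Fin N →₀ ℕ) :
    coeff (m + m) (f * f) = coeff m f * coeff m f := by
  classical
  rw [coeff_mul]
  have hmem : ((m, m) : (Fin N →₀ ℕ) × (Fin N →₀ ℕ)) ∈ Finset.HasAntidiagonal.antidiagonal (m + m) := by
    rw [Finset.HasAntidiagonal.mem_antidiagonal]
  rw [← Finset.add_sum_erase _ _ hmem]
  have hzero : ∑ p ∈ (Finset.HasAntidiagonal.antidiagonal (m + m)).erase (m, m),
      coeff p.1 f * coeff p.2 f = 0 := by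
    apply Finset.sum_involution (g := fun p _ => Prod.swap p)
    · intro p _
      rw [Prod.fst_swap, Prod.snd_swap, mul_comm]
      exact CharTwo.add_self_eq_zero _
    · intro p hp _
      intro hswap
      have h1 : p.2 = p.1 := by
        have := congrArg Prod.fst hswap
        simpa using this
      have h2 : p.1 + p.2 = m + m := by
        have := (Finset.mem_erase.mp hp).2
        rwa [Finset.HasAntidiagonal.mem_antidiagonal] at this
      rw [h1] at h2
      have h3 : p.1 = m := half_eq _ _ h2
      exact (Finset.mem_erase.mp hp).1 (Prod.ext h3 (h1.trans h3))
    · intro p hp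
      rw [Finset.mem_erase] at hp ⊢
      rw [Finset.HasAntidiagonal.mem_antidiagonal] at hp ⊢
      refine ⟨?_, by rw [Prod.fst_swap, Prod.snd_swap, add_comm]; exact hp.2⟩
      intro hswap
      apply hp.1
      have := congrArg Prod.swap hswap
      simpa using this
    · intro p _
      exact Prod.swap_swap p
  rw [hzero, add_zero]

lemma pair_iff {N : ℕ} (hN : 1 ≤ N) (σ ρ : Equiv.Perm (Fin N)) :
    vec σ + vec σ + vec ρ = ee N ↔ σ = 1 ∧ ρ = Fin.revPerm := by
  constructor
  · intro hs
    refine unique_pair hN σ ρ fun i => ?_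
    have := DFunLike.congr_fun hs i
    simpa [Finsupp.add_apply, vec_apply, ee_apply] using this
  · rintro ⟨rfl, rfl⟩
    ext i
    simp only [Finsupp.add_apply, vec_apply, ee_apply, Equiv.Perm.one_apply]
    have h9 : ((Fin.revPerm i : Fin N) : ℕ) = N - ((i : ℕ) + 1) := rfl
    have := i.isLt
    omega

lemma triple_sum {N : ℕ} (hN : 1 ≤ N) :
    (∑ σ : Equiv.Perm (Fin N), ∑ τ : Equiv.Perm (Fin N), ∑ ρ : Equiv.Perm (Fin N),
      if vec σ + vec τ + vec ρ = ee N then (1 : K) else 0) = 1 := by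
  classical
  set G : Equiv.Perm (Fin N) × Equiv.Perm (Fin N) → K := fun p =>
    ∑ ρ : Equiv.Perm (Fin N), if vec p.1 + vec p.2 + vec ρ = ee N then (1 : K) else 0 with hG
  have hLHS : (∑ σ : Equiv.Perm (Fin N), ∑ τ : Equiv.Perm (Fin N), ∑ ρ : Equiv.Perm (Fin N),
      if vec σ + vec τ + vec ρ = ee N then (1 : K) else 0)
      = ∑ p : Equiv.Perm (Fin N) × Equiv.Perm (Fin N), G p := by
    rw [Fintype.sum_prod_type]
  rw [hLHS, ← Finset.sum_filter_add_sum_filter_not univ (fun p => p.1 = p.2)]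
  have hoff : ∑ p ∈ univ.filter (fun p : Equiv.Perm (Fin N) × Equiv.Perm (Fin N) => ¬p.1 = p.2), G p = 0 := by
    apply Finset.sum_involution (g := fun p _ => Prod.swap p)
    · intro p _
      have hGs : G (Prod.swap p) = G p := by
        refine Finset.sum_congr rfl fun ρ _ => ?_
        rw [Prod.fst_swap, Prod.snd_swap, add_comm (vec p.2) (vec p.1)]
      rw [hGs]
      exact CharTwo.add_self_eq_zero _
    · intro p hp _
      intro hswap
      have h1 : p.2 = p.1 := by
        have := congrArg Prod.fst hswap
        simpa using this
      exact (Finset.mem_filter.mp hp).2 h1.symm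
    · intro p hp
      rw [Finset.mem_filter] at hp ⊢
      exact ⟨Finset.mem_univ _, fun h => hp.2 (by simpa using h.symm)⟩
    · intro p _
      exact Prod.swap_swap p
  rw [hoff, add_zero]
  have hdiag : ∑ p ∈ univ.filter (fun p : Equiv.Perm (Fin N) × Equiv.Perm (Fin N) => p.1 = p.2), G p = 1 := by
    have hmem : ((1 : Equiv.Perm (Fin N)), (1 : Equiv.Perm (Fin N))) ∈
        univ.filter (fun p : Equiv.Perm (Fin N) × Equiv.Perm (Fin N) => p.1 = p.2) := by
      simp
    rw [Finset.sum_eq_single_of_mem _ hmem]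
    · simp only [hG]
      have hiff : ∀ ρ : Equiv.Perm (Fin N),
          (vec 1 + vec 1 + vec ρ = ee N) ↔ ρ = Fin.revPerm := by
        intro ρ
        rw [pair_iff hN]
        simp
      simp only [hiff]
      simp
    · intro p hp hne
      obtain ⟨-, hdg⟩ := Finset.mem_filter.mp hp
      apply Finset.sum_eq_zero
      intro ρ _
      rw [if_neg]
      intro hcond
      rw [← hdg] at hcond
      obtain ⟨h1, -⟩ := (pair_iff hN p.1 ρ).mp hcond
      apply hne
      have : p.2 = 1 := by rw [← hdg, h1]
      exact Prod.ext h1 this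
  rw [hdiag]

lemma coeff_cube {N : ℕ} (hN : 1 ≤ N) :
    coeff (ee N)
        ((∏ i : Fin N, ∏ j ∈ Finset.Ioi i, (X i + X j : MvPolynomial (Fin N) K)) ^ 3) = 1 := by
  classical
  rw [vandermonde_sum]
  have hexp : (∑ σ : Equiv.Perm (Fin N), (monomial (vec σ) (1 : K))) ^ 3
      = ∑ σ : Equiv.Perm (Fin N), ∑ τ : Equiv.Perm (Fin N), ∑ ρ : Equiv.Perm (Fin N),
          monomial (vec σ + vec τ + vec ρ) (1 : K) := by
    rw [pow_succ, pow_two]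
    rw [Finset.sum_mul_sum]
    rw [Finset.sum_mul_sum]
    refine Finset.sum_congr rfl fun σ _ => ?_
    rw [Finset.sum_comm]
    refine Finset.sum_congr rfl fun τ _ => ?_
    rw [Finset.sum_mul]
    refine Finset.sum_congr rfl fun ρ _ => ?_
    rw [monomial_mul, monomial_mul, one_mul, one_mul]
  rw [hexp]
  simp only [coeff_sum, coeff_monomial]
  exact triple_sum hN



noncomputable def exprP (R : Type*) [CommRing R] (N t : ℕ) : MvPolynomial (Fin N) R :=
  (∏ i : Fin N, ∏ j ∈ Finset.Ioi i, ((X i) ^ 2 - (X j) ^ 2) ^ 3) * ∏ i : Fin N, (X i) ^ t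

lemma map_exprP {R S : Type*} [CommRing R] [CommRing S] (f : R →+* S) (N t : ℕ) :
    MvPolynomial.map f (exprP R N t) = exprP S N t := by
  simp only [exprP, map_mul, map_prod, map_sub, map_pow, MvPolynomial.map_X]

lemma coeff_K (N t : ℕ) (hN : 1 ≤ N) :
    coeff (Finsupp.equivFunOnFinite.symm fun i : Fin N => 2 * ((N - 1) + i.1) + t)
      (exprP K N t) = 1 := by
  classical
  set V : MvPolynomial (Fin N) K := ∏ i : Fin N, ∏ j ∈ Finset.Ioi i, (X i + X j) with hV
  have hstep : (∏ i : Fin N, ∏ j ∈ Finset.Ioi i,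
      (((X i : MvPolynomial (Fin N) K)) ^ 2 - (X j) ^ 2) ^ 3) = V ^ 6 := by
    have h1 : ∀ i j : Fin N, (((X i : MvPolynomial (Fin N) K)) ^ 2 - (X j) ^ 2) ^ 3
        = (X i + X j) ^ 6 := by
      intro i j
      have h2 : ((X i : MvPolynomial (Fin N) K)) ^ 2 - (X j) ^ 2 = (X i + X j) ^ 2 := by
        rw [CharTwo.sub_eq_add, CharTwo.add_sq]
      rw [h2, ← pow_mul]
    calc (∏ i : Fin N, ∏ j ∈ Finset.Ioi i,
        (((X i : MvPolynomial (Fin N) K)) ^ 2 - (X j) ^ 2) ^ 3)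
        = ∏ i : Fin N, ∏ j ∈ Finset.Ioi i, ((X i : MvPolynomial (Fin N) K) + X j) ^ 6 :=
          Finset.prod_congr rfl fun i _ => Finset.prod_congr rfl fun j _ => h1 i j
      _ = ∏ i : Fin N, (∏ j ∈ Finset.Ioi i, ((X i : MvPolynomial (Fin N) K) + X j)) ^ 6 :=
          Finset.prod_congr rfl fun i _ => Finset.prod_pow _ _ _
      _ = V ^ 6 := Finset.prod_pow _ _ _
  have hmono : (∏ i : Fin N, (X i : MvPolynomial (Fin N) K) ^ t)
      = monomial (Finsupp.equivFunOnFinite.symm fun _ : Fin N => t) 1 := prod_X_pow K _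
  have hd : (Finsupp.equivFunOnFinite.symm fun i : Fin N => 2 * ((N - 1) + i.1) + t)
      = (ee N + ee N) + (Finsupp.equivFunOnFinite.symm fun _ : Fin N => t) := by
    ext i
    simp only [Finsupp.add_apply, ee_apply]
    have : (Finsupp.equivFunOnFinite.symm fun i : Fin N => 2 * ((N - 1) + i.1) + t) i
        = 2 * ((N - 1) + i.1) + t := rfl
    have ht : (Finsupp.equivFunOnFinite.symm fun _ : Fin N => t) i = t := rfl
    rw [this, ht]
    omega
  rw [exprP, hstep, hmono, hd, coeff_mul_monomial]
  have h6 : V ^ 6 = (V ^ 3) * (V ^ 3) := by ring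
  rw [h6, coeff_sq, hV, coeff_cube hN, mul_one, mul_one]

end Stmt12

open Stmt12 in
/-- For integers `N ≥ 1` and `t ≥ 0`, the coefficient of the monomial
`∏_{1 ≤ i ≤ N} x_i^{2((N-1)+i-1)+t}` in
`∏_{1 ≤ i < j ≤ N} (x_i² - x_j²)^3 · ∏_i x_i^t` is nonzero.
(Here the variable `i : Fin N` corresponds to the index `i + 1 ∈ {1, …, N}`.) -/
theorem statement_12 (N t : ℕ) (hN : 1 ≤ N) :
    MvPolynomial.coeff
        (Finsupp.equivFunOnFinite.symm fun i : Fin N => 2 * ((N - 1) + i.1) + t)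
        ((∏ i : Fin N, ∏ j ∈ Finset.Ioi i, ((X i) ^ 2 - (X j) ^ 2) ^ 3) *
          ∏ i : Fin N, (X i) ^ t : MvPolynomial (Fin N) ℝ) ≠ 0 := by
  set d := (Finsupp.equivFunOnFinite.symm fun i : Fin N => 2 * ((N - 1) + i.1) + t) with hdd
  show coeff d (exprP ℝ N t) ≠ 0
  have h1 : coeff d (exprP ℝ N t) = ((coeff d (exprP ℤ N t) : ℤ) : ℝ) := by
    rw [← map_exprP (Int.castRingHom ℝ) N t, coeff_map]
    rfl
  have h2 : ((coeff d (exprP ℤ N t) : ℤ) : K) = 1 := by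
    have h3 : ((coeff d (exprP ℤ N t) : ℤ) : K) = coeff d (exprP K N t) := by
      rw [← map_exprP (Int.castRingHom K) N t, coeff_map]
      rfl
    rw [h3, hdd]
    exact coeff_K N t hN
  rw [h1]
  rw [Int.cast_ne_zero]
  intro h0
  rw [h0] at h2
  simp at h2
end
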